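/- arXiv:1909.13864 — 10 statements merged into one kernel-verified Lean document; each statement's English description precedes it below -/
import Mathlib

section
/- Let n > 1 be an integer, F a division ring, G a division subring of F, and f_0 = 1, f_1, …, f_{n−1} a left G-basis of F. Suppose that for each 0 ≤ k < n−1 there exists e ∈ D_k with e ∉ S_k such that every x ∈ D_k can be written x = s + e·t with s, t ∈ S_k (i.e., D_k has right dimension 2 over S_k). Let φ : F → Mₙ(G) be the left regular representation with respect to this basis. Then φ is an injective ring homomorphism and φ is tight. -/
/-- `φ : F → Mₙ(α)` is `a`-tight: every possible upper-right `a × (n+1-a)` block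
(rows `1,…,a`, columns `a,…,n`, one-indexed) is realized by some element of `F`. -/
def ATight {n : ℕ} {F α : Type*} (φ : F → Matrix (Fin n) (Fin n) α) (a : ℕ) : Prop :=
  ∀ g : Matrix (Fin n) (Fin n) α, ∃ x : F, ∀ i j : Fin n,
    (i : ℕ) < a → a ≤ (j : ℕ) + 1 → φ x i j = g i j

/-- `L_k`: the left `G`-subspace of `F` spanned by `f_0, …, f_k`. -/
def Lset {F : Type*} [DivisionRing F] (G : Subring F) (f : ℕ → F) (k : ℕ) : Set F :=
  {x | ∃ c : ℕ → F, (∀ i, c i ∈ G) ∧ x = ∑ i ∈ Finset.range (k + 1), c i * f i}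

/-- `S_k = {a ∈ F : L_k · a ⊆ L_k}`. -/
def Sset {F : Type*} [DivisionRing F] (G : Subring F) (f : ℕ → F) (k : ℕ) : Set F :=
  {a | ∀ x ∈ Lset G f k, x * a ∈ Lset G f k}

/-- `D_0 = F`, and `D_k = {a ∈ F : L_{k-1} · a ⊆ L_k}` for `k ≥ 1`. -/
def Dset {F : Type*} [DivisionRing F] (G : Subring F) (f : ℕ → F) : ℕ → Set F
  | 0 => Set.univ
  | k + 1 => {a | ∀ x ∈ Lset G f k, x * a ∈ Lset G f (k + 1)}

namespace TightAux

variable {F : Type*} [DivisionRing F] {G : Subring F} {f : ℕ → F} {k k' n : ℕ}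
  {φ : F → Matrix (Fin n) (Fin n) G}

/-! ### Basic facts about `Lset` -/

lemma single_mem {g : F} (hg : g ∈ G) {i : ℕ} (hi : i ≤ k) : g * f i ∈ Lset G f k := by
  refine ⟨fun j => if j = i then g else 0,
    fun j => by by_cases h : j = i <;> simp [h, hg, G.zero_mem], ?_⟩
  rw [Finset.sum_congr rfl (fun j _ => ite_mul (j = i) g 0 (f j))]
  simp [Finset.sum_ite_eq', Nat.lt_succ_of_le hi]

lemma zero_mem : (0 : F) ∈ Lset G f k := ⟨fun _ => 0, by simp [G.zero_mem], by simp⟩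

lemma add_mem {x y : F} (hx : x ∈ Lset G f k) (hy : y ∈ Lset G f k) : x + y ∈ Lset G f k := by
  obtain ⟨c, hc, rfl⟩ := hx; obtain ⟨d, hd, rfl⟩ := hy
  exact ⟨fun i => c i + d i, fun i => G.add_mem (hc i) (hd i), by
    rw [← Finset.sum_add_distrib]; exact Finset.sum_congr rfl fun i _ => (add_mul _ _ _).symm⟩

lemma neg_mem {x : F} (hx : x ∈ Lset G f k) : -x ∈ Lset G f k := by
  obtain ⟨c, hc, rfl⟩ := hx
  exact ⟨fun i => -c i, fun i => G.neg_mem (hc i), by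
    rw [← Finset.sum_neg_distrib]; exact Finset.sum_congr rfl fun i _ => (neg_mul _ _).symm⟩

lemma sub_mem {x y : F} (hx : x ∈ Lset G f k) (hy : y ∈ Lset G f k) : x - y ∈ Lset G f k := by
  rw [sub_eq_add_neg]; exact add_mem hx (neg_mem hy)

lemma smul_mem {g x : F} (hg : g ∈ G) (hx : x ∈ Lset G f k) : g * x ∈ Lset G f k := by
  obtain ⟨c, hc, rfl⟩ := hx
  exact ⟨fun i => g * c i, fun i => G.mul_mem hg (hc i), by
    rw [Finset.mul_sum]; exact Finset.sum_congr rfl fun i _ => (mul_assoc _ _ _).symm⟩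

lemma mono (hkk : k ≤ k') {x : F} (hx : x ∈ Lset G f k) : x ∈ Lset G f k' := by
  obtain ⟨c, hc, rfl⟩ := hx
  refine ⟨fun i => if i < k + 1 then c i else 0,
    fun i => by by_cases h : i < k + 1 <;> simp [h, hc i, G.zero_mem], ?_⟩
  rw [← Finset.sum_subset (Finset.range_subset_range.2 (by omega : k + 1 ≤ k' + 1))]
  · exact Finset.sum_congr rfl fun i hi => by simp [Finset.mem_range.1 hi]
  · intro i _ hi
    have : ¬ i < k + 1 := fun h => hi (Finset.mem_range.2 h)
    simp [this]

lemma f_mem {i : ℕ} (hi : i ≤ k) : f i ∈ Lset G f k := by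
  have := single_mem (f := f) (G := G) G.one_mem hi
  rwa [one_mul] at this

lemma G_mem (hf0 : f 0 = 1) {x : F} (hx : x ∈ G) : x ∈ Lset G f k := by
  have := single_mem (f := f) (G := G) hx (Nat.zero_le k)
  rwa [hf0, mul_one] at this

lemma sum_pad (c : ℕ → F) (h : k + 1 ≤ n) :
    ∑ i ∈ Finset.range n, (if i < k + 1 then c i else 0) * f i
      = ∑ i ∈ Finset.range (k + 1), c i * f i := by
  rw [← Finset.sum_subset (Finset.range_subset_range.2 h)]
  · exact Finset.sum_congr rfl fun i hi => by simp [Finset.mem_range.1 hi]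
  · intro i _ hi
    have : ¬ i < k + 1 := fun h => hi (Finset.mem_range.2 h)
    simp [this]

/-! ### Coefficient lemmas -/

variable (hindep : ∀ c : ℕ → F, (∀ i, c i ∈ G) →
      ∑ i ∈ Finset.range n, c i * f i = 0 → ∀ i < n, c i = 0)

include hindep in
lemma coeff_eq {c d : ℕ → F} (hc : ∀ i, c i ∈ G) (hd : ∀ i, d i ∈ G)
    (h : ∑ i ∈ Finset.range n, c i * f i = ∑ i ∈ Finset.range n, d i * f i) :
    ∀ i < n, c i = d i := by
  intro i hi
  have h0 : ∑ i ∈ Finset.range n, (c i - d i) * f i = 0 := by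
    rw [Finset.sum_congr rfl fun i _ => sub_mul (c i) (d i) (f i),
      Finset.sum_sub_distrib, h, sub_self]
  have := hindep (fun i => c i - d i) (fun i => G.sub_mem (hc i) (hd i)) h0 i hi
  exact sub_eq_zero.1 this

include hindep in
lemma coeff_eq_zero_of_mem {x : F} (hx : x ∈ Lset G f k) {c : ℕ → F}
    (hc : ∀ i, c i ∈ G) (hxc : x = ∑ i ∈ Finset.range n, c i * f i) :
    ∀ j, k < j → j < n → c j = 0 := by
  intro j hkj hjn
  obtain ⟨d, hd, rfl⟩ := hx
  have hkn : k + 1 ≤ n := by omega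
  have heq := coeff_eq hindep (c := fun i => if i < k + 1 then d i else 0) (d := c)
    (fun i => by by_cases h : i < k + 1 <;> simp [h, hd i, G.zero_mem]) hc
    (by rw [sum_pad d hkn]; exact hxc) j hjn
  rw [← heq]; rw [if_neg (by omega)]

include hindep in
lemma f_not_mem (hkj : k < k') (hjn : k' < n) : f k' ∉ Lset G f k := by
  intro hmem
  have hrep : f k' = ∑ i ∈ Finset.range n, (if i = k' then 1 else 0) * f i := by
    rw [Finset.sum_congr rfl (fun j _ => ite_mul (j = k') 1 0 (f j))]
    simp [Finset.sum_ite_eq', hjn]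
  have := coeff_eq_zero_of_mem hindep hmem
    (fun i => by by_cases h : i = k' <;> simp [h, G.one_mem, G.zero_mem]) hrep k' hkj hjn
  simp at this

/-! ### Facts about `Sset` -/

lemma S_one_mem : (1 : F) ∈ Sset G f k := fun x hx => by rwa [mul_one]

lemma S_mul_mem {s t : F} (hs : s ∈ Sset G f k) (ht : t ∈ Sset G f k) :
    s * t ∈ Sset G f k := fun x hx => by rw [← mul_assoc]; exact ht _ (hs _ hx)

lemma Lset_zero (hf0 : f 0 = 1) : Lset G f 0 = (G : Set F) := by
  ext x
  constructor
  · rintro ⟨c, hc, rfl⟩; simpa [hf0] using hc 0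
  · intro hx
    exact ⟨fun _ => x, fun _ => hx, by simp [hf0]⟩

lemma Sset_zero (hf0 : f 0 = 1) : Sset G f 0 = (G : Set F) := by
  ext x
  constructor
  · intro hx
    have := hx 1 (by rw [Lset_zero hf0]; exact G.one_mem)
    rwa [one_mul, Lset_zero hf0] at this
  · intro hx y hy
    rw [Lset_zero hf0] at hy ⊢
    exact G.mul_mem hy hx

/-- Right multiplication by a nonzero element of `S_k` is surjective on `L_k`. -/
lemma exists_mul_eq (hG : ∀ x ∈ G, x⁻¹ ∈ G)
    (hindep : ∀ c : ℕ → F, (∀ i, c i ∈ G) →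
      ∑ i ∈ Finset.range n, c i * f i = 0 → ∀ i < n, c i = 0)
    (hkn : k < n) {s : F} (hs : s ∈ Sset G f k) (hs0 : s ≠ 0) :
    ∀ y ∈ Lset G f k, ∃ x ∈ Lset G f k, x * s = y := by
  classical
  set K : Subfield F := { G with inv_mem' := fun {x} hx => hG x hx } with hK
  have hKG : ∀ x : F, x ∈ K ↔ x ∈ G := fun _ => Iff.rfl
  have hfs : ∀ i : Fin (k+1), ∃ c : ℕ → F, (∀ m, c m ∈ G) ∧
      f (i:ℕ) * s = ∑ m ∈ Finset.range (k+1), c m * f m :=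
    fun i => hs _ (f_mem (Nat.lt_succ_iff.1 i.isLt))
  choose cc hcmem hcsum using hfs
  set aK : Fin (k+1) → Fin (k+1) → K := fun i j => ⟨cc i (j:ℕ), (hKG _).2 (hcmem i (j:ℕ))⟩
    with haK
  set ℓ : (Fin (k+1) → K) →ₗ[K] (Fin (k+1) → K) :=
    { toFun := fun v j => ∑ i, v i * aK i j
      map_add' := by
        intro v w; funext j
        simp [add_mul, Finset.sum_add_distrib]
      map_smul' := by
        intro r v; funext j
        simp [Finset.mul_sum, mul_assoc] } with hℓ
  have hℓapp : ∀ (v : Fin (k+1) → K) (j : Fin (k+1)), ℓ v j = ∑ i, v i * aK i j :=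
    fun v j => rfl
  have hcoe : ∀ (v : Fin (k+1) → K) (j : Fin (k+1)),
      ((ℓ v j : K) : F) = ∑ i : Fin (k+1), (v i : F) * cc i (j:ℕ) := by
    intro v j
    rw [hℓapp]
    push_cast
    rfl
  have key : ∀ v : Fin (k+1) → K,
      (∑ i : Fin (k+1), (v i : F) * f (i:ℕ)) * s
        = ∑ j : Fin (k+1), ((ℓ v j : K) : F) * f (j:ℕ) := by
    intro v
    rw [Finset.sum_mul]
    have h1 : ∀ i : Fin (k+1), ((v i : F) * f (i:ℕ)) * s
        = ∑ j : Fin (k+1), (v i : F) * (cc i (j:ℕ) * f (j:ℕ)) := by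
      intro i
      rw [mul_assoc, hcsum i, ← Fin.sum_univ_eq_sum_range (fun m => cc i m * f m) (k+1),
        Finset.mul_sum]
    rw [Finset.sum_congr rfl (fun i _ => h1 i), Finset.sum_comm]
    refine Finset.sum_congr rfl fun j _ => ?_
    rw [hcoe v j, Finset.sum_mul]
    exact Finset.sum_congr rfl fun i _ => by rw [mul_assoc]
  have hinj : Function.Injective ℓ := by
    rw [injective_iff_map_eq_zero]
    intro v hv
    set x : F := ∑ i : Fin (k+1), (v i : F) * f (i:ℕ) with hx
    have hxs : x * s = 0 := by
      rw [hx, key v, hv]; simp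
    have hx0 : x = 0 := by
      rcases mul_eq_zero.1 hxs with h | h
      · exact h
      · exact absurd h hs0
    set cv : ℕ → F := fun m => if h : m < k + 1 then (v ⟨m, h⟩ : F) else 0 with hcv
    have hcvG : ∀ m, cv m ∈ G := by
      intro m; rw [hcv]; dsimp only
      split
      · exact (hKG _).1 (v _).2
      · exact G.zero_mem
    have hsum1 : ∑ m ∈ Finset.range (k+1), cv m * f m = x := by
      rw [← Fin.sum_univ_eq_sum_range (fun m => cv m * f m) (k+1), hx]
      exact Finset.sum_congr rfl fun i _ => by rw [hcv]; simp [i.isLt]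
    have hsum2 : ∑ m ∈ Finset.range n, cv m * f m = 0 := by
      rw [← Finset.sum_subset (Finset.range_subset_range.2 (by omega : k + 1 ≤ n)), hsum1, hx0]
      intro m _ hm
      have : ¬ m < k + 1 := fun h => hm (Finset.mem_range.2 h)
      rw [hcv]; simp [this]
    have hall := hindep cv hcvG hsum2
    funext i
    have : cv (i : ℕ) = 0 := hall _ (by omega)
    rw [hcv] at this; simp only [i.isLt, dif_pos] at this
    exact Subtype.ext (by simpa using this)
  have hsurj := LinearMap.injective_iff_surjective.1 hinj
  intro y hy
  obtain ⟨b, hb, hby⟩ := hy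
  obtain ⟨v, hv⟩ := hsurj (fun j => (⟨b (j:ℕ), (hKG _).2 (hb (j:ℕ))⟩ : K))
  set cv : ℕ → F := fun m => if h : m < k + 1 then (v ⟨m, h⟩ : F) else 0 with hcv
  refine ⟨∑ i : Fin (k+1), (v i : F) * f (i:ℕ), ⟨cv, ?_, ?_⟩, ?_⟩
  · intro m; rw [hcv]; dsimp only
    split
    · exact (hKG _).1 (v _).2
    · exact G.zero_mem
  · rw [← Fin.sum_univ_eq_sum_range (fun m => cv m * f m) (k+1)]
    exact Finset.sum_congr rfl fun i _ => by rw [hcv]; simp [i.isLt]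
  · rw [key v, hby]
    rw [← Fin.sum_univ_eq_sum_range (fun m => b m * f m) (k+1)]
    refine Finset.sum_congr rfl fun j _ => ?_
    rw [hv]

lemma inv_mem_S (hG : ∀ x ∈ G, x⁻¹ ∈ G)
    (hindep : ∀ c : ℕ → F, (∀ i, c i ∈ G) →
      ∑ i ∈ Finset.range n, c i * f i = 0 → ∀ i < n, c i = 0)
    (hkn : k < n) {s : F} (hs : s ∈ Sset G f k) (hs0 : s ≠ 0) : s⁻¹ ∈ Sset G f k := by
  intro y hy
  obtain ⟨x, hxL, hxs⟩ := exists_mul_eq hG hindep hkn hs hs0 y hy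
  have : y * s⁻¹ = x := by rw [← hxs, mul_assoc, mul_inv_cancel₀ hs0, mul_one]
  rwa [this]

/-! ### The master lemma: `F = L_k + w · S_k` for any `w ∉ L_k` -/

lemma master (hG : ∀ x ∈ G, x⁻¹ ∈ G) (hf0 : f 0 = 1)
    (hindep : ∀ c : ℕ → F, (∀ i, c i ∈ G) →
      ∑ i ∈ Finset.range n, c i * f i = 0 → ∀ i < n, c i = 0)
    (hD : ∀ k < n - 1, ∃ e ∈ Dset G f k, e ∉ Sset G f k ∧
      ∀ x ∈ Dset G f k, ∃ s ∈ Sset G f k, ∃ t ∈ Sset G f k, x = s + e * t) :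
    ∀ k, k + 2 ≤ n → ∀ w, w ∉ Lset G f k → ∀ x : F,
      ∃ l ∈ Lset G f k, ∃ t ∈ Sset G f k, x = l + w * t := by
  intro k
  induction k with
  | zero =>
    intro hk2 w hw x
    obtain ⟨e, heD, heS, hdec⟩ := hD 0 (by omega)
    have hmem : ∀ z : F, z ∈ Dset G f 0 := fun z => Set.mem_univ z
    obtain ⟨sw, hsw, tw, htw, hwe⟩ := hdec w (hmem w)
    rw [Sset_zero hf0] at hsw htw
    have htw0 : tw ≠ 0 := by
      rintro rfl
      apply hw
      rw [Lset_zero hf0]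
      rw [mul_zero, add_zero] at hwe
      rw [hwe]; exact hsw
    obtain ⟨s, hsG, t, htG, hxe⟩ := hdec x (hmem x)
    rw [Sset_zero hf0] at hsG htG
    have he : (w - sw) * tw⁻¹ = e := by
      rw [hwe, add_sub_cancel_left, mul_inv_cancel_right₀ htw0]
    refine ⟨s - sw * (tw⁻¹ * t), ?_, tw⁻¹ * t, ?_, ?_⟩
    · exact G_mem hf0 (G.sub_mem hsG (G.mul_mem hsw (G.mul_mem (hG tw htw) htG)))
    · rw [Sset_zero hf0]; exact G.mul_mem (hG tw htw) htG
    · rw [hxe, ← he]; noncomm_ring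
  | succ k ih =>
    intro hk2 w hw x
    have hkn : k + 2 ≤ n := by omega
    obtain ⟨e, heD, heS, hdec⟩ := hD (k+1) (by omega)
    have hSD : ∀ t ∈ Sset G f k, t ∈ Dset G f (k+1) :=
      fun t ht y hy => mono (Nat.le_succ k) (ht y hy)
    have hv : f (k+1) ∉ Lset G f k := f_not_mem hindep (Nat.lt_succ_self k) (by omega)
    have claim1 : ∀ z : F, ∃ l ∈ Lset G f (k+1), ∃ u ∈ Sset G f (k+1),
        z = l + (f (k+1) * e) * u := by
      intro z
      obtain ⟨l₀, hl₀, t, ht, hzt⟩ := ih hkn (f (k+1)) hv z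
      obtain ⟨sx, hsx, u, hu, hte⟩ := hdec t (hSD t ht)
      refine ⟨l₀ + f (k+1) * sx,
        add_mem (mono (Nat.le_succ k) hl₀) (hsx _ (f_mem (le_refl (k+1)))), u, hu, ?_⟩
      rw [hzt, hte]; noncomm_ring
    obtain ⟨lw, hlw, uw, huw, hwu⟩ := claim1 w
    have huw0 : uw ≠ 0 := by
      rintro rfl
      apply hw
      rw [mul_zero, add_zero] at hwu
      rw [hwu]; exact hlw
    obtain ⟨l, hl, u, hu, hxu⟩ := claim1 x
    have he2 : (w - lw) * uw⁻¹ = f (k+1) * e := by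
      rw [hwu, add_sub_cancel_left, mul_inv_cancel_right₀ huw0]
    have hiw : uw⁻¹ ∈ Sset G f (k+1) := inv_mem_S hG hindep (by omega : k + 1 < n) huw huw0
    refine ⟨l - lw * (uw⁻¹ * u), sub_mem hl ((S_mul_mem hiw hu) lw hlw),
      uw⁻¹ * u, S_mul_mem hiw hu, ?_⟩
    rw [hxu, ← he2]; noncomm_ring

/-! ### Facts about `φ` -/

variable (hφ : ∀ (x : F) (i : Fin n), f (i : ℕ) * x = ∑ j : Fin n, (φ x i j : F) * f (j : ℕ))

include hindep hφ in
lemma phi_coeff {x : F} {i : Fin n} {c : ℕ → F} (hc : ∀ m, c m ∈ G)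
    (h : f (i : ℕ) * x = ∑ m ∈ Finset.range n, c m * f m) :
    ∀ j : Fin n, (φ x i j : F) = c (j : ℕ) := by
  intro j
  set cφ : ℕ → F := fun m => if h : m < n then (φ x i ⟨m, h⟩ : F) else 0 with hcφ
  have h2 : f (i : ℕ) * x = ∑ m ∈ Finset.range n, cφ m * f m := by
    rw [← Fin.sum_univ_eq_sum_range (fun m => cφ m * f m) n, hφ x i]
    exact Finset.sum_congr rfl fun j _ => by rw [hcφ]; simp
  have heq := coeff_eq hindep (c := cφ) (d := c)
    (fun m => by rw [hcφ]; dsimp only; split; exacts [SetLike.coe_mem _, G.zero_mem]) hc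
    (h2.symm.trans h) (j : ℕ) j.isLt
  rw [← heq, hcφ]; simp

include hindep hφ in
lemma phi_zero {x : F} {i : Fin n} {k : ℕ} (h : f (i : ℕ) * x ∈ Lset G f k)
    {j : Fin n} (hj : k < (j : ℕ)) : φ x i j = 0 := by
  obtain ⟨d, hd, hde⟩ := h
  have hkn : k + 1 ≤ n := by have := j.isLt; omega
  have heq := phi_coeff hindep hφ (c := fun m => if m < k + 1 then d m else 0)
    (fun m => by split; exacts [hd _, G.zero_mem])
    (by rw [sum_pad d hkn]; exact hde) j
  simp only [show ¬((j : ℕ) < k + 1) by omega, if_false] at heq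
  exact Subtype.ext (by simpa using heq)

include hindep hφ in
lemma phi_add (x y : F) : φ (x + y) = φ x + φ y := by
  ext i j
  have h : f (i : ℕ) * (x + y) = ∑ m ∈ Finset.range n,
      (fun m => if h : m < n then ((φ x i ⟨m, h⟩ : F) + (φ y i ⟨m, h⟩ : F)) else 0) m * f m := by
    rw [← Fin.sum_univ_eq_sum_range _ n, mul_add, hφ x i, hφ y i, ← Finset.sum_add_distrib]
    exact Finset.sum_congr rfl fun m _ => by simp [add_mul]
  have heq := phi_coeff hindep hφ
    (fun m => by split
                 exacts [G.add_mem (SetLike.coe_mem _) (SetLike.coe_mem _), G.zero_mem]) h j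
  rw [heq]
  simp [Matrix.add_apply, j.isLt]

include hindep hφ in
lemma phi_mul (x y : F) : φ (x * y) = φ x * φ y := by
  ext i j
  have h : f (i : ℕ) * (x * y) = ∑ m ∈ Finset.range n,
      (fun m => if h : m < n then (((φ x * φ y) i ⟨m, h⟩ : G) : F) else 0) m * f m := by
    rw [← Fin.sum_univ_eq_sum_range _ n]
    have c1 : f (i : ℕ) * (x * y) = ∑ m : Fin n, (φ x i m : F) * (f (m : ℕ) * y) := by
      rw [← mul_assoc, hφ x i, Finset.sum_mul]
      exact Finset.sum_congr rfl fun m _ => by rw [mul_assoc]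
    rw [c1]
    have c2 : ∀ m : Fin n, (φ x i m : F) * (f (m : ℕ) * y)
        = ∑ j' : Fin n, ((φ x i m : F) * (φ y m j' : F)) * f (j' : ℕ) := by
      intro m
      rw [hφ y m, Finset.mul_sum]
      exact Finset.sum_congr rfl fun j' _ => by rw [mul_assoc]
    rw [Finset.sum_congr rfl fun m _ => c2 m, Finset.sum_comm]
    refine Finset.sum_congr rfl fun j' _ => ?_
    rw [← Finset.sum_mul]
    congr 1
    simp only [j'.isLt, dif_pos, Fin.eta, Matrix.mul_apply]
    push_cast
    rfl
  have heq := phi_coeff hindep hφ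
    (fun m => by split; exacts [SetLike.coe_mem _, G.zero_mem]) h j
  rw [heq]
  simp [j.isLt]

include hindep hφ in
lemma phi_one : φ 1 = 1 := by
  ext i j
  have h : f (i : ℕ) * 1 = ∑ m ∈ Finset.range n,
      (fun m => if m = (i : ℕ) then (1 : F) else 0) m * f m := by
    rw [mul_one]
    rw [Finset.sum_congr rfl (fun m _ => ite_mul (m = (i : ℕ)) 1 0 (f m))]
    simp [Finset.sum_ite_eq', i.isLt]
  have heq := phi_coeff hindep hφ
    (fun m => by split; exacts [G.one_mem, G.zero_mem]) h j
  rw [heq, Matrix.one_apply]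
  by_cases hij : i = j
  · simp [hij]
  · have h2 : ¬ ((j : ℕ) = (i : ℕ)) := fun hc => hij (Fin.ext hc.symm)
    simp [hij, h2]

include hφ in
lemma phi_inj (hf0 : f 0 = 1) (hn : 0 < n) : Function.Injective φ := by
  intro x y hxy
  have hx := hφ x ⟨0, hn⟩
  have hy := hφ y ⟨0, hn⟩
  simp only [hf0, one_mul] at hx hy
  rw [hx, hy, hxy]

/-! ### Realizing rows and blocks -/

variable (hG : ∀ x ∈ G, x⁻¹ ∈ G) (hf0 : f 0 = 1)
variable (hD : ∀ k < n - 1, ∃ e ∈ Dset G f k, e ∉ Sset G f k ∧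
      ∀ x ∈ Dset G f k, ∃ s ∈ Sset G f k, ∃ t ∈ Sset G f k, x = s + e * t)

include hG hf0 hindep hD hφ in
lemma row {i : Fin n} {k : ℕ} (hik : (i : ℕ) ≤ k) (v : Fin n → G) :
    ∃ x : F, (∀ i' j : Fin n, (i' : ℕ) < (i : ℕ) → k ≤ (j : ℕ) → φ x i' j = 0) ∧
      (∀ j : Fin n, k ≤ (j : ℕ) → φ x i j = v j) := by
  classical
  set cv : ℕ → F := fun m =>
    if h : m < n then (if k ≤ m then ((v ⟨m, h⟩ : G) : F) else 0) else 0 with hcv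
  have hcvG : ∀ m, cv m ∈ G := by
    intro m; rw [hcv]; dsimp only
    split
    · split; exacts [SetLike.coe_mem _, G.zero_mem]
    · exact G.zero_mem
  set τ : F := ∑ m ∈ Finset.range n, cv m * f m with hτ
  rcases Nat.eq_zero_or_pos (i : ℕ) with hi0 | hipos
  · refine ⟨τ, fun i' j hi' _ => absurd hi' (by omega), fun j hj => ?_⟩
    have h : f (i : ℕ) * τ = ∑ m ∈ Finset.range n, cv m * f m := by
      rw [hi0, hf0, one_mul]
    have heq := phi_coeff hindep hφ hcvG h j
    exact Subtype.ext (by rw [heq, hcv]; simp [j.isLt, hj])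
  · have h2 : (i : ℕ) - 1 + 2 ≤ n := by have := i.isLt; omega
    have hfm : f (i : ℕ) ∉ Lset G f ((i : ℕ) - 1) := f_not_mem hindep (by omega) i.isLt
    obtain ⟨l, hl, t, ht, hτlt⟩ := master hG hf0 hindep hD ((i : ℕ) - 1) h2 (f (i : ℕ)) hfm τ
    refine ⟨t, ?_, ?_⟩
    · intro i' j hi' hkj
      exact phi_zero hindep hφ (k := (i : ℕ) - 1) (ht _ (f_mem (by omega))) (by omega)
    · intro j hj
      obtain ⟨d, hd, rfl⟩ := hl
      have hin : (i : ℕ) - 1 + 1 ≤ n := by omega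
      have hft : f (i : ℕ) * t = ∑ m ∈ Finset.range n,
          (fun m => cv m - (if m < (i : ℕ) - 1 + 1 then d m else 0)) m * f m := by
        have h3 : f (i : ℕ) * t
            = τ - ∑ m ∈ Finset.range ((i : ℕ) - 1 + 1), d m * f m := by
          rw [hτlt]; noncomm_ring
        rw [h3, hτ, ← sum_pad d hin, ← Finset.sum_sub_distrib]
        exact Finset.sum_congr rfl fun m _ => (sub_mul _ _ _).symm
      have heq := phi_coeff hindep hφ
        (fun m => by
          refine G.sub_mem (hcvG m) ?_
          split; exacts [hd _, G.zero_mem]) hft j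
      refine Subtype.ext ?_
      rw [heq]
      have hij : ¬ ((j : ℕ) < (i : ℕ) - 1 + 1) := by omega
      rw [hcv]
      simp [j.isLt, hj, hij]

include hG hf0 hindep hD hφ in
lemma tri (hkn : k < n) : ∀ r, r ≤ k + 1 → ∀ g : Matrix (Fin n) (Fin n) G,
    ∃ x : F, ∀ i j : Fin n, (i : ℕ) < r → k ≤ (j : ℕ) → φ x i j = g i j := by
  intro r
  induction r with
  | zero => exact fun _ g => ⟨0, fun i j hi _ => absurd hi (Nat.not_lt_zero _)⟩
  | succ r ih =>
    intro hr g
    obtain ⟨x, hx⟩ := ih (by omega) g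
    have hrn : r < n := by omega
    obtain ⟨y, hy0, hyr⟩ := row hindep hφ hG hf0 hD (i := ⟨r, hrn⟩)
      (by simpa using Nat.lt_succ_iff.1 hr) (fun j => g ⟨r, hrn⟩ j - φ x ⟨r, hrn⟩ j)
    refine ⟨x + y, ?_⟩
    intro i j hi hkj
    rw [phi_add hindep hφ, Matrix.add_apply]
    rcases Nat.lt_or_ge (i : ℕ) r with hir | hir
    · rw [hy0 i j hir hkj, hx i j hir hkj, add_zero]
    · have hieq : i = ⟨r, hrn⟩ := Fin.ext (by simp only [Fin.val_mk]; omega)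
      subst hieq
      rw [hyr j hkj]
      abel

end TightAux

theorem stmt0 {F : Type*} [DivisionRing F] (n : ℕ) (hn : 1 < n)
    (G : Subring F) (hG : ∀ x ∈ G, x⁻¹ ∈ G)
    (f : ℕ → F) (hf0 : f 0 = 1)
    (hspan : ∀ x : F, ∃ c : ℕ → F, (∀ i, c i ∈ G) ∧ x = ∑ i ∈ Finset.range n, c i * f i)
    (hindep : ∀ c : ℕ → F, (∀ i, c i ∈ G) →
      ∑ i ∈ Finset.range n, c i * f i = 0 → ∀ i < n, c i = 0)
    (hD : ∀ k < n - 1, ∃ e ∈ Dset G f k, e ∉ Sset G f k ∧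
      ∀ x ∈ Dset G f k, ∃ s ∈ Sset G f k, ∃ t ∈ Sset G f k, x = s + e * t)
    (φ : F → Matrix (Fin n) (Fin n) G)
    (hφ : ∀ (x : F) (i : Fin n), f (i : ℕ) * x = ∑ j : Fin n, (φ x i j : F) * f (j : ℕ)) :
    (∃ ψ : F →+* Matrix (Fin n) (Fin n) G, ⇑ψ = φ) ∧
    Function.Injective φ ∧ (∀ a : ℕ, 1 ≤ a → a ≤ n → ATight φ a) := by
  refine ⟨?_, TightAux.phi_inj hφ hf0 (by omega), ?_⟩
  · exact ⟨RingHom.mk' ⟨⟨φ, TightAux.phi_one hindep hφ⟩, TightAux.phi_mul hindep hφ⟩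
      (TightAux.phi_add hindep hφ), rfl⟩
  · intro a ha1 han g
    have hkn : a - 1 < n := by omega
    obtain ⟨x, hx⟩ := TightAux.tri hindep hφ hG hf0 hD (k := a - 1) hkn a (by omega) g
    exact ⟨x, fun i j hi hj => hx i j (by omega) (by omega)⟩
end

section
/- Let n > 1 be an integer, F and G division rings, and φ : F → Mₙ(G) a 1-tight ring embedding. Suppose ν : G → F is a map such that for every g ∈ G the first row of φ(ν(g)) is (g, 0, …, 0), and f_0, …, f_{n−1} ∈ F are elements such that for each i the first row of φ(f_i) is the i-th standard basis row (a 1 in position i+1 and zeros elsewhere). Then ν is an injective ring homomorphism, f_0 = 1, and {f_0, …, f_{n−1}} is a basis of F as a left vector space over the division subring ν(G). -/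
theorem stmt1 {F G : Type*} [DivisionRing F] [DivisionRing G] (n : ℕ) (hn : 1 < n)
    (φ : F →+* Matrix (Fin n) (Fin n) G) (hinj : Function.Injective φ)
    (h1 : ATight (⇑φ) 1)
    (ν : G → F)
    (hν : ∀ (g : G) (j : Fin n),
      φ (ν g) ⟨0, by omega⟩ j = if (j : ℕ) = 0 then g else 0)
    (f : Fin n → F)
    (hf : ∀ i j : Fin n,
      φ (f i) ⟨0, by omega⟩ j = if (j : ℕ) = (i : ℕ) then 1 else 0) :
    (∃ ν' : G →+* F, ⇑ν' = ν) ∧ Function.Injective ν ∧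
    f ⟨0, by omega⟩ = 1 ∧
    (∀ x : F, ∃ c : Fin n → G, x = ∑ i, ν (c i) * f i) ∧
    (∀ c : Fin n → G, ∑ i, ν (c i) * f i = 0 → ∀ i, c i = 0) := by
  have hn0 : 0 < n := by omega
  set z : Fin n := ⟨0, hn0⟩ with hzdef
  have hν' : ∀ (g : G) (j : Fin n), φ (ν g) z j = if (j : ℕ) = 0 then g else 0 :=
    fun g j => hν g j
  have hf' : ∀ (i j : Fin n), φ (f i) z j = if (j : ℕ) = (i : ℕ) then 1 else 0 :=
    fun i j => hf i j
  have rowinj : ∀ x : F, (∀ j, φ x z j = 0) → x = 0 := by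
    intro x hx
    by_contra hx0
    have hmul : φ x * φ x⁻¹ = 1 := by
      rw [← map_mul, mul_inv_cancel₀ hx0, map_one]
    have h00 := congrFun (congrFun hmul z) z
    rw [Matrix.mul_apply, Matrix.one_apply_eq] at h00
    simp only [hx, zero_mul, Finset.sum_const_zero] at h00
    exact one_ne_zero h00.symm
  have ext_row : ∀ x y : F, (∀ j, φ x z j = φ y z j) → x = y := fun x y h =>
    sub_eq_zero.mp (rowinj (x - y) fun j => by
      rw [map_sub, Matrix.sub_apply, h j, sub_self])
  have key : ∀ (g : G) (x : F) (j : Fin n), φ (ν g * x) z j = g * φ x z j := by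
    intro g x j
    rw [map_mul, Matrix.mul_apply, Finset.sum_eq_single z]
    · rw [hν']; simp [hzdef]
    · intro k _ hk
      have hk0 : (k : ℕ) ≠ 0 := fun h => hk (Fin.ext h)
      rw [hν']
      simp [hk0]
    · intro h; exact absurd (Finset.mem_univ z) h
  have hrowz : ∀ g : G, φ (ν g) z z = g := by
    intro g; rw [hν']; simp [hzdef]
  have νinj : Function.Injective ν := by
    intro g h hgh
    have := congrArg (fun x => φ x z z) hgh
    simpa only [hrowz] using this
  have hone : ν 1 = 1 := by
    apply ext_row
    intro j
    rw [hν', map_one, Matrix.one_apply]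
    have hiff : z = j ↔ (j : ℕ) = 0 := by
      rw [Fin.ext_iff]; exact eq_comm
    simp only [hiff]
  have hmulν : ∀ g h : G, ν (g * h) = ν g * ν h := by
    intro g h
    apply ext_row
    intro j
    rw [key, hν', hν', mul_ite, mul_zero]
  have hzeroν : ν 0 = 0 := by
    apply ext_row
    intro j
    rw [hν', map_zero, Matrix.zero_apply]
    simp
  have haddν : ∀ g h : G, ν (g + h) = ν g + ν h := by
    intro g h
    apply ext_row
    intro j
    rw [map_add, Matrix.add_apply, hν', hν', hν']
    split <;> simp
  refine ⟨⟨⟨⟨⟨ν, hone⟩, hmulν⟩, hzeroν, haddν⟩, rfl⟩, νinj, ?_, ?_, ?_⟩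
  · -- f z = 1
    apply ext_row
    intro j
    rw [hf', map_one, Matrix.one_apply]
    have hiff : z = j ↔ (j : ℕ) = (z : ℕ) := by
      rw [Fin.ext_iff]; exact eq_comm
    simp only [hiff]
  · -- spanning
    intro x
    refine ⟨fun i => φ x z i, ?_⟩
    apply ext_row
    intro j
    rw [map_sum, Matrix.sum_apply, Finset.sum_eq_single j]
    · rw [key, hf']; simp
    · intro k _ hk
      have : (j : ℕ) ≠ (k : ℕ) := fun h => hk (Fin.ext h.symm)
      rw [key, hf']
      simp [this]
    · intro h; exact absurd (Finset.mem_univ j) h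
  · -- independence
    intro c hc i
    have h : φ (∑ i, ν (c i) * f i) z i = 0 := by
      rw [hc, map_zero, Matrix.zero_apply]
    rw [map_sum, Matrix.sum_apply, Finset.sum_eq_single i] at h
    · rw [key, hf'] at h
      simpa using h
    · intro k _ hk
      have : (i : ℕ) ≠ (k : ℕ) := fun h => hk (Fin.ext h.symm)
      rw [key, hf']
      simp [this]
    · intro h; exact absurd (Finset.mem_univ i) h
end

section
/- Suppose that for every integer N there exists an integer n ≥ max(N, 3), a division ring F_n with a division subring G_n, and elements f_0 = 1, f_1, …, f_{n−1} forming a left G_n-basis of F_n, such that every x ∈ F_n can be written x = a + f_1·b with a, b ∈ G_n, and for each 1 ≤ k ≤ n−2 there exists e ∈ D_k such that every d ∈ D_k can be written d = s + e·t with s, t ∈ S_k. Then there exist a division ring F, a division subring G of F, and a sequence (f_i)_{i∈ℕ} of elements of F with f_0 = 1 satisfying: (T4) every x ∈ F can be written x = a + f_1·b with a, b ∈ G; (T5) the family (f_i)_{i∈ℕ} is left linearly independent over G; (T6) for every k ≥ 1 there exists b ∈ D_k such that every x ∈ D_k can be written x = s + b·t with s, t ∈ S_k. (This is the semantic form of the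 compactness theorem: the existence, for infinitely many n, of division ring extensions whose bimodule has right dimension sequence (1,2,…,2,1,n) of length n+2 yields a model of the theory T, hence a squared small counterexample to the pure semisimplicity conjecture.) -/
/-- The data of a division ring `F`, a division subring `G`, and a sequence
`(f_i)_{i∈ℕ}` of elements of `F` with `f_0 = 1`. -/
structure DivExtData : Type 1 where
  F : Type
  [instF : DivisionRing F]
  G : Subring F
  hG : ∀ x ∈ G, x⁻¹ ∈ G
  f : ℕ → F
  hf0 : f 0 = 1

attribute [instance] DivExtData.instF

section Lemmas
variable {F : Type*} [DivisionRing F] (G : Subring F) (f : ℕ → F) (k : ℕ)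

lemma Lset_zero : (0 : F) ∈ Lset G f k :=
  ⟨0, fun _ => G.zero_mem, by simp⟩

lemma Lset_add {x y : F} (hx : x ∈ Lset G f k) (hy : y ∈ Lset G f k) :
    x + y ∈ Lset G f k := by
  obtain ⟨c, hc, rfl⟩ := hx; obtain ⟨d, hd, rfl⟩ := hy
  exact ⟨c + d, fun i => G.add_mem (hc i) (hd i), by
    simp [add_mul, Finset.sum_add_distrib]⟩

lemma Lset_smul {g x : F} (hg : g ∈ G) (hx : x ∈ Lset G f k) :
    g * x ∈ Lset G f k := by
  obtain ⟨c, hc, rfl⟩ := hx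
  exact ⟨fun i => g * c i, fun i => G.mul_mem hg (hc i), by
    rw [Finset.mul_sum]; simp [mul_assoc]⟩

lemma f_mem_Lset {i : ℕ} (hi : i ≤ k) : f i ∈ Lset G f k := by
  refine ⟨fun j => if j = i then 1 else 0, fun j => by dsimp only; split; exacts [G.one_mem, G.zero_mem], ?_⟩
  rw [Finset.sum_eq_single i (fun j _ hj => by simp [hj]) (fun h =>
    absurd (Finset.mem_range.2 (Nat.lt_succ_of_le hi)) h)]
  simp

lemma sum_mem_Lset {ι : Type*} (s : Finset ι) (g : ι → F)
    (h : ∀ i ∈ s, g i ∈ Lset G f k) : ∑ i ∈ s, g i ∈ Lset G f k := by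
  classical
  induction s using Finset.induction_on with
  | empty => simpa using Lset_zero G f k
  | insert _ _ hni ih =>
    rw [Finset.sum_insert hni]
    exact Lset_add G f k (h _ (Finset.mem_insert_self _ _))
      (ih fun i hi => h i (Finset.mem_insert_of_mem hi))

lemma mem_Sset_iff {a : F} :
    a ∈ Sset G f k ↔ ∀ i ≤ k, f i * a ∈ Lset G f k := by
  constructor
  · intro h i hi; exact h _ (f_mem_Lset G f k hi)
  · rintro h x ⟨c, hc, rfl⟩
    rw [Finset.sum_mul]
    refine sum_mem_Lset G f k _ _ fun i hi => ?_
    rw [mul_assoc]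
    exact Lset_smul G f k (hc i) (h i (Nat.lt_succ_iff.1 (Finset.mem_range.1 hi)))

lemma mem_Dset_iff {a : F} :
    a ∈ Dset G f (k + 1) ↔ ∀ i ≤ k, f i * a ∈ Lset G f (k + 1) := by
  constructor
  · intro h i hi; exact h _ (f_mem_Lset G f k hi)
  · rintro h x ⟨c, hc, rfl⟩
    rw [Finset.sum_mul]
    refine sum_mem_Lset G f (k + 1) _ _ fun i hi => ?_
    rw [mul_assoc]
    exact Lset_smul G f (k + 1) (hc i) (h i (Nat.lt_succ_iff.1 (Finset.mem_range.1 hi)))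

end Lemmas


section Ultra
variable (E : ℕ → DivExtData) (U : Ultrafilter ℕ)

/-- The ultraproduct congruence on the product of the `(E N).F`. -/
def uCon : RingCon (∀ N, (E N).F) where
  r v w := ∀ᶠ N in U, v N = w N
  iseqv := ⟨fun v => Filter.Eventually.of_forall fun _ => rfl,
    fun h => h.mono fun _ e => e.symm,
    fun h1 h2 => (h1.and h2).mono fun _ e => e.1.trans e.2⟩
  mul' h1 h2 := (h1.and h2).mono fun N e => by
    simp only [Pi.mul_apply, e.1, e.2]
  add' h1 h2 := (h1.and h2).mono fun N e => by
    simp only [Pi.add_apply, e.1, e.2]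

/-- The quotient map as a ring homomorphism. -/
def umk : (∀ N, (E N).F) →+* (uCon E U).Quotient := RingCon.mk' _

lemma umk_surjective : Function.Surjective (umk E U) :=
  fun x => Quotient.inductionOn' x fun v => ⟨v, rfl⟩

lemma umk_eq_iff {v w : ∀ N, (E N).F} :
    umk E U v = umk E U w ↔ ∀ᶠ N in U, v N = w N :=
  RingCon.eq _

instance : Nontrivial (uCon E U).Quotient := by
  refine ⟨0, 1, fun h => ?_⟩
  rw [show (0 : (uCon E U).Quotient) = umk E U 0 from (map_zero _).symm,
    show (1 : (uCon E U).Quotient) = umk E U 1 from (map_one _).symm,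
    umk_eq_iff] at h
  obtain ⟨N, hN⟩ := h.exists
  exact zero_ne_one (α := (E N).F) hN

lemma eventually_ne_zero {v : ∀ N, (E N).F} (h : umk E U v ≠ 0) :
    ∀ᶠ N in U, v N ≠ 0 := by
  rw [Ultrafilter.eventually_not]
  intro h'
  exact h (by rw [show (0 : (uCon E U).Quotient) = umk E U 0 from (map_zero _).symm,
    umk_eq_iff]; exact h')

lemma umk_mul_inv {v : ∀ N, (E N).F} (h : umk E U v ≠ 0) :
    umk E U v * umk E U (fun N => (v N)⁻¹) = 1 := by
  rw [← map_mul, show (1 : (uCon E U).Quotient) = umk E U 1 from (map_one _).symm,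
    umk_eq_iff]
  exact (eventually_ne_zero E U h).mono fun N hN => by
    simp [mul_inv_cancel₀ hN]

lemma umk_inv_mul {v : ∀ N, (E N).F} (h : umk E U v ≠ 0) :
    umk E U (fun N => (v N)⁻¹) * umk E U v = 1 := by
  rw [← map_mul, show (1 : (uCon E U).Quotient) = umk E U 1 from (map_one _).symm,
    umk_eq_iff]
  exact (eventually_ne_zero E U h).mono fun N hN => by
    simp [inv_mul_cancel₀ hN]

noncomputable instance instDivQ : DivisionRing (uCon E U).Quotient :=
  DivisionRing.ofIsUnitOrEqZero fun a => by
    obtain ⟨v, rfl⟩ := umk_surjective E U a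
    by_cases h : umk E U v = 0
    · exact Or.inr h
    · exact Or.inl ⟨⟨umk E U v, umk E U (fun N => (v N)⁻¹),
        umk_mul_inv E U h, umk_inv_mul E U h⟩, rfl⟩

/-- The ultraproduct of the subrings. -/
def UG : Subring (uCon E U).Quotient where
  carrier := {x | ∃ v, umk E U v = x ∧ ∀ᶠ N in U, v N ∈ (E N).G}
  zero_mem' := ⟨0, map_zero _, Filter.Eventually.of_forall fun N => (E N).G.zero_mem⟩
  one_mem' := ⟨1, map_one _, Filter.Eventually.of_forall fun N => (E N).G.one_mem⟩
  add_mem' := by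
    rintro x y ⟨v, rfl, hv⟩ ⟨w, rfl, hw⟩
    exact ⟨v + w, map_add _ _ _, (hv.and hw).mono fun N e => (E N).G.add_mem e.1 e.2⟩
  mul_mem' := by
    rintro x y ⟨v, rfl, hv⟩ ⟨w, rfl, hw⟩
    exact ⟨v * w, map_mul _ _ _, (hv.and hw).mono fun N e => (E N).G.mul_mem e.1 e.2⟩
  neg_mem' := by
    rintro x ⟨v, rfl, hv⟩
    exact ⟨-v, map_neg _ _, hv.mono fun N e => (E N).G.neg_mem e⟩

lemma umk_mem_UG_iff {v : ∀ N, (E N).F} :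
    umk E U v ∈ UG E U ↔ ∀ᶠ N in U, v N ∈ (E N).G := by
  constructor
  · rintro ⟨w, hw, hwG⟩
    have h := (umk_eq_iff E U).1 hw
    exact (hwG.and h).mono fun N e => e.2 ▸ e.1
  · intro h; exact ⟨v, rfl, h⟩

lemma UG_inv : ∀ x ∈ UG E U, x⁻¹ ∈ UG E U := by
  intro x hx
  by_cases h0 : x = 0
  · rw [h0, inv_zero]; exact (UG E U).zero_mem
  obtain ⟨v, rfl, hvG⟩ := hx
  have hinv : (umk E U v)⁻¹ = umk E U (fun N => (v N)⁻¹) :=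
    inv_eq_of_mul_eq_one_right (umk_mul_inv E U h0)
  rw [hinv]
  exact (umk_mem_UG_iff E U).2 (hvG.mono fun N h => (E N).hG _ h)

/-- The sequence in the ultraproduct. -/
def uf (i : ℕ) : (uCon E U).Quotient := umk E U (fun N => (E N).f i)

lemma uf_zero : uf E U 0 = 1 := by
  rw [uf, show (fun N => (E N).f 0) = (1 : ∀ N, (E N).F) from
    funext fun N => (E N).hf0, map_one]

/-- The ultraproduct extension data. -/
noncomputable def UE : DivExtData where
  F := (uCon E U).Quotient
  instF := instDivQ E U
  G := UG E U
  hG := UG_inv E U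
  f := uf E U
  hf0 := uf_zero E U

end Ultra

section Transfer
variable (E : ℕ → DivExtData) (U : Ultrafilter ℕ)

lemma umk_sum_mul (v : ℕ → ∀ N, (E N).F) (m : ℕ) :
    ∑ i ∈ Finset.range m, umk E U (v i) * uf E U i
      = umk E U (fun N => ∑ i ∈ Finset.range m, v i N * (E N).f i) := by
  have h : (fun N => ∑ i ∈ Finset.range m, v i N * (E N).f i)
      = ∑ i ∈ Finset.range m, (v i * fun N => (E N).f i) := by
    funext N
    rw [Finset.sum_apply]
    rfl
  rw [h, map_sum]
  exact Finset.sum_congr rfl fun i _ => (map_mul _ _ _).symm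

lemma L_up {v : ∀ N, (E N).F} {k : ℕ}
    (h : ∀ᶠ N in U, v N ∈ Lset (E N).G (E N).f k) :
    umk E U v ∈ Lset (UG E U) (uf E U) k := by
  classical
  set c : ∀ N, ℕ → (E N).F := fun N =>
    if h : v N ∈ Lset (E N).G (E N).f k then h.choose else 0 with hc
  have hcG : ∀ N i, c N i ∈ (E N).G := by
    intro N i
    rw [hc]; dsimp only
    by_cases hN : v N ∈ Lset (E N).G (E N).f k
    · rw [dif_pos hN]; exact hN.choose_spec.1 i
    · rw [dif_neg hN]; exact (E N).G.zero_mem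
  have hsum : ∀ᶠ N in U, v N = ∑ i ∈ Finset.range (k + 1), c N i * (E N).f i := by
    refine h.mono fun N hN => ?_
    rw [hc]; dsimp only; rw [dif_pos hN]
    exact hN.choose_spec.2
  refine ⟨fun i => umk E U (fun N => c N i),
    fun i => (umk_mem_UG_iff E U).2 (Filter.Eventually.of_forall fun N => hcG N i), ?_⟩
  rw [umk_sum_mul, umk_eq_iff]
  exact hsum

lemma L_down {v : ∀ N, (E N).F} {k : ℕ}
    (h : umk E U v ∈ Lset (UG E U) (uf E U) k) :
    ∀ᶠ N in U, v N ∈ Lset (E N).G (E N).f k := by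
  obtain ⟨c, hcG, hsum⟩ := h
  choose w hw using fun i => umk_surjective E U (c i)
  have hwG : ∀ i, ∀ᶠ N in U, w i N ∈ (E N).G := fun i =>
    (umk_mem_UG_iff E U).1 (by rw [hw]; exact hcG i)
  have hsum' : ∀ᶠ N in U, v N = ∑ i ∈ Finset.range (k + 1), w i N * (E N).f i := by
    rw [← umk_eq_iff (E := E) (U := U), ← umk_sum_mul]
    rw [hsum]
    exact Finset.sum_congr rfl fun i _ => by rw [hw]
  have hG' : ∀ᶠ N in U, ∀ i ∈ Finset.range (k + 1), w i N ∈ (E N).G :=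
    (Finset.eventually_all _).2 fun i _ => hwG i
  refine (hsum'.and hG').mono fun N e => ?_
  refine ⟨fun i => if i ∈ Finset.range (k + 1) then w i N else 0, fun i => ?_, ?_⟩
  · dsimp only; split
    · exact e.2 _ ‹_›
    · exact (E N).G.zero_mem
  · rw [e.1]
    exact Finset.sum_congr rfl fun i hi => by simp only [if_pos hi]

lemma uf_mul_umk (i : ℕ) (v : ∀ N, (E N).F) :
    uf E U i * umk E U v = umk E U (fun N => (E N).f i * v N) :=
  (map_mul _ _ _).symm

lemma S_up {v : ∀ N, (E N).F} {k : ℕ}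
    (h : ∀ᶠ N in U, v N ∈ Sset (E N).G (E N).f k) :
    umk E U v ∈ Sset (UG E U) (uf E U) k := by
  rw [mem_Sset_iff]
  intro i hi
  rw [uf_mul_umk]
  exact L_up E U (h.mono fun N hN => hN _ (f_mem_Lset _ _ _ hi))

lemma S_down {v : ∀ N, (E N).F} {k : ℕ}
    (h : umk E U v ∈ Sset (UG E U) (uf E U) k) :
    ∀ᶠ N in U, v N ∈ Sset (E N).G (E N).f k := by
  rw [mem_Sset_iff] at h
  have h' : ∀ᶠ N in U, ∀ i ∈ Finset.range (k + 1),
      (E N).f i * v N ∈ Lset (E N).G (E N).f k := by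
    refine (Finset.eventually_all _).2 fun i hi => ?_
    refine L_down E U ?_
    rw [← uf_mul_umk]
    exact h i (Nat.lt_succ_iff.1 (Finset.mem_range.1 hi))
  refine h'.mono fun N hN => ?_
  rw [mem_Sset_iff]
  intro i hi
  exact hN i (Finset.mem_range.2 (Nat.lt_succ_of_le hi))

lemma D_up {v : ∀ N, (E N).F} {k : ℕ}
    (h : ∀ᶠ N in U, v N ∈ Dset (E N).G (E N).f (k + 1)) :
    umk E U v ∈ Dset (UG E U) (uf E U) (k + 1) := by
  rw [mem_Dset_iff]
  intro i hi
  rw [uf_mul_umk]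
  exact L_up E U (h.mono fun N hN => hN _ (f_mem_Lset _ _ _ hi))

lemma D_down {v : ∀ N, (E N).F} {k : ℕ}
    (h : umk E U v ∈ Dset (UG E U) (uf E U) (k + 1)) :
    ∀ᶠ N in U, v N ∈ Dset (E N).G (E N).f (k + 1) := by
  rw [mem_Dset_iff] at h
  have h' : ∀ᶠ N in U, ∀ i ∈ Finset.range (k + 1),
      (E N).f i * v N ∈ Lset (E N).G (E N).f (k + 1) := by
    refine (Finset.eventually_all _).2 fun i hi => ?_
    refine L_down E U ?_
    rw [← uf_mul_umk]
    exact h i (Nat.lt_succ_iff.1 (Finset.mem_range.1 hi))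
  refine h'.mono fun N hN => ?_
  rw [mem_Dset_iff]
  intro i hi
  exact hN i (Finset.mem_range.2 (Nat.lt_succ_of_le hi))

end Transfer
/-- Compactness: if for every `N` there is an `n ≥ max N 3` and a division ring
extension `Gₙ ⊆ Fₙ` with a left basis `f_0 = 1, …, f_{n-1}` such that every element is
`a + f_1·b` (`a, b ∈ Gₙ`) and each `D_k` (`1 ≤ k ≤ n-2`) is spanned over `S_k` by `{1, e}`
for some `e`, then there is a model of the theory `T`: a division ring extension `G ⊆ F`
with a sequence `(f_i)` satisfying (T4), (T5), (T6). -/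
theorem stmt3
    (H : ∀ N : ℕ, ∃ n : ℕ, max N 3 ≤ n ∧ ∃ E : DivExtData,
      (∀ x : E.F, ∃ c : ℕ → E.F, (∀ i, c i ∈ E.G) ∧
        x = ∑ i ∈ Finset.range n, c i * E.f i) ∧
      (∀ c : ℕ → E.F, (∀ i, c i ∈ E.G) →
        ∑ i ∈ Finset.range n, c i * E.f i = 0 → ∀ i < n, c i = 0) ∧
      (∀ x : E.F, ∃ a ∈ E.G, ∃ b ∈ E.G, x = a + E.f 1 * b) ∧
      (∀ k : ℕ, 1 ≤ k → k ≤ n - 2 → ∃ e ∈ Dset E.G E.f k,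
        ∀ d ∈ Dset E.G E.f k, ∃ s ∈ Sset E.G E.f k, ∃ t ∈ Sset E.G E.f k,
          d = s + e * t)) :
    ∃ E : DivExtData,
      -- (T4)
      (∀ x : E.F, ∃ a ∈ E.G, ∃ b ∈ E.G, x = a + E.f 1 * b) ∧
      -- (T5)
      (∀ c : ℕ → E.F, (∀ i, c i ∈ E.G) →
        ∀ m : ℕ, ∑ i ∈ Finset.range m, c i * E.f i = 0 → ∀ i < m, c i = 0) ∧
      -- (T6)
      (∀ k : ℕ, 1 ≤ k → ∃ b ∈ Dset E.G E.f k,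
        ∀ x ∈ Dset E.G E.f k, ∃ s ∈ Sset E.G E.f k, ∃ t ∈ Sset E.G E.f k,
          x = s + b * t) := by
  classical
  choose n hn E h1 h2 h3 h4 using H
  set U : Ultrafilter ℕ := Filter.hyperfilter ℕ with hU
  refine ⟨UE E U, ?_, ?_, ?_⟩
  · -- T4
    intro x
    obtain ⟨v, rfl⟩ := umk_surjective E U x
    choose a ha b hb hab using fun N => h3 N (v N)
    refine ⟨umk E U a, (umk_mem_UG_iff E U).2 (Filter.Eventually.of_forall ha),
      umk E U b, (umk_mem_UG_iff E U).2 (Filter.Eventually.of_forall hb), ?_⟩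
    have h' : v = a + (fun N => (E N).f 1) * b := funext hab
    rw [h', map_add, map_mul]
    rfl
  · -- T5
    intro c hcG m hsum i him
    choose w hw using fun j => umk_surjective E U (c j)
    have hwG : ∀ᶠ N in U, ∀ j ∈ Finset.range m, w j N ∈ (E N).G :=
      (Finset.eventually_all _).2 fun j _ =>
        (umk_mem_UG_iff E U).1 (by rw [hw]; exact hcG j)
    have hs : ∀ᶠ N in U, ∑ j ∈ Finset.range m, w j N * (E N).f j = 0 := by
      have h0 : umk E U (fun N => ∑ j ∈ Finset.range m, w j N * (E N).f j)
          = umk E U 0 := by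
        rw [← umk_sum_mul, map_zero]
        refine Eq.trans ?_ hsum
        refine Finset.sum_congr rfl fun j _ => ?_
        rw [hw j]; rfl
      exact ((umk_eq_iff E U).1 h0).mono fun N hN => by simpa using hN
    have hmn : ∀ᶠ N in U, m ≤ n N := by
      have hT : ∀ᶠ N in Filter.atTop, m ≤ n N :=
        (Filter.eventually_ge_atTop m).mono fun N h =>
          h.trans ((le_max_left N 3).trans (hn N))
      exact Nat.hyperfilter_le_atTop hT
    have key : ∀ᶠ N in U, w i N = 0 := by
      refine ((hs.and hwG).and hmn).mono fun N hN => ?_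
      obtain ⟨⟨hs0, hG0⟩, hmn0⟩ := hN
      have hsum2 : ∑ j ∈ Finset.range (n N),
          (if j ∈ Finset.range m then w j N else 0) * (E N).f j = 0 := by
        have heq : ∑ j ∈ Finset.range m,
            (if j ∈ Finset.range m then w j N else 0) * (E N).f j
            = ∑ j ∈ Finset.range (n N),
            (if j ∈ Finset.range m then w j N else 0) * (E N).f j :=
          Finset.sum_subset (Finset.range_subset_range.2 hmn0)
            (fun x _ hx => by simp [hx])
        rw [← heq, ← hs0]
        exact Finset.sum_congr rfl fun j hj => by simp [hj]
      have := h2 N (fun j => if j ∈ Finset.range m then w j N else 0)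
        (fun j => by split; exacts [hG0 _ ‹_›, (E N).G.zero_mem])
        hsum2 i (lt_of_lt_of_le him hmn0)
      simpa [Finset.mem_range.2 him] using this
    rw [← hw i, show (0 : (UE E U).F) = umk E U 0 from (map_zero _).symm]
    exact (umk_eq_iff E U).2 (key.mono fun N hN => by simpa using hN)
  · -- T6
    intro k hk
    obtain ⟨k', rfl⟩ : ∃ k', k = k' + 1 := ⟨k - 1, (Nat.succ_pred_eq_of_pos hk).symm⟩
    have hcond : ∀ᶠ N in U, k' + 1 ≤ n N - 2 := by
      have hT : ∀ᶠ N in Filter.atTop, k' + 1 ≤ n N - 2 :=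
        (Filter.eventually_ge_atTop (k' + 3)).mono fun N h => by
          have := (le_max_left N 3).trans (hn N); omega
      exact Nat.hyperfilter_le_atTop hT
    set e : ∀ N, (E N).F := fun N =>
      if h : k' + 1 ≤ n N - 2 then
        (h4 N (k' + 1) (Nat.succ_le_succ (Nat.zero_le _)) h).choose else 0 with he
    have heD : ∀ᶠ N in U, e N ∈ Dset (E N).G (E N).f (k' + 1) := by
      refine hcond.mono fun N h => ?_
      rw [he]; dsimp only; rw [dif_pos h]
      exact (h4 N (k' + 1) (Nat.succ_le_succ (Nat.zero_le _)) h).choose_spec.1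
    refine ⟨umk E U e, D_up E U heD, ?_⟩
    intro x hx
    obtain ⟨v, rfl⟩ := umk_surjective E U x
    have hd : ∀ᶠ N in U, v N ∈ Dset (E N).G (E N).f (k' + 1) := D_down E U hx
    have key : ∀ N, ∃ s t,
        ((k' + 1 ≤ n N - 2) ∧ v N ∈ Dset (E N).G (E N).f (k' + 1)) →
        s ∈ Sset (E N).G (E N).f (k' + 1) ∧ t ∈ Sset (E N).G (E N).f (k' + 1) ∧
          v N = s + e N * t := by
      intro N
      by_cases h : (k' + 1 ≤ n N - 2) ∧ v N ∈ Dset (E N).G (E N).f (k' + 1)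
      · obtain ⟨hn1, hd1⟩ := h
        have hspec := (h4 N (k' + 1) (Nat.succ_le_succ (Nat.zero_le _)) hn1).choose_spec
        obtain ⟨s, hs, t, ht, hst⟩ := hspec.2 (v N) hd1
        have hee : e N = (h4 N (k' + 1) (Nat.succ_le_succ (Nat.zero_le _)) hn1).choose := by
          rw [he]; dsimp only; rw [dif_pos hn1]
        exact ⟨s, t, fun _ => ⟨hs, ht, by rw [hee]; exact hst⟩⟩
      · exact ⟨0, 0, fun hc => absurd hc h⟩
    choose s t hst using key
    have hev := (hcond.and hd).mono fun N h => hst N h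
    refine ⟨umk E U s, S_up E U (hev.mono fun N h => h.1),
      umk E U t, S_up E U (hev.mono fun N h => h.2.1), ?_⟩
    have hfin : umk E U v = umk E U (s + e * t) := (umk_eq_iff E U).2 (hev.mono fun N h => h.2.2)
    rw [map_add, map_mul] at hfin
    exact hfin
end

section
/- Assume Conjecture A holds. Then for every positive integer n and every ring homomorphism φ₀ : F₀ → Mₙ(G₀), where F₀ and G₀ are division rings, there exist division rings F and G, ring embeddings ι_F : F₀ → F and ι_G : G₀ → G, and a tight ring embedding φ : F → Mₙ(G) such that φ(ι_F(x)) equals φ₀(x) with ι_G applied entrywise, for every x ∈ F₀. In particular, for every positive integer n there exist division rings F and G and a tight ring embedding φ : F → Mₙ(G). -/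
/-- A witness for Conjecture A: division ring extensions `F ⊆ F′`, `G ⊆ G′` and an
embedding `φ′ : F′ → Mₙ(G′)` extending `φ` whose image contains a matrix whose
upper-right `a × (n+1-a)` block is the prescribed block of `A`. -/
structure ConjAWitness (n : ℕ) (F G : Type) [DivisionRing F] [DivisionRing G]
    (φ : F →+* Matrix (Fin n) (Fin n) G) (a : ℕ) (A : Matrix (Fin n) (Fin n) G) :
    Type 1 where
  F' : Type
  G' : Type
  [instF' : DivisionRing F']
  [instG' : DivisionRing G']
  ιF : F →+* F'
  ιG : G →+* G'
  injF : Function.Injective ιF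
  injG : Function.Injective ιG
  φ' : F' →+* Matrix (Fin n) (Fin n) G'
  injφ' : Function.Injective φ'
  compat : ∀ x : F, φ' (ιF x) = (φ x).map ⇑ιG
  exists_block : ∃ f' : F', ∀ i j : Fin n,
    (i : ℕ) < a → a ≤ (j : ℕ) + 1 → φ' f' i j = ιG (A i j)

/-- Conjecture A. -/
def ConjectureA : Prop :=
  ∀ (n : ℕ), 1 < n → ∀ (F G : Type) [DivisionRing F] [DivisionRing G],
    ∀ φ : F →+* Matrix (Fin n) (Fin n) G, Function.Injective φ →
      ∀ a b : ℕ, 1 ≤ a → 1 ≤ b → a + b = n + 1 →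
        ∀ A : Matrix (Fin n) (Fin n) G, Nonempty (ConjAWitness n F G φ a A)

/-- An extension of a ring homomorphism `φ₀ : F₀ → Mₙ(G₀)` to a tight embedding
`φ : F → Mₙ(G)` along division ring embeddings `F₀ → F`, `G₀ → G`. -/
structure TightCompletion (n : ℕ) (F₀ G₀ : Type) [DivisionRing F₀] [DivisionRing G₀]
    (φ₀ : F₀ →+* Matrix (Fin n) (Fin n) G₀) : Type 1 where
  F : Type
  G : Type
  [instF : DivisionRing F]
  [instG : DivisionRing G]
  ιF : F₀ →+* F
  ιG : G₀ →+* G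
  injF : Function.Injective ιF
  injG : Function.Injective ιG
  φ : F →+* Matrix (Fin n) (Fin n) G
  injφ : Function.Injective φ
  compat : ∀ x : F₀, φ (ιF x) = (φ₀ x).map ⇑ιG
  tight : ∀ a : ℕ, 1 ≤ a → a ≤ n → ATight ⇑φ a

/-- A pair of division rings `F`, `G` together with a tight embedding `F → Mₙ(G)`. -/
structure TightPair (n : ℕ) : Type 1 where
  F : Type
  G : Type
  [instF : DivisionRing F]
  [instG : DivisionRing G]
  φ : F →+* Matrix (Fin n) (Fin n) G
  injφ : Function.Injective φ
  tight : ∀ a : ℕ, 1 ≤ a → a ≤ n → ATight ⇑φ a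

open Filter

/-! ### Auxiliary: injectivity of ring homs out of division rings -/

theorem StmtAux.ringHom_injective {F R : Type*} [DivisionRing F] [Ring R] [Nontrivial R]
    (f : F →+* R) : Function.Injective f := by
  intro a b h
  by_contra hab
  have hne : a - b ≠ 0 := sub_ne_zero.mpr hab
  have h2 : f (a - b) = 0 := by rw [map_sub, h, sub_self]
  exact hne ((map_eq_zero f).mp h2)

namespace StmtAux

/-! ### States and morphisms -/

/-- A state: a pair of division rings with an embedding `F → Mₙ(G)`. -/
structure St (n : ℕ) : Type 1 where
  F : Type
  G : Type
  [iF : DivisionRing F]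
  [iG : DivisionRing G]
  φ : F →+* Matrix (Fin n) (Fin n) G

attribute [instance] St.iF St.iG

variable {n : ℕ}

/-- A morphism of states. -/
structure StMor (s t : St n) : Type where
  ιF : s.F →+* t.F
  ιG : s.G →+* t.G
  compat : ∀ x : s.F, t.φ (ιF x) = (s.φ x).map ⇑ιG

theorem StMor.ext' {s t : St n} {m m' : StMor s t} (h1 : m.ιF = m'.ιF)
    (h2 : m.ιG = m'.ιG) : m = m' := by
  cases m; cases m'; simp_all

def StMor.id (s : St n) : StMor s s where
  ιF := RingHom.id _
  ιG := RingHom.id _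
  compat x := by ext i j; simp [Matrix.map_apply]

def StMor.comp {s t u : St n} (g : StMor t u) (f : StMor s t) : StMor s u where
  ιF := g.ιF.comp f.ιF
  ιG := g.ιG.comp f.ιG
  compat x := by
    ext i j
    simp [g.compat, f.compat, Matrix.map_apply]

/-- Realization of a block task. -/
def Realizes (s : St n) (a : ℕ) (A : Matrix (Fin n) (Fin n) s.G) : Prop :=
  ∃ f : s.F, ∀ i j : Fin n, (i : ℕ) < a → a ≤ (j : ℕ) + 1 → s.φ f i j = A i j

theorem Realizes.map {s t : St n} (m : StMor s t) {a : ℕ} {A : Matrix (Fin n) (Fin n) s.G}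
    (h : Realizes s a A) : Realizes t a (A.map ⇑m.ιG) := by
  obtain ⟨f, hf⟩ := h
  exact ⟨m.ιF f, fun i j hi hj => by
    rw [m.compat, Matrix.map_apply, hf i j hi hj, Matrix.map_apply]⟩

theorem step_exists (hA : ConjectureA) (hn : 1 < n) (s : St n) (a : ℕ) (ha : 1 ≤ a)
    (han : a ≤ n) (A : Matrix (Fin n) (Fin n) s.G) :
    ∃ t : St n, ∃ m : StMor s t, Realizes t a (A.map ⇑m.ιG) := by
  haveI : Nonempty (Fin n) := Fin.pos_iff_nonempty.mp (by omega)
  have hinj : Function.Injective s.φ := StmtAux.ringHom_injective _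
  obtain ⟨w⟩ := hA n hn s.F s.G s.φ hinj a (n + 1 - a) ha (by omega) (by omega) A
  letI := w.instF'; letI := w.instG'
  refine ⟨⟨w.F', w.G', w.φ'⟩, ⟨w.ιF, w.ιG, w.compat⟩, ?_⟩
  obtain ⟨f', hf'⟩ := w.exists_block
  exact ⟨f', fun i j hi hj => by rw [hf' i j hi hj, Matrix.map_apply]⟩

/-- The tasks over a state. -/
def Task (s : St n) : Type := {p : ℕ × Matrix (Fin n) (Fin n) s.G // 1 ≤ p.1 ∧ p.1 ≤ n}

theorem finset_sat (hA : ConjectureA) (hn : 1 < n) (s : St n) (S : Finset (Task s)) :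
    ∃ t : St n, ∃ m : StMor s t, ∀ τ ∈ S, Realizes t τ.1.1 (τ.1.2.map ⇑m.ιG) := by
  classical
  induction S using Finset.induction_on with
  | empty =>
      refine ⟨s, StMor.id s, by simp⟩
  | @insert τ S' hτ ih =>
      obtain ⟨t, m, hm⟩ := ih
      obtain ⟨u, m', hm'⟩ := step_exists hA hn t τ.1.1 τ.2.1 τ.2.2 (τ.1.2.map ⇑m.ιG)
      refine ⟨u, m'.comp m, ?_⟩
      intro σ hσ
      have hcomp : ∀ (B : Matrix (Fin n) (Fin n) s.G),
          (B.map ⇑m.ιG).map ⇑m'.ιG = B.map ⇑(m'.comp m).ιG := by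
        intro B; ext i j; simp [Matrix.map_apply, StMor.comp]
      rcases Finset.mem_insert.mp hσ with rfl | hσ
      · rw [← hcomp]; exact hm'
      · have := (hm σ hσ).map m'
        rwa [hcomp] at this

end StmtAux
set_option linter.unusedSectionVars false
set_option synthInstance.maxHeartbeats 1000000
set_option maxHeartbeats 1600000
open Filter
namespace StmtAux

section Gadget

variable {ι : Type} (L : Filter ι) (D : ι → Type) [∀ i, DivisionRing (D i)]
  (R : Subring (∀ i, D i))

/-- The congruence of `L`-a.e. equality on a subring of a product of division rings. -/
def qcon : RingCon R where
  r x y := ∀ᶠ i in L, (x : ∀ i, D i) i = (y : ∀ i, D i) i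
  iseqv := ⟨fun x => Eventually.of_forall fun i => rfl,
    fun h => h.mono fun i hi => hi.symm,
    fun h1 h2 => (h1.and h2).mono fun i hi => hi.1.trans hi.2⟩
  add' := fun h1 h2 => (h1.and h2).mono fun i hi => by
    simp only [Subring.coe_add, Pi.add_apply, hi.1, hi.2]
  mul' := fun h1 h2 => (h1.and h2).mono fun i hi => by
    simp only [Subring.coe_mul, Pi.mul_apply, hi.1, hi.2]

/-- The quotient ring. -/
abbrev Q := (qcon L D R).Quotient

/-- The quotient map, as a ring hom. -/
def qmk : R →+* Q L D R := (qcon L D R).mk'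

theorem qmk_eq_iff {x y : R} :
    qmk L D R x = qmk L D R y ↔ ∀ᶠ i in L, (x : ∀ i, D i) i = (y : ∀ i, D i) i :=
  RingCon.eq _

theorem qmk_surjective : Function.Surjective (qmk L D R) :=
  fun q => Quotient.inductionOn q fun x => ⟨x, rfl⟩

variable [L.NeBot]

theorem q_nontrivial : Nontrivial (Q L D R) := by
  refine ⟨0, 1, fun h => ?_⟩
  rw [← map_zero (qmk L D R), ← map_one (qmk L D R), qmk_eq_iff] at h
  obtain ⟨i, hi⟩ := h.exists
  simp only [Subring.coe_zero, Pi.zero_apply, Subring.coe_one, Pi.one_apply] at hi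
  exact zero_ne_one hi

/-- The quotient is a division ring, given a.e. closure under inverses and the
zero/nonzero dichotomy. -/
noncomputable def qdiv
    (hinv : ∀ x : R, ∃ y : R, ∀ᶠ i in L, (y : ∀ i, D i) i = ((x : ∀ i, D i) i)⁻¹)
    (hdich : ∀ x : R, (∀ᶠ i in L, (x : ∀ i, D i) i = 0) ∨
      (∀ᶠ i in L, (x : ∀ i, D i) i ≠ 0)) :
    DivisionRing (Q L D R) := by
  haveI := q_nontrivial L D R
  refine DivisionRing.ofIsUnitOrEqZero ?_
  intro q
  obtain ⟨x, rfl⟩ := qmk_surjective L D R q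
  rcases hdich x with h0 | hne
  · refine Or.inr ?_
    rw [← map_zero (qmk L D R), qmk_eq_iff]
    exact h0.mono fun i hi => by
      simpa only [Subring.coe_zero, Pi.zero_apply] using hi
  · obtain ⟨y, hy⟩ := hinv x
    refine Or.inl ⟨⟨qmk L D R x, qmk L D R y, ?_, ?_⟩, rfl⟩
    · rw [← map_mul (qmk L D R), ← map_one (qmk L D R), qmk_eq_iff]
      exact (hy.and hne).mono fun i hi => by
        simp only [Subring.coe_mul, Pi.mul_apply, Subring.coe_one, Pi.one_apply, hi.1,
          mul_inv_cancel₀ hi.2]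
    · rw [← map_mul (qmk L D R), ← map_one (qmk L D R), qmk_eq_iff]
      exact (hy.and hne).mono fun i hi => by
        simp only [Subring.coe_mul, Pi.mul_apply, Subring.coe_one, Pi.one_apply, hi.1,
          inv_mul_cancel₀ hi.2]

/-- A compatible family of ring homs into the members gives a ring hom into the quotient. -/
def qmkPi {B : Type*} [NonAssocSemiring B] (g : ∀ i, B →+* D i)
    (hg : ∀ b : B, (fun i => g i b) ∈ R) : B →+* Q L D R where
  toFun b := qmk L D R ⟨fun i => g i b, hg b⟩
  map_one' := by
    show qmk L D R ⟨fun i => g i 1, hg 1⟩ = 1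
    rw [show (⟨fun i => g i 1, hg 1⟩ : R) = 1 from
      Subtype.ext (funext fun i => by simp), map_one]
  map_mul' x y := by
    show qmk L D R ⟨fun i => g i (x * y), hg (x * y)⟩
      = qmk L D R ⟨fun i => g i x, hg x⟩ * qmk L D R ⟨fun i => g i y, hg y⟩
    rw [show (⟨fun i => g i (x * y), hg (x * y)⟩ : R)
        = ⟨fun i => g i x, hg x⟩ * ⟨fun i => g i y, hg y⟩ from
      Subtype.ext (funext fun i => by simp), map_mul]
  map_zero' := by
    show qmk L D R ⟨fun i => g i 0, hg 0⟩ = 0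
    rw [show (⟨fun i => g i 0, hg 0⟩ : R) = 0 from
      Subtype.ext (funext fun i => by simp), map_zero]
  map_add' x y := by
    show qmk L D R ⟨fun i => g i (x + y), hg (x + y)⟩
      = qmk L D R ⟨fun i => g i x, hg x⟩ + qmk L D R ⟨fun i => g i y, hg y⟩
    rw [show (⟨fun i => g i (x + y), hg (x + y)⟩ : R)
        = ⟨fun i => g i x, hg x⟩ + ⟨fun i => g i y, hg y⟩ from
      Subtype.ext (funext fun i => by simp), map_add]

theorem qmkPi_apply {B : Type*} [NonAssocSemiring B] (g : ∀ i, B →+* D i)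
    (hg : ∀ b : B, (fun i => g i b) ∈ R) (b : B) :
    qmkPi L D R g hg b = qmk L D R ⟨fun i => g i b, hg b⟩ := rfl

variable {n : ℕ} (E : ι → Type) [∀ i, DivisionRing (E i)] (S : Subring (∀ i, E i))
  (φs : ∀ i, D i →+* Matrix (Fin n) (Fin n) (E i))
  (hmap : ∀ (x : R) (a b : Fin n), (fun i => φs i ((x : ∀ i, D i) i) a b) ∈ S)

/-- The induced map on quotients into matrices. -/
def qPhiFun : Q L D R → Matrix (Fin n) (Fin n) (Q L E S) :=
  Quotient.lift
    (fun x : R => Matrix.of fun a b => qmk L E S ⟨fun i => φs i ((x : ∀ i, D i) i) a b, hmap x a b⟩)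
    (fun x y hxy => by
      ext a b
      exact (qmk_eq_iff L E S).mpr ((hxy : ∀ᶠ i in L, _).mono fun i hi => by simp only [hi]))

theorem qPhiFun_mk (x : R) :
    qPhiFun L D R E S φs hmap (qmk L D R x)
      = Matrix.of fun a b => qmk L E S ⟨fun i => φs i ((x : ∀ i, D i) i) a b, hmap x a b⟩ := rfl

/-- The induced ring hom on quotients into matrices. -/
def qPhi : Q L D R →+* Matrix (Fin n) (Fin n) (Q L E S) where
  toFun := qPhiFun L D R E S φs hmap
  map_one' := by
    show qPhiFun L D R E S φs hmap 1 = 1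
    rw [← map_one (qmk L D R), qPhiFun_mk]
    ext a b
    rw [Matrix.of_apply, Matrix.one_apply]
    have : (⟨fun i => φs i (((1 : R) : ∀ i, D i) i) a b, hmap 1 a b⟩ : S)
        = if a = b then 1 else 0 := by
      refine Subtype.ext (funext fun i => ?_)
      simp only [Subring.coe_one, Pi.one_apply, map_one, Matrix.one_apply]
      split <;> simp
    rw [this]
    split <;> simp
  map_mul' p q := by
    show qPhiFun L D R E S φs hmap (p * q)
      = qPhiFun L D R E S φs hmap p * qPhiFun L D R E S φs hmap q
    obtain ⟨x, rfl⟩ := qmk_surjective L D R p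
    obtain ⟨y, rfl⟩ := qmk_surjective L D R q
    rw [← map_mul (qmk L D R), qPhiFun_mk, qPhiFun_mk, qPhiFun_mk]
    ext a b
    rw [Matrix.mul_apply, Matrix.of_apply]
    have : (⟨fun i => φs i (((x * y : R) : ∀ i, D i) i) a b, hmap (x * y) a b⟩ : S)
        = ∑ k : Fin n, (⟨fun i => φs i ((x : ∀ i, D i) i) a k, hmap x a k⟩ : S)
            * ⟨fun i => φs i ((y : ∀ i, D i) i) k b, hmap y k b⟩ := by
      refine Subtype.ext ?_
      rw [AddSubmonoidClass.coe_finset_sum]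
      refine funext fun i => ?_
      simp only [Subring.coe_mul, Pi.mul_apply, map_mul, Matrix.mul_apply]
      rw [Finset.sum_apply]
      rfl
    rw [this, map_sum]
    refine Finset.sum_congr rfl fun k _ => ?_
    rw [map_mul]
    rfl
  map_zero' := by
    show qPhiFun L D R E S φs hmap 0 = 0
    rw [← map_zero (qmk L D R), qPhiFun_mk]
    ext a b
    rw [Matrix.of_apply]
    have : (⟨fun i => φs i (((0 : R) : ∀ i, D i) i) a b, hmap 0 a b⟩ : S) = 0 := by
      refine Subtype.ext (funext fun i => ?_)
      simp
    rw [this, map_zero]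
    rfl
  map_add' p q := by
    show qPhiFun L D R E S φs hmap (p + q)
      = qPhiFun L D R E S φs hmap p + qPhiFun L D R E S φs hmap q
    obtain ⟨x, rfl⟩ := qmk_surjective L D R p
    obtain ⟨y, rfl⟩ := qmk_surjective L D R q
    rw [← map_add (qmk L D R), qPhiFun_mk, qPhiFun_mk, qPhiFun_mk]
    ext a b
    have : (⟨fun i => φs i (((x + y : R) : ∀ i, D i) i) a b, hmap (x + y) a b⟩ : S)
        = ⟨fun i => φs i ((x : ∀ i, D i) i) a b, hmap x a b⟩
          + ⟨fun i => φs i ((y : ∀ i, D i) i) a b, hmap y a b⟩ := by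
      refine Subtype.ext (funext fun i => ?_)
      simp
    rw [Matrix.of_apply, this, map_add]
    rfl

theorem qPhi_mk (x : R) (a b : Fin n) :
    qPhi L D R E S φs hmap (qmk L D R x) a b
      = qmk L E S ⟨fun i => φs i ((x : ∀ i, D i) i) a b, hmap x a b⟩ := rfl

end Gadget

end StmtAux

namespace StmtAux

variable {n : ℕ}

/-- A saturated extension: realizes all tasks over the base state. -/
structure SatExt (s : St n) : Type 1 where
  t : St n
  m : StMor s t
  sat : ∀ (a : ℕ), 1 ≤ a → a ≤ n → ∀ A : Matrix (Fin n) (Fin n) s.G,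
    Realizes t a (A.map ⇑m.ιG)

noncomputable def satExt (hA : ConjectureA) (hn : 1 < n) (s : St n) : SatExt s := by
  classical
  have hfin := finset_sat hA hn s
  choose t' m' h' using hfin
  let L : Filter (Finset (Task s)) := ↑(Ultrafilter.of (atTop : Filter (Finset (Task s))))
  haveI hLne : L.NeBot := Ultrafilter.neBot _
  let D : Finset (Task s) → Type := fun S => (t' S).F
  let E : Finset (Task s) → Type := fun S => (t' S).G
  let RF : Subring (∀ S, D S) := ⊤
  let RG : Subring (∀ S, E S) := ⊤
  have hinvF : ∀ x : RF, ∃ y : RF, ∀ᶠ S in L, (y : ∀ S, D S) S = ((x : ∀ S, D S) S)⁻¹ :=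
    fun x => ⟨⟨fun S => ((x : ∀ S, D S) S)⁻¹, Subring.mem_top _⟩, Eventually.of_forall fun S => rfl⟩
  have hdichF : ∀ x : RF, (∀ᶠ S in L, (x : ∀ S, D S) S = 0) ∨
      (∀ᶠ S in L, (x : ∀ S, D S) S ≠ 0) :=
    fun x => Ultrafilter.eventually_or.mp (Eventually.of_forall fun S => em _)
  have hinvG : ∀ x : RG, ∃ y : RG, ∀ᶠ S in L, (y : ∀ S, E S) S = ((x : ∀ S, E S) S)⁻¹ :=
    fun x => ⟨⟨fun S => ((x : ∀ S, E S) S)⁻¹, Subring.mem_top _⟩, Eventually.of_forall fun S => rfl⟩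
  have hdichG : ∀ x : RG, (∀ᶠ S in L, (x : ∀ S, E S) S = 0) ∨
      (∀ᶠ S in L, (x : ∀ S, E S) S ≠ 0) :=
    fun x => Ultrafilter.eventually_or.mp (Eventually.of_forall fun S => em _)
  letI instQF : DivisionRing (Q L D RF) := qdiv L D RF hinvF hdichF
  letI instQG : DivisionRing (Q L E RG) := qdiv L E RG hinvG hdichG
  refine
    { t := ⟨Q L D RF, Q L E RG,
        qPhi L D RF E RG (fun S => (t' S).φ) (fun x a b => Subring.mem_top _)⟩
      m := ⟨qmkPi L D RF (fun S => (m' S).ιF) (fun b => Subring.mem_top _),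
        qmkPi L E RG (fun S => (m' S).ιG) (fun b => Subring.mem_top _), ?_⟩
      sat := ?_ }
  · -- compat
    intro x
    ext i j
    show qmk L E RG ⟨fun S => (t' S).φ ((m' S).ιF x) i j, Subring.mem_top _⟩
      = qmk L E RG ⟨fun S => (m' S).ιG (s.φ x i j), Subring.mem_top _⟩
    refine congrArg _ (Subtype.ext (funext fun S => ?_))
    show (t' S).φ ((m' S).ιF x) i j = (m' S).ιG (s.φ x i j)
    rw [(m' S).compat x]
    simp [Matrix.map_apply]
  · -- saturation
    intro a ha han A
    set τ : Task s := ⟨(a, A), ha, han⟩ with hτdef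
    have hw : ∀ S, τ ∈ S → Realizes (t' S) a (A.map ⇑(m' S).ιG) := fun S hS => h' S τ hS
    let w : ∀ S, D S := fun S => if h : τ ∈ S then (hw S h).choose else 0
    refine ⟨qmk L D RF ⟨w, Subring.mem_top _⟩, fun i j hi hj => ?_⟩
    have hev : ∀ᶠ S in L, τ ∈ S := by
      have hIci : {S : Finset (Task s) | {τ} ≤ S} ∈ (atTop : Filter (Finset (Task s))) :=
        Filter.mem_atTop {τ}
      have hmem : {S : Finset (Task s) | {τ} ≤ S} ∈ L := Ultrafilter.of_le _ hIci
      filter_upwards [hmem] with S hS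
      exact Finset.singleton_subset_iff.mp hS
    show qPhi L D RF E RG (fun S => (t' S).φ) (fun x a b => Subring.mem_top _)
      (qmk L D RF ⟨w, Subring.mem_top _⟩) i j
        = (A.map ⇑(qmkPi L E RG (fun S => (m' S).ιG) (fun b => Subring.mem_top _))) i j
    rw [qPhi_mk, Matrix.map_apply, qmkPi_apply]
    refine (qmk_eq_iff L E RG).mpr (hev.mono fun S hS => ?_)
    show (t' S).φ (w S) i j = (m' S).ιG (A i j)
    have hspec := (hw S hS).choose_spec i j hi hj
    rw [show w S = (hw S hS).choose from dif_pos hS, hspec]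
    simp [Matrix.map_apply]

end StmtAux

namespace StmtAux

variable {n : ℕ}

theorem StMor.comp_id {s t : St n} (m : StMor s t) : m.comp (StMor.id s) = m :=
  StMor.ext' rfl rfl

theorem StMor.id_comp {s t : St n} (m : StMor s t) : (StMor.id t).comp m = m :=
  StMor.ext' rfl rfl

theorem StMor.comp_assoc {s t u v : St n} (h : StMor u v) (g : StMor t u) (f : StMor s t) :
    (h.comp g).comp f = h.comp (g.comp f) :=
  StMor.ext' rfl rfl

section Chain

variable (hA : ConjectureA) (hn : 1 < n) (s₀ : St n)

/-- The ω-chain of repeated saturations. -/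
noncomputable def chain : ℕ → St n := fun k => Nat.rec s₀ (fun _ t => (satExt hA hn t).t) k

noncomputable def chainStep (k : ℕ) : StMor (chain hA hn s₀ k) (chain hA hn s₀ (k + 1)) :=
  (satExt hA hn (chain hA hn s₀ k)).m

noncomputable def chainTr {k l : ℕ} (h : k ≤ l) :
    StMor (chain hA hn s₀ k) (chain hA hn s₀ l) :=
  Nat.leRecOn h (fun {m} mor => (chainStep hA hn s₀ m).comp mor) (StMor.id _)

theorem chainTr_self (k : ℕ) : chainTr hA hn s₀ (le_refl k) = StMor.id _ :=
  Nat.leRecOn_self _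

theorem chainTr_succ {k l : ℕ} (h : k ≤ l) (h2 : k ≤ l + 1) :
    chainTr hA hn s₀ h2 = (chainStep hA hn s₀ l).comp (chainTr hA hn s₀ h) :=
  Nat.leRecOn_succ h _

theorem chainTr_succ_self (k : ℕ) :
    chainTr hA hn s₀ (Nat.le_succ k) = chainStep hA hn s₀ k := by
  rw [chainTr_succ hA hn s₀ (le_refl k) (Nat.le_succ k), chainTr_self, StMor.comp_id]

theorem chainTr_comp {k l m : ℕ} (h1 : k ≤ l) (h2 : l ≤ m) :
    (chainTr hA hn s₀ h2).comp (chainTr hA hn s₀ h1) = chainTr hA hn s₀ (h1.trans h2) := by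
  induction m, h2 using Nat.le_induction with
  | base => rw [chainTr_self, StMor.id_comp]
  | succ m hm ih =>
      rw [chainTr_succ hA hn s₀ hm (hm.trans (Nat.le_succ m)), StMor.comp_assoc, ih,
        chainTr_succ hA hn s₀ (h1.trans hm) (h1.trans (hm.trans (Nat.le_succ m)))]

/-- Coherent sequences: the colimit carrier on the `F` side. -/
noncomputable def cohF : Subring (∀ k, (chain hA hn s₀ k).F) where
  carrier := {x | ∃ k₀, ∀ l, k₀ ≤ l → x (l + 1) = (chainStep hA hn s₀ l).ιF (x l)}
  zero_mem' := ⟨0, fun l _ => by simp⟩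
  one_mem' := ⟨0, fun l _ => by simp⟩
  add_mem' := fun {x y} hx hy => by
    obtain ⟨k₁, h₁⟩ := hx; obtain ⟨k₂, h₂⟩ := hy
    exact ⟨max k₁ k₂, fun l hl => by
      simp only [Pi.add_apply, h₁ l (le_trans (le_max_left _ _) hl),
        h₂ l (le_trans (le_max_right _ _) hl), map_add]⟩
  mul_mem' := fun {x y} hx hy => by
    obtain ⟨k₁, h₁⟩ := hx; obtain ⟨k₂, h₂⟩ := hy
    exact ⟨max k₁ k₂, fun l hl => by
      simp only [Pi.mul_apply, h₁ l (le_trans (le_max_left _ _) hl),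
        h₂ l (le_trans (le_max_right _ _) hl), map_mul]⟩
  neg_mem' := fun {x} hx => by
    obtain ⟨k₁, h₁⟩ := hx
    exact ⟨k₁, fun l hl => by simp only [Pi.neg_apply, h₁ l hl, map_neg]⟩

/-- Coherent sequences: the colimit carrier on the `G` side. -/
noncomputable def cohG : Subring (∀ k, (chain hA hn s₀ k).G) where
  carrier := {x | ∃ k₀, ∀ l, k₀ ≤ l → x (l + 1) = (chainStep hA hn s₀ l).ιG (x l)}
  zero_mem' := ⟨0, fun l _ => by simp⟩
  one_mem' := ⟨0, fun l _ => by simp⟩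
  add_mem' := fun {x y} hx hy => by
    obtain ⟨k₁, h₁⟩ := hx; obtain ⟨k₂, h₂⟩ := hy
    exact ⟨max k₁ k₂, fun l hl => by
      simp only [Pi.add_apply, h₁ l (le_trans (le_max_left _ _) hl),
        h₂ l (le_trans (le_max_right _ _) hl), map_add]⟩
  mul_mem' := fun {x y} hx hy => by
    obtain ⟨k₁, h₁⟩ := hx; obtain ⟨k₂, h₂⟩ := hy
    exact ⟨max k₁ k₂, fun l hl => by
      simp only [Pi.mul_apply, h₁ l (le_trans (le_max_left _ _) hl),
        h₂ l (le_trans (le_max_right _ _) hl), map_mul]⟩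
  neg_mem' := fun {x} hx => by
    obtain ⟨k₁, h₁⟩ := hx
    exact ⟨k₁, fun l hl => by simp only [Pi.neg_apply, h₁ l hl, map_neg]⟩

theorem cohF_inv (x : cohF hA hn s₀) :
    ∃ y : cohF hA hn s₀, ∀ᶠ l in (atTop : Filter ℕ),
      (y : ∀ k, (chain hA hn s₀ k).F) l = (((x : ∀ k, (chain hA hn s₀ k).F)) l)⁻¹ := by
  obtain ⟨k₀, h₀⟩ := x.2
  exact ⟨⟨fun l => ((x : ∀ k, (chain hA hn s₀ k).F) l)⁻¹,
    ⟨k₀, fun l hl => by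
      show ((x : ∀ k, (chain hA hn s₀ k).F) (l + 1))⁻¹
        = (chainStep hA hn s₀ l).ιF (((x : ∀ k, (chain hA hn s₀ k).F) l)⁻¹)
      rw [h₀ l hl, map_inv₀]⟩⟩, Eventually.of_forall fun l => rfl⟩

theorem cohG_inv (x : cohG hA hn s₀) :
    ∃ y : cohG hA hn s₀, ∀ᶠ l in (atTop : Filter ℕ),
      (y : ∀ k, (chain hA hn s₀ k).G) l = (((x : ∀ k, (chain hA hn s₀ k).G)) l)⁻¹ := by
  obtain ⟨k₀, h₀⟩ := x.2
  exact ⟨⟨fun l => ((x : ∀ k, (chain hA hn s₀ k).G) l)⁻¹,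
    ⟨k₀, fun l hl => by
      show ((x : ∀ k, (chain hA hn s₀ k).G) (l + 1))⁻¹
        = (chainStep hA hn s₀ l).ιG (((x : ∀ k, (chain hA hn s₀ k).G) l)⁻¹)
      rw [h₀ l hl, map_inv₀]⟩⟩, Eventually.of_forall fun l => rfl⟩

theorem cohF_dich (x : cohF hA hn s₀) :
    (∀ᶠ l in (atTop : Filter ℕ), (x : ∀ k, (chain hA hn s₀ k).F) l = 0) ∨
      (∀ᶠ l in (atTop : Filter ℕ), (x : ∀ k, (chain hA hn s₀ k).F) l ≠ 0) := by
  haveI : Nonempty (Fin n) := Fin.pos_iff_nonempty.mp (by omega)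
  obtain ⟨k₀, h₀⟩ := x.2
  by_cases hz : ∀ l, k₀ ≤ l → (x : ∀ k, (chain hA hn s₀ k).F) l = 0
  · exact Or.inl (eventually_atTop.mpr ⟨k₀, hz⟩)
  · push_neg at hz
    obtain ⟨l₀, hl₀, hne⟩ := hz
    refine Or.inr (eventually_atTop.mpr ⟨l₀, fun l hl => ?_⟩)
    induction l, hl using Nat.le_induction with
    | base => exact hne
    | succ l hl ih =>
        rw [h₀ l (le_trans hl₀ hl)]
        exact fun h => ih ((map_eq_zero _).mp h)

theorem cohG_dich (x : cohG hA hn s₀) :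
    (∀ᶠ l in (atTop : Filter ℕ), (x : ∀ k, (chain hA hn s₀ k).G) l = 0) ∨
      (∀ᶠ l in (atTop : Filter ℕ), (x : ∀ k, (chain hA hn s₀ k).G) l ≠ 0) := by
  obtain ⟨k₀, h₀⟩ := x.2
  by_cases hz : ∀ l, k₀ ≤ l → (x : ∀ k, (chain hA hn s₀ k).G) l = 0
  · exact Or.inl (eventually_atTop.mpr ⟨k₀, hz⟩)
  · push_neg at hz
    obtain ⟨l₀, hl₀, hne⟩ := hz
    refine Or.inr (eventually_atTop.mpr ⟨l₀, fun l hl => ?_⟩)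
    induction l, hl using Nat.le_induction with
    | base => exact hne
    | succ l hl ih =>
        rw [h₀ l (le_trans hl₀ hl)]
        exact fun h => ih ((map_eq_zero _).mp h)

theorem coh_map (x : cohF hA hn s₀) (a b : Fin n) :
    (fun k => (chain hA hn s₀ k).φ ((x : ∀ k, (chain hA hn s₀ k).F) k) a b)
      ∈ cohG hA hn s₀ := by
  obtain ⟨k₀, h₀⟩ := x.2
  exact ⟨k₀, fun l hl => by
    show (chain hA hn s₀ (l + 1)).φ ((x : ∀ k, (chain hA hn s₀ k).F) (l + 1)) a b
      = (chainStep hA hn s₀ l).ιG ((chain hA hn s₀ l).φ ((x : ∀ k, (chain hA hn s₀ k).F) l) a b)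
    rw [h₀ l hl, (chainStep hA hn s₀ l).compat]
    simp [Matrix.map_apply]⟩

/-- The colimit division ring on the `F` side. -/
noncomputable def colF : Type :=
  Q (atTop : Filter ℕ) (fun k => (chain hA hn s₀ k).F) (cohF hA hn s₀)

/-- The colimit division ring on the `G` side. -/
noncomputable def colG : Type :=
  Q (atTop : Filter ℕ) (fun k => (chain hA hn s₀ k).G) (cohG hA hn s₀)

noncomputable instance instColF : DivisionRing (colF hA hn s₀) :=
  qdiv _ _ _ (cohF_inv hA hn s₀) (cohF_dich hA hn s₀)

noncomputable instance instColG : DivisionRing (colG hA hn s₀) :=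
  qdiv _ _ _ (cohG_inv hA hn s₀) (cohG_dich hA hn s₀)

/-- The colimit embedding `F → Mₙ(G)`. -/
noncomputable def colPhi : colF hA hn s₀ →+* Matrix (Fin n) (Fin n) (colG hA hn s₀) :=
  qPhi (atTop : Filter ℕ) (fun k => (chain hA hn s₀ k).F) (cohF hA hn s₀)
    (fun k => (chain hA hn s₀ k).G) (cohG hA hn s₀)
    (fun k => (chain hA hn s₀ k).φ) (coh_map hA hn s₀)

end Chain

end StmtAux

namespace StmtAux

variable {n : ℕ}

section Colim

variable (hA : ConjectureA) (hn : 1 < n) (s₀ : St n)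

noncomputable def embSeqF (k : ℕ) (x : (chain hA hn s₀ k).F) (l : ℕ) :
    (chain hA hn s₀ l).F :=
  if h : k ≤ l then (chainTr hA hn s₀ h).ιF x else 0

noncomputable def embSeqG (k : ℕ) (x : (chain hA hn s₀ k).G) (l : ℕ) :
    (chain hA hn s₀ l).G :=
  if h : k ≤ l then (chainTr hA hn s₀ h).ιG x else 0

theorem embSeqF_mem (k : ℕ) (x : (chain hA hn s₀ k).F) :
    embSeqF hA hn s₀ k x ∈ cohF hA hn s₀ := by
  refine ⟨k, fun l hl => ?_⟩
  show embSeqF hA hn s₀ k x (l + 1) = (chainStep hA hn s₀ l).ιF (embSeqF hA hn s₀ k x l)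
  simp only [embSeqF, dif_pos hl, dif_pos (hl.trans (Nat.le_succ l))]
  rw [chainTr_succ hA hn s₀ hl (hl.trans (Nat.le_succ l))]
  rfl

theorem embSeqG_mem (k : ℕ) (x : (chain hA hn s₀ k).G) :
    embSeqG hA hn s₀ k x ∈ cohG hA hn s₀ := by
  refine ⟨k, fun l hl => ?_⟩
  show embSeqG hA hn s₀ k x (l + 1) = (chainStep hA hn s₀ l).ιG (embSeqG hA hn s₀ k x l)
  simp only [embSeqG, dif_pos hl, dif_pos (hl.trans (Nat.le_succ l))]
  rw [chainTr_succ hA hn s₀ hl (hl.trans (Nat.le_succ l))]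
  rfl

noncomputable def qmkF : ↥(cohF hA hn s₀) →+* colF hA hn s₀ :=
  qmk (atTop : Filter ℕ) (fun k => (chain hA hn s₀ k).F) (cohF hA hn s₀)

noncomputable def qmkG : ↥(cohG hA hn s₀) →+* colG hA hn s₀ :=
  qmk (atTop : Filter ℕ) (fun k => (chain hA hn s₀ k).G) (cohG hA hn s₀)

theorem qmkF_eq_iff {x y : ↥(cohF hA hn s₀)} :
    qmkF hA hn s₀ x = qmkF hA hn s₀ y ↔
      ∀ᶠ l in (atTop : Filter ℕ), (x : ∀ k, (chain hA hn s₀ k).F) l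
        = (y : ∀ k, (chain hA hn s₀ k).F) l :=
  qmk_eq_iff _ _ _

theorem qmkG_eq_iff {x y : ↥(cohG hA hn s₀)} :
    qmkG hA hn s₀ x = qmkG hA hn s₀ y ↔
      ∀ᶠ l in (atTop : Filter ℕ), (x : ∀ k, (chain hA hn s₀ k).G) l
        = (y : ∀ k, (chain hA hn s₀ k).G) l :=
  qmk_eq_iff _ _ _

noncomputable def embF (k : ℕ) : (chain hA hn s₀ k).F →+* colF hA hn s₀ where
  toFun x := qmkF hA hn s₀ ⟨embSeqF hA hn s₀ k x, embSeqF_mem hA hn s₀ k x⟩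
  map_one' := by
    show qmkF hA hn s₀ ⟨embSeqF hA hn s₀ k 1, embSeqF_mem hA hn s₀ k 1⟩ = 1
    rw [← map_one (qmkF hA hn s₀)]
    refine (qmkF_eq_iff hA hn s₀).mpr (eventually_atTop.mpr ⟨k, fun l hl => ?_⟩)
    simp only [embSeqF, dif_pos hl, map_one, Subring.coe_one, Pi.one_apply]
  map_mul' x y := by
    show qmkF hA hn s₀ ⟨embSeqF hA hn s₀ k (x * y), embSeqF_mem hA hn s₀ k (x * y)⟩
      = qmkF hA hn s₀ ⟨embSeqF hA hn s₀ k x, embSeqF_mem hA hn s₀ k x⟩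
        * qmkF hA hn s₀ ⟨embSeqF hA hn s₀ k y, embSeqF_mem hA hn s₀ k y⟩
    rw [← map_mul (qmkF hA hn s₀)]
    refine (qmkF_eq_iff hA hn s₀).mpr (eventually_atTop.mpr ⟨k, fun l hl => ?_⟩)
    simp only [embSeqF, Subring.coe_mul, Pi.mul_apply, dif_pos hl, map_mul]
  map_zero' := by
    show qmkF hA hn s₀ ⟨embSeqF hA hn s₀ k 0, embSeqF_mem hA hn s₀ k 0⟩ = 0
    rw [← map_zero (qmkF hA hn s₀)]
    refine (qmkF_eq_iff hA hn s₀).mpr (eventually_atTop.mpr ⟨k, fun l hl => ?_⟩)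
    simp only [embSeqF, dif_pos hl, map_zero, Subring.coe_zero, Pi.zero_apply]
  map_add' x y := by
    show qmkF hA hn s₀ ⟨embSeqF hA hn s₀ k (x + y), embSeqF_mem hA hn s₀ k (x + y)⟩
      = qmkF hA hn s₀ ⟨embSeqF hA hn s₀ k x, embSeqF_mem hA hn s₀ k x⟩
        + qmkF hA hn s₀ ⟨embSeqF hA hn s₀ k y, embSeqF_mem hA hn s₀ k y⟩
    rw [← map_add (qmkF hA hn s₀)]
    refine (qmkF_eq_iff hA hn s₀).mpr (eventually_atTop.mpr ⟨k, fun l hl => ?_⟩)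
    simp only [embSeqF, Subring.coe_add, Pi.add_apply, dif_pos hl, map_add]

noncomputable def embG (k : ℕ) : (chain hA hn s₀ k).G →+* colG hA hn s₀ where
  toFun x := qmkG hA hn s₀ ⟨embSeqG hA hn s₀ k x, embSeqG_mem hA hn s₀ k x⟩
  map_one' := by
    show qmkG hA hn s₀ ⟨embSeqG hA hn s₀ k 1, embSeqG_mem hA hn s₀ k 1⟩ = 1
    rw [← map_one (qmkG hA hn s₀)]
    refine (qmkG_eq_iff hA hn s₀).mpr (eventually_atTop.mpr ⟨k, fun l hl => ?_⟩)
    simp only [embSeqG, dif_pos hl, map_one, Subring.coe_one, Pi.one_apply]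
  map_mul' x y := by
    show qmkG hA hn s₀ ⟨embSeqG hA hn s₀ k (x * y), embSeqG_mem hA hn s₀ k (x * y)⟩
      = qmkG hA hn s₀ ⟨embSeqG hA hn s₀ k x, embSeqG_mem hA hn s₀ k x⟩
        * qmkG hA hn s₀ ⟨embSeqG hA hn s₀ k y, embSeqG_mem hA hn s₀ k y⟩
    rw [← map_mul (qmkG hA hn s₀)]
    refine (qmkG_eq_iff hA hn s₀).mpr (eventually_atTop.mpr ⟨k, fun l hl => ?_⟩)
    simp only [embSeqG, Subring.coe_mul, Pi.mul_apply, dif_pos hl, map_mul]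
  map_zero' := by
    show qmkG hA hn s₀ ⟨embSeqG hA hn s₀ k 0, embSeqG_mem hA hn s₀ k 0⟩ = 0
    rw [← map_zero (qmkG hA hn s₀)]
    refine (qmkG_eq_iff hA hn s₀).mpr (eventually_atTop.mpr ⟨k, fun l hl => ?_⟩)
    simp only [embSeqG, dif_pos hl, map_zero, Subring.coe_zero, Pi.zero_apply]
  map_add' x y := by
    show qmkG hA hn s₀ ⟨embSeqG hA hn s₀ k (x + y), embSeqG_mem hA hn s₀ k (x + y)⟩
      = qmkG hA hn s₀ ⟨embSeqG hA hn s₀ k x, embSeqG_mem hA hn s₀ k x⟩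
        + qmkG hA hn s₀ ⟨embSeqG hA hn s₀ k y, embSeqG_mem hA hn s₀ k y⟩
    rw [← map_add (qmkG hA hn s₀)]
    refine (qmkG_eq_iff hA hn s₀).mpr (eventually_atTop.mpr ⟨k, fun l hl => ?_⟩)
    simp only [embSeqG, Subring.coe_add, Pi.add_apply, dif_pos hl, map_add]

theorem Phi_emb (k : ℕ) (x : (chain hA hn s₀ k).F) (i j : Fin n) :
    colPhi hA hn s₀ (embF hA hn s₀ k x) i j
      = embG hA hn s₀ k ((chain hA hn s₀ k).φ x i j) := by
  refine Eq.trans (qPhi_mk (atTop : Filter ℕ) (fun k => (chain hA hn s₀ k).F)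
    (cohF hA hn s₀) (fun k => (chain hA hn s₀ k).G) (cohG hA hn s₀)
    (fun k => (chain hA hn s₀ k).φ) (coh_map hA hn s₀)
    ⟨embSeqF hA hn s₀ k x, embSeqF_mem hA hn s₀ k x⟩ i j) ?_
  refine (qmk_eq_iff _ _ _).mpr (eventually_atTop.mpr ⟨k, fun l hl => ?_⟩)
  show (chain hA hn s₀ l).φ (embSeqF hA hn s₀ k x l) i j
    = embSeqG hA hn s₀ k ((chain hA hn s₀ k).φ x i j) l
  simp only [embSeqF, embSeqG, dif_pos hl]
  rw [(chainTr hA hn s₀ hl).compat x]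
  simp [Matrix.map_apply]

theorem embG_tr {k l : ℕ} (h : k ≤ l) (y : (chain hA hn s₀ k).G) :
    embG hA hn s₀ l ((chainTr hA hn s₀ h).ιG y) = embG hA hn s₀ k y := by
  show qmkG hA hn s₀ _ = qmkG hA hn s₀ _
  refine (qmkG_eq_iff hA hn s₀).mpr (eventually_atTop.mpr ⟨l, fun m hm => ?_⟩)
  show embSeqG hA hn s₀ l ((chainTr hA hn s₀ h).ιG y) m = embSeqG hA hn s₀ k y m
  simp only [embSeqG, dif_pos hm, dif_pos (h.trans hm)]
  rw [← chainTr_comp hA hn s₀ h hm]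
  rfl

theorem embG_step (k : ℕ) (y : (chain hA hn s₀ k).G) :
    embG hA hn s₀ (k + 1) ((chainStep hA hn s₀ k).ιG y) = embG hA hn s₀ k y := by
  rw [show (chainStep hA hn s₀ k).ιG y = (chainTr hA hn s₀ (Nat.le_succ k)).ιG y from by
    rw [chainTr_succ_self], embG_tr]

theorem embG_rep (q : colG hA hn s₀) : ∃ k y, q = embG hA hn s₀ k y := by
  obtain ⟨x, rfl⟩ := qmk_surjective (atTop : Filter ℕ) (fun k => (chain hA hn s₀ k).G)
    (cohG hA hn s₀) q
  obtain ⟨k₀, h₀⟩ := x.2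
  refine ⟨k₀, (x : ∀ k, (chain hA hn s₀ k).G) k₀, ?_⟩
  have key : ∀ l (hl : k₀ ≤ l),
      (chainTr hA hn s₀ hl).ιG ((x : ∀ k, (chain hA hn s₀ k).G) k₀)
        = (x : ∀ k, (chain hA hn s₀ k).G) l := by
    intro l hl
    induction l, hl using Nat.le_induction with
    | base => rw [chainTr_self]; rfl
    | succ l hl ih =>
        rw [chainTr_succ hA hn s₀ hl (hl.trans (Nat.le_succ l))]
        show (chainStep hA hn s₀ l).ιG ((chainTr hA hn s₀ hl).ιG _) = _
        rw [ih, ← h₀ l hl]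
  refine ((qmkG_eq_iff hA hn s₀).mpr (eventually_atTop.mpr ⟨k₀, fun l hl => ?_⟩)).symm
  show embSeqG hA hn s₀ k₀ ((x : ∀ k, (chain hA hn s₀ k).G) k₀) l
    = (x : ∀ k, (chain hA hn s₀ k).G) l
  simp only [embSeqG, dif_pos hl]
  exact key l hl

theorem col_tight (a : ℕ) (ha : 1 ≤ a) (han : a ≤ n) : ATight ⇑(colPhi hA hn s₀) a := by
  classical
  intro g
  choose kk yy hy using fun (i j : Fin n) => embG_rep hA hn s₀ (g i j)
  set k! : ℕ := Finset.univ.sup (fun p : Fin n × Fin n => kk p.1 p.2) with hk!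
  have hk : ∀ i j, kk i j ≤ k! := fun i j =>
    Finset.le_sup (f := fun p : Fin n × Fin n => kk p.1 p.2) (Finset.mem_univ (i, j))
  set A : Matrix (Fin n) (Fin n) (chain hA hn s₀ k!).G :=
    Matrix.of fun i j => (chainTr hA hn s₀ (hk i j)).ιG (yy i j) with hA!
  have hgA : ∀ i j, g i j = embG hA hn s₀ k! (A i j) := fun i j => by
    rw [show A i j = (chainTr hA hn s₀ (hk i j)).ιG (yy i j) from rfl, embG_tr]
    exact hy i j
  have sat' : Realizes (chain hA hn s₀ (k! + 1)) a (A.map ⇑(chainStep hA hn s₀ k!).ιG) :=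
    (satExt hA hn (chain hA hn s₀ k!)).sat a ha han A
  obtain ⟨f, hf⟩ := sat'
  refine ⟨embF hA hn s₀ (k! + 1) f, fun i j hi hj => ?_⟩
  rw [Phi_emb, hf i j hi hj, Matrix.map_apply, embG_step, ← hgA i j]

end Colim

end StmtAux

namespace StmtAux

/-! ### The case `n = 1` -/

/-- Evaluation of a `1 × 1` matrix at its unique entry, as a ring hom. -/
def ev1 (G₀ : Type) [DivisionRing G₀] : Matrix (Fin 1) (Fin 1) G₀ →+* G₀ where
  toFun A := A 0 0
  map_one' := by simp [Matrix.one_apply]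
  map_mul' A B := by simp [Matrix.mul_apply]
  map_zero' := rfl
  map_add' A B := rfl

/-- The inverse: constant `1 × 1` matrices. -/
def diag1 (G₀ : Type) [DivisionRing G₀] : G₀ →+* Matrix (Fin 1) (Fin 1) G₀ where
  toFun g := Matrix.of fun _ _ => g
  map_one' := by
    ext i j
    rw [Subsingleton.elim i j]
    simp [Matrix.one_apply]
  map_mul' g h := by
    ext i j
    simp [Matrix.mul_apply]
  map_zero' := by ext i j; simp
  map_add' g h := by ext i j; simp

noncomputable def completion1 (F₀ G₀ : Type) [DivisionRing F₀] [DivisionRing G₀]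
    (φ₀ : F₀ →+* Matrix (Fin 1) (Fin 1) G₀) : TightCompletion 1 F₀ G₀ φ₀ where
  F := G₀
  G := G₀
  ιF := (ev1 G₀).comp φ₀
  ιG := RingHom.id G₀
  injF := ringHom_injective _
  injG := fun a b h => h
  φ := diag1 G₀
  injφ := ringHom_injective _
  compat x := by
    ext i j
    rw [Subsingleton.elim i (0 : Fin 1), Subsingleton.elim j (0 : Fin 1)]
    simp [Matrix.map_apply, diag1, ev1]
    rfl
  tight a ha han g := by
    have haeq : a = 1 := le_antisymm han ha
    subst haeq
    refine ⟨ev1 G₀ g, fun i j hi hj => ?_⟩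
    rw [Subsingleton.elim i (0 : Fin 1), Subsingleton.elim j (0 : Fin 1)]
    rfl

/-! ### The main construction for `n > 1` -/

noncomputable def mkCompletion {n : ℕ} (hA : ConjectureA) (hn : 1 < n) (F₀ G₀ : Type)
    [DivisionRing F₀] [DivisionRing G₀] (φ₀ : F₀ →+* Matrix (Fin n) (Fin n) G₀) :
    TightCompletion n F₀ G₀ φ₀ :=
  letI s₀ : St n := ⟨F₀, G₀, φ₀⟩
  haveI : Nonempty (Fin n) := Fin.pos_iff_nonempty.mp (by omega)
  { F := colF hA hn s₀
    G := colG hA hn s₀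
    ιF := embF hA hn s₀ 0
    ιG := embG hA hn s₀ 0
    injF := ringHom_injective _
    injG := ringHom_injective _
    φ := colPhi hA hn s₀
    injφ := ringHom_injective _
    compat := fun x => by
      ext i j
      rw [Matrix.map_apply]
      exact Phi_emb hA hn s₀ 0 x i j
    tight := fun a ha han => col_tight hA hn s₀ a ha han }

end StmtAux

/-- Assuming Conjecture A, every ring homomorphism from a division ring `F₀` to `Mₙ(G₀)`
(`G₀` a division ring) extends to a tight embedding `F → Mₙ(G)`; in particular, tight
embeddings exist for every positive `n`. -/
theorem stmt4 (hA : ConjectureA) :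
    (∀ (n : ℕ), 1 ≤ n → ∀ (F₀ G₀ : Type) [DivisionRing F₀] [DivisionRing G₀],
      ∀ φ₀ : F₀ →+* Matrix (Fin n) (Fin n) G₀, Nonempty (TightCompletion n F₀ G₀ φ₀)) ∧
    (∀ n : ℕ, 1 ≤ n → Nonempty (TightPair n)) := by
  have part1 : ∀ (n : ℕ), 1 ≤ n → ∀ (F₀ G₀ : Type) [DivisionRing F₀] [DivisionRing G₀],
      ∀ φ₀ : F₀ →+* Matrix (Fin n) (Fin n) G₀, Nonempty (TightCompletion n F₀ G₀ φ₀) := by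
    intro n hn F₀ G₀ _ _ φ₀
    rcases eq_or_lt_of_le hn with h1 | h1
    · subst h1
      exact ⟨StmtAux.completion1 F₀ G₀ φ₀⟩
    · exact ⟨StmtAux.mkCompletion hA h1 F₀ G₀ φ₀⟩
  refine ⟨part1, ?_⟩
  intro n hn
  obtain ⟨tc⟩ := part1 n hn ℚ ℚ (Matrix.scalar (Fin n))
  letI := tc.instF
  letI := tc.instG
  exact ⟨⟨tc.F, tc.G, tc.φ, tc.injφ, tc.tight⟩⟩
end

section
/- Let F be a division ring, G a division subring of F, and (f_i)_{i∈ℕ} a sequence in F with f_0 = 1 satisfying axioms (T4), (T5), (T6). Then for every k ≥ 1 and every f ∈ F there exist a ∈ L_{k−1} and s ∈ S_{k−1} with f = a + f_k·s. -/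
section Aux

variable {F : Type*} [DivisionRing F] (G : Subring F) (f : ℕ → F)

lemma lset_zero (k : ℕ) : (0 : F) ∈ Lset G f k :=
  ⟨fun _ => 0, fun _ => G.zero_mem, by simp⟩

lemma lset_add {k : ℕ} {x y : F} (hx : x ∈ Lset G f k) (hy : y ∈ Lset G f k) :
    x + y ∈ Lset G f k := by
  obtain ⟨c, hc, rfl⟩ := hx; obtain ⟨d, hd, rfl⟩ := hy
  refine ⟨fun i => c i + d i, fun i => G.add_mem (hc i) (hd i), ?_⟩
  rw [← Finset.sum_add_distrib]
  exact Finset.sum_congr rfl fun i _ => by rw [add_mul]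

lemma lset_sub {k : ℕ} {x y : F} (hx : x ∈ Lset G f k) (hy : y ∈ Lset G f k) :
    x - y ∈ Lset G f k := by
  obtain ⟨c, hc, rfl⟩ := hx; obtain ⟨d, hd, rfl⟩ := hy
  refine ⟨fun i => c i - d i, fun i => G.sub_mem (hc i) (hd i), ?_⟩
  rw [← Finset.sum_sub_distrib]
  exact Finset.sum_congr rfl fun i _ => by rw [sub_mul]

lemma lset_gmul {k : ℕ} {g x : F} (hg : g ∈ G) (hx : x ∈ Lset G f k) :
    g * x ∈ Lset G f k := by
  obtain ⟨c, hc, rfl⟩ := hx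
  refine ⟨fun i => g * c i, fun i => G.mul_mem hg (hc i), ?_⟩
  rw [Finset.mul_sum]
  exact Finset.sum_congr rfl fun i _ => by rw [mul_assoc]

lemma f_mem_lset {k i : ℕ} (h : i ≤ k) : f i ∈ Lset G f k := by
  refine ⟨fun j => if j = i then 1 else 0,
    fun j => by dsimp only; split <;> simp [G.one_mem, G.zero_mem], ?_⟩
  rw [Finset.sum_eq_single_of_mem i (Finset.mem_range.mpr (by omega))
    (fun j _ hj => by simp [hj])]
  simp

lemma lset_mono {k : ℕ} {x : F} (hx : x ∈ Lset G f k) : x ∈ Lset G f (k + 1) := by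
  obtain ⟨c, hc, rfl⟩ := hx
  refine ⟨fun i => if i ≤ k then c i else 0,
    fun i => by dsimp only; split; exacts [hc i, G.zero_mem], ?_⟩
  have step1 : ∑ i ∈ Finset.range (k + 1), c i * f i
      = ∑ i ∈ Finset.range (k + 1), (if i ≤ k then c i else 0) * f i := by
    refine Finset.sum_congr rfl fun i hi => ?_
    rw [if_pos (Nat.lt_succ_iff.mp (Finset.mem_range.mp hi))]
  have step2 : ∑ i ∈ Finset.range (k + 1), (if i ≤ k then c i else 0) * f i
      = ∑ i ∈ Finset.range (k + 1 + 1), (if i ≤ k then c i else 0) * f i := by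
    refine Finset.sum_subset (Finset.range_subset_range.mpr (by omega)) fun i hi hi' => ?_
    simp only [Finset.mem_range] at hi hi'
    rw [if_neg (by omega), zero_mul]
  exact step1.trans step2

lemma sset_mul {k : ℕ} {s t : F} (hs : s ∈ Sset G f k) (ht : t ∈ Sset G f k) :
    s * t ∈ Sset G f k := fun x hx => by
  rw [← mul_assoc]; exact ht _ (hs _ hx)

lemma sset_inv (hG : ∀ x ∈ G, x⁻¹ ∈ G) {k : ℕ} {t : F}
    (ht : t ∈ Sset G f k) (ht0 : t ≠ 0) : t⁻¹ ∈ Sset G f k := by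
  intro x hx
  set K : Subfield F := { G with inv_mem' := hG } with hK
  set V : Submodule K F := Submodule.span K (f '' Set.Iic k) with hV
  have hVL : ∀ y : F, y ∈ V ↔ y ∈ Lset G f k := by
    intro y
    constructor
    · intro hy
      refine Submodule.span_induction ?_ ?_ ?_ ?_ hy
      · rintro z ⟨i, hi, rfl⟩; exact f_mem_lset G f hi
      · exact lset_zero G f k
      · intro a b _ _ ha hb; exact lset_add G f ha hb
      · intro g a _ ha; exact lset_gmul G f g.2 ha
    · rintro ⟨c, hc, rfl⟩
      refine Submodule.sum_mem _ fun i hi => ?_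
      have h1 : c i * f i = (⟨c i, hc i⟩ : K) • f i := rfl
      rw [h1]
      exact Submodule.smul_mem _ _
        (Submodule.subset_span ⟨i, Nat.lt_succ_iff.mp (Finset.mem_range.mp hi), rfl⟩)
  haveI : FiniteDimensional K V := FiniteDimensional.span_of_finite K ((Set.finite_Iic k).image f)
  let ρ : V →ₗ[K] V :=
    { toFun := fun w => ⟨(w : F) * t, (hVL _).mpr (ht _ ((hVL _).mp w.2))⟩
      map_add' := fun a b => Subtype.ext (add_mul (a : F) (b : F) t)
      map_smul' := fun g w => Subtype.ext (mul_assoc (g : F) (w : F) t) }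
  have hinj : Function.Injective ρ := by
    intro a b hab
    have h2 : (a : F) * t = (b : F) * t := congrArg Subtype.val hab
    exact Subtype.ext (mul_right_cancel₀ ht0 h2)
  obtain ⟨w, hw⟩ := (LinearMap.injective_iff_surjective).mp hinj ⟨x, (hVL x).mpr hx⟩
  have hw' : (w : F) * t = x := congrArg Subtype.val hw
  have h3 : x * t⁻¹ = (w : F) := by rw [← hw', mul_assoc, mul_inv_cancel₀ ht0, mul_one]
  rw [h3]; exact (hVL _).mp w.2

lemma f_notMem_lset
    (T5 : ∀ c : ℕ → F, (∀ i, c i ∈ G) →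
      ∀ m : ℕ, ∑ i ∈ Finset.range m, c i * f i = 0 → ∀ i < m, c i = 0)
    (k : ℕ) : f (k + 1) ∉ Lset G f k := by
  rintro ⟨c, hc, hfc⟩
  have h1 : ∑ i ∈ Finset.range (k + 1), (if i = k + 1 then (-1 : F) else c i) * f i
      = ∑ i ∈ Finset.range (k + 1), c i * f i :=
    Finset.sum_congr rfl fun i hi =>
      by rw [if_neg (by have := Finset.mem_range.mp hi; omega)]
  have h0 : ∑ i ∈ Finset.range (k + 2), (if i = k + 1 then (-1 : F) else c i) * f i
      = 0 := by
    rw [show (k + 2) = (k + 1) + 1 from rfl,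
      Finset.sum_range_succ (fun i => (if i = k + 1 then (-1 : F) else c i) * f i) (k + 1), h1,
      ← hfc]
    simp
  have hmem : ∀ i, (if i = k + 1 then (-1 : F) else c i) ∈ G := fun i => by
    split
    · exact G.neg_mem G.one_mem
    · exact hc i
  have h2 := T5 (fun i => if i = k + 1 then (-1 : F) else c i) hmem (k + 2) h0 (k + 1) (by omega)
  simp at h2

lemma g_mem_lset0 (hf0 : f 0 = 1) {a : F} (ha : a ∈ G) : a ∈ Lset G f 0 :=
  ⟨fun _ => a, fun _ => ha, by simp [hf0]⟩

lemma g_mem_sset0 (hf0 : f 0 = 1) {b : F} (hb : b ∈ G) : b ∈ Sset G f 0 := by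
  rintro x ⟨c, hc, rfl⟩
  exact ⟨fun _ => c 0 * b, fun _ => G.mul_mem (hc 0) hb, by simp [hf0]⟩

end Aux

theorem stmt9 {F : Type*} [DivisionRing F]
    (G : Subring F) (hG : ∀ x ∈ G, x⁻¹ ∈ G)
    (f : ℕ → F) (hf0 : f 0 = 1)
    -- (T4)
    (T4 : ∀ x : F, ∃ a ∈ G, ∃ b ∈ G, x = a + f 1 * b)
    -- (T5)
    (T5 : ∀ c : ℕ → F, (∀ i, c i ∈ G) →
      ∀ m : ℕ, ∑ i ∈ Finset.range m, c i * f i = 0 → ∀ i < m, c i = 0)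
    -- (T6)
    (T6 : ∀ k : ℕ, 1 ≤ k → ∃ b ∈ Dset G f k,
      ∀ x ∈ Dset G f k, ∃ s ∈ Sset G f k, ∃ t ∈ Sset G f k, x = s + b * t) :
    ∀ k : ℕ, 1 ≤ k → ∀ x : F,
      ∃ a ∈ Lset G f (k - 1), ∃ s ∈ Sset G f (k - 1), x = a + f k * s := by
  have sset_dset : ∀ k : ℕ, ∀ r ∈ Sset G f k, r ∈ Dset G f (k + 1) :=
    fun k r hr x hx => lset_mono G f (hr x hx)
  have main : ∀ k : ℕ, ∀ x : F, ∃ a ∈ Lset G f k, ∃ s ∈ Sset G f k, x = a + f (k + 1) * s := by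
    intro k
    induction k with
    | zero =>
      intro x
      obtain ⟨a, ha, b, hb, hx⟩ := T4 x
      exact ⟨a, g_mem_lset0 G f hf0 ha, b, g_mem_sset0 G f hf0 hb, hx⟩
    | succ k ih =>
      obtain ⟨b, hbD, hb⟩ := T6 (k + 1) (Nat.le_add_left 1 k)
      have claimA : ∀ x : F, ∃ a ∈ Lset G f (k + 1), ∃ t ∈ Sset G f (k + 1),
          x = a + (f (k + 1) * b) * t := by
        intro x
        obtain ⟨m, hm, r, hr, hx⟩ := ih x
        obtain ⟨s, hs, t, ht, hrst⟩ := hb r (sset_dset k r hr)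
        refine ⟨m + f (k + 1) * s,
          lset_add G f (lset_mono G f hm) (hs _ (f_mem_lset G f (le_refl (k + 1)))), t, ht, ?_⟩
        rw [hx, hrst]
        noncomm_ring
      obtain ⟨l0, hl0, t0, ht0, hkey⟩ := claimA (f (k + 2))
      have ht00 : t0 ≠ 0 := by
        rintro rfl
        rw [mul_zero, add_zero] at hkey
        exact f_notMem_lset G f T5 (k + 1) (by rw [hkey]; exact hl0)
      have hfb : f (k + 1) * b = (f (k + 2) - l0) * t0⁻¹ := by
        rw [hkey, add_sub_cancel_left, mul_assoc, mul_inv_cancel₀ ht00, mul_one]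
      intro x
      obtain ⟨a, ha, t, ht, hx⟩ := claimA x
      have hti : t0⁻¹ ∈ Sset G f (k + 1) := sset_inv G f hG ht0 ht00
      refine ⟨a - l0 * (t0⁻¹ * t),
        lset_sub G f ha ((sset_mul G f hti ht) l0 hl0), t0⁻¹ * t, sset_mul G f hti ht, ?_⟩
      rw [hx, hfb]
      noncomm_ring
  intro k hk x
  obtain ⟨a, ha, s, hs, hx⟩ := main (k - 1) x
  have hk1 : k - 1 + 1 = k := by omega
  exact ⟨a, ha, s, hs, by rwa [hk1] at hx⟩
end

section
/- Let F be a division ring, G a division subring of F, and (f_i)_{i∈ℕ} a sequence in F with f_0 = 1 satisfying axioms (T4), (T5), (T6). Then for every k ≥ 0 and every left G-subspace H of F with dim_G H = k + 1 there exists a ∈ F with L_k·a = H. -/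
/-- The left `G`-span of a finite family of elements of `F`. -/
def GSpan {F : Type*} [DivisionRing F] (G : Subring F) {m : ℕ} (h : Fin m → F) : Set F :=
  {x | ∃ c : Fin m → F, (∀ i, c i ∈ G) ∧ x = ∑ i, c i * h i}

section St11Aux

open Module Submodule

variable {F : Type*} [DivisionRing F] (G : Subring F) (f : ℕ → F)

/-- The division ring structure on a division subring. -/
@[reducible] noncomputable def st11dr (hG : ∀ x ∈ G, x⁻¹ ∈ G) : DivisionRing ↥G :=
  { (inferInstance : Ring ↥G) with
    inv := fun a => ⟨(↑a)⁻¹, hG _ a.2⟩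
    mul_inv_cancel := fun a ha => Subtype.ext (mul_inv_cancel₀ (fun h => ha (Subtype.ext h)))
    inv_zero := Subtype.ext inv_zero
    nnqsmul := _
    qsmul := _ }

/-- Right multiplication as a left-linear map. -/
def st11mu (a : F) : F →ₗ[↥G] F where
  toFun := fun x => x * a
  map_add' := fun x y => add_mul x y a
  map_smul' := by intro c x; simp [Subring.smul_def, mul_assoc]

lemma st11mu_apply (a x : F) : st11mu G a x = x * a := rfl

lemma st11mu_inj (a : F) (ha : a ≠ 0) : Function.Injective (st11mu G a) := by
  intro x y hxy
  exact mul_right_cancel₀ ha (hxy : x * a = y * a)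

/-- `L_k` as a submodule. -/
def Lsub (k : ℕ) : Submodule ↥G F :=
  Submodule.span ↥G (Set.range fun i : Fin (k + 1) => f i)

lemma st11span {m : ℕ} (v : Fin m → F) :
    GSpan G v = ↑(Submodule.span ↥G (Set.range v)) := by
  ext x
  simp only [GSpan, Set.mem_setOf_eq, SetLike.mem_coe, mem_span_range_iff_exists_fun]
  constructor
  · rintro ⟨c, hc, rfl⟩
    exact ⟨fun i => ⟨c i, hc i⟩, by simp [Subring.smul_def]⟩
  · rintro ⟨c, rfl⟩
    exact ⟨fun i => ↑(c i), fun i => (c i).2, by simp [Subring.smul_def]⟩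

lemma st11LsetGSpan (k : ℕ) :
    Lset G f k = GSpan G (fun i : Fin (k + 1) => f i) := by
  ext x
  constructor
  · rintro ⟨c, hc, rfl⟩
    exact ⟨fun i => c i, fun i => hc i,
      by rw [Fin.sum_univ_eq_sum_range (fun i => c i * f i)]⟩
  · rintro ⟨c, hc, rfl⟩
    refine ⟨fun i => if h : i < k + 1 then c ⟨i, h⟩ else 0, fun i => ?_, ?_⟩
    · by_cases h : i < k + 1
      · simp only [dif_pos h]; exact hc _
      · simp only [dif_neg h]; exact G.zero_mem
    · rw [← Fin.sum_univ_eq_sum_range (fun i => (if h : i < k + 1 then c ⟨i, h⟩ else 0) * f i)]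
      apply Finset.sum_congr rfl
      intro i _
      simp [i.isLt]

lemma st11Lset (k : ℕ) : Lset G f k = ↑(Lsub G f k) := by
  rw [st11LsetGSpan, st11span]; rfl

lemma st11memIff (k : ℕ) (x : F) : x ∈ Lset G f k ↔ x ∈ Lsub G f k := by
  rw [st11Lset]; rfl

lemma st11mono (k : ℕ) : Lsub G f k ≤ Lsub G f (k + 1) := by
  apply Submodule.span_mono
  rintro x ⟨i, rfl⟩
  exact ⟨⟨i, by omega⟩, rfl⟩

lemma st11LsetMono (k : ℕ) (x : F) (hx : x ∈ Lset G f k) : x ∈ Lset G f (k + 1) := by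
  rw [st11memIff] at hx ⊢
  exact st11mono G f k hx

lemma st11fmem (k j : ℕ) (h : j ≤ k) : f j ∈ Lsub G f k :=
  Submodule.subset_span ⟨⟨j, by omega⟩, rfl⟩

variable (T5 : ∀ c : ℕ → F, (∀ i, c i ∈ G) →
      ∀ m : ℕ, ∑ i ∈ Finset.range m, c i * f i = 0 → ∀ i < m, c i = 0)

include T5 in
lemma st11indep (k : ℕ) : LinearIndependent ↥G (fun i : Fin (k + 1) => f i) := by
  rw [Fintype.linearIndependent_iff]
  intro c hc
  have hmem : ∀ i : ℕ, (if h : i < k + 1 then (c ⟨i, h⟩ : F) else 0) ∈ G := by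
    intro i
    by_cases h : i < k + 1
    · simp only [dif_pos h]; exact (c ⟨i, h⟩).2
    · simp only [dif_neg h]; exact G.zero_mem
  have hsum : ∑ i ∈ Finset.range (k + 1),
      (if h : i < k + 1 then (c ⟨i, h⟩ : F) else 0) * f i = 0 := by
    rw [← Fin.sum_univ_eq_sum_range
      (fun i => (if h : i < k + 1 then (c ⟨i, h⟩ : F) else 0) * f i), ← hc]
    exact Finset.sum_congr rfl (fun i _ => by simp [i.isLt, Subring.smul_def])
  have h := T5 _ hmem (k + 1) hsum
  intro i
  have h2 := h i i.isLt
  rw [dif_pos i.isLt] at h2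
  exact Subtype.ext (by simpa using h2)

include T5 in
lemma st11indepShift (k : ℕ) : LinearIndependent ↥G (fun i : Fin (k + 1) => f (i + 1)) := by
  rw [Fintype.linearIndependent_iff]
  intro c hc
  set cc : ℕ → F := fun j => if h : 1 ≤ j ∧ j - 1 < k + 1 then (c ⟨j - 1, h.2⟩ : F) else 0 with hcc
  have hmem : ∀ i : ℕ, cc i ∈ G := by
    intro i
    by_cases h : 1 ≤ i ∧ i - 1 < k + 1
    · simp only [hcc, dif_pos h]; exact (c _).2
    · simp only [hcc, dif_neg h]; exact G.zero_mem
  have hsum : ∑ i ∈ Finset.range (k + 2), cc i * f i = 0 := by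
    rw [Finset.sum_range_succ']
    have h0 : cc 0 = 0 := by simp [hcc]
    rw [h0, zero_mul, add_zero,
      ← Fin.sum_univ_eq_sum_range (fun i => cc (i + 1) * f (i + 1)), ← hc]
    apply Finset.sum_congr rfl
    intro i _
    have hi : 1 ≤ (i : ℕ) + 1 ∧ (i : ℕ) + 1 - 1 < k + 1 := by
      exact ⟨by omega, by simpa using i.isLt⟩
    simp only [hcc, dif_pos hi, Subring.smul_def]
    congr 1
  have h := T5 _ hmem (k + 2) hsum
  intro i
  have h2 := h ((i : ℕ) + 1) (by omega)
  have hi : 1 ≤ (i : ℕ) + 1 ∧ (i : ℕ) + 1 - 1 < k + 1 := ⟨by omega, by simpa using i.isLt⟩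
  rw [hcc] at h2
  simp only [dif_pos hi] at h2
  exact Subtype.ext (by simpa using h2)

include T5 in
lemma st11notmem (k : ℕ) : f (k + 1) ∉ Lsub G f k := by
  intro hmem
  rw [Lsub, mem_span_range_iff_exists_fun] at hmem
  obtain ⟨c, hc⟩ := hmem
  set cc : ℕ → F := fun j => if h : j < k + 1 then (c ⟨j, h⟩ : F) else if j = k + 1 then -1 else 0
    with hcc
  have hmem : ∀ i : ℕ, cc i ∈ G := by
    intro i
    rcases lt_trichotomy i (k + 1) with h | h | h
    · simp only [hcc, dif_pos h]; exact (c _).2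
    · simp only [hcc, dif_neg (by omega : ¬ i < k + 1), if_pos h]
      exact G.neg_mem G.one_mem
    · simp only [hcc, dif_neg (by omega : ¬ i < k + 1), if_neg (by omega : ¬ i = k + 1)]
      exact G.zero_mem
  have hsum : ∑ i ∈ Finset.range (k + 2), cc i * f i = 0 := by
    rw [Finset.sum_range_succ]
    have h1 : cc (k + 1) = -1 := by simp [hcc]
    have h2 : ∑ i ∈ Finset.range (k + 1), cc i * f i = f (k + 1) := by
      rw [← Fin.sum_univ_eq_sum_range (fun i => cc i * f i), ← hc]
      apply Finset.sum_congr rfl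
      intro i _
      simp only [hcc, dif_pos i.isLt, Fin.eta]
      rfl
    rw [h1, h2]
    simp
  have := T5 _ hmem (k + 2) hsum (k + 1) (by omega)
  rw [hcc] at this
  simp only [dif_neg (by omega : ¬ k + 1 < k + 1), if_pos rfl] at this
  simp at this

variable (hG : ∀ x ∈ G, x⁻¹ ∈ G)

include hG T5 in
lemma st11finrank (k : ℕ) : finrank ↥G (Lsub G f k) = k + 1 := by
  letI := st11dr G hG
  exact (finrank_span_eq_card (st11indep G f T5 k)).trans (Fintype.card_fin _)

include hG in
lemma st11fd (k : ℕ) : Module.Finite ↥G (Lsub G f k) := by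
  letI := st11dr G hG
  exact FiniteDimensional.span_of_finite _ (Set.finite_range _)

lemma st11mapRank (W : Submodule ↥G F) (a : F) (ha : a ≠ 0) :
    finrank ↥G (W.map (st11mu G a)) = finrank ↥G W := (LinearEquiv.finrank_eq (Submodule.equivMapOfInjective _ (st11mu_inj G a ha) W)).symm

include hG in
lemma st11eqOf (W W' : Submodule ↥G F) (hfd : Module.Finite ↥G W')
    (hle : W ≤ W') (hr : finrank ↥G W' ≤ finrank ↥G W) : W = W' := by
  letI := st11dr G hG
  exact Submodule.eq_of_le_of_finrank_le hle hr

include hG in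
lemma st11Sinv (k : ℕ) (s : F) (hs : s ∈ Sset G f k) (hs0 : s ≠ 0) :
    s⁻¹ ∈ Sset G f k := by
  have hle : (Lsub G f k).map (st11mu G s) ≤ Lsub G f k := by
    rintro _ ⟨x, hx, rfl⟩
    rw [st11mu_apply, ← st11memIff]
    exact hs x ((st11memIff G f k x).mpr hx)
  have heq : (Lsub G f k).map (st11mu G s) = Lsub G f k :=
    st11eqOf G hG _ _ (st11fd G f hG k) hle (le_of_eq (st11mapRank G _ s hs0).symm)
  intro x hx
  rw [st11memIff] at hx ⊢
  rw [← heq] at hx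
  obtain ⟨z, hz, hzx⟩ := hx
  rw [st11mu_apply] at hzx
  have : x * s⁻¹ = z := by rw [← hzx, mul_assoc, mul_inv_cancel₀ hs0, mul_one]
  rwa [this]

lemma st11Smul (k : ℕ) (s t : F) (hs : s ∈ Sset G f k) (ht : t ∈ Sset G f k) :
    s * t ∈ Sset G f k := fun x hx => by
  rw [← mul_assoc]; exact ht _ (hs x hx)

lemma st11Ssub (k : ℕ) (s t : F) (hs : s ∈ Sset G f k) (ht : t ∈ Sset G f k) :
    s - t ∈ Sset G f k := fun x hx => by
  rw [mul_sub, st11memIff]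
  exact Submodule.sub_mem _ ((st11memIff G f k _).mp (hs x hx))
    ((st11memIff G f k _).mp (ht x hx))

lemma st11SD (k : ℕ) (s : F) (hs : s ∈ Sset G f k) : s ∈ Dset G f (k + 1) :=
  fun x hx => st11LsetMono G f k _ (hs x hx)

lemma st11Lset0 (hf0 : f 0 = 1) : Lset G f 0 = ↑G := by
  ext x
  constructor
  · rintro ⟨c, hc, rfl⟩
    simpa [hf0] using G.mul_mem (hc 0) G.one_mem
  · intro hx
    exact ⟨fun _ => x, fun _ => hx, by simp [hf0]⟩

end St11Aux
section St11Main

open Module Submodule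

variable {F : Type*} [DivisionRing F]

lemma st11Dmem (G : Subring F) (f : ℕ → F) (k : ℕ) (a : F) :
    a ∈ Dset G f (k + 1) ↔ ∀ x ∈ Lset G f k, x * a ∈ Lset G f (k + 1) := Iff.rfl

lemma st11A (G : Subring F) (hG : ∀ x ∈ G, x⁻¹ ∈ G) (f : ℕ → F) (hf0 : f 0 = 1)
    (T4 : ∀ x : F, ∃ a ∈ G, ∃ b ∈ G, x = a + f 1 * b)
    (T5 : ∀ c : ℕ → F, (∀ i, c i ∈ G) →
      ∀ m : ℕ, ∑ i ∈ Finset.range m, c i * f i = 0 → ∀ i < m, c i = 0)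
    (T6 : ∀ k : ℕ, 1 ≤ k → ∃ b ∈ Dset G f k,
      ∀ x ∈ Dset G f k, ∃ s ∈ Sset G f k, ∃ t ∈ Sset G f k, x = s + b * t) :
    ∀ k : ℕ,
      (∀ h : Fin (k + 1) → F, LinearIndependent ↥G h →
        ∃ a : F, a ≠ 0 ∧ (Lsub G f k).map (st11mu G a) = Submodule.span ↥G (Set.range h)) ∧
      (∀ x y : F, x ∉ Lsub G f k → y ∉ Lsub G f k →
        ∃ t ∈ Sset G f k, x - y * t ∈ Lsub G f k) := by
  have hG0 : ∀ z : F, z ∈ G → z ∈ Lsub G f 0 := fun z hz =>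
    (st11memIff G f 0 z).mp (by rw [st11Lset0 G f hf0]; exact hz)
  letI := st11dr G hG
  intro k
  induction k with
  | zero =>
    constructor
    · intro h hind
      have h0 : h 0 ≠ 0 := hind.ne_zero 0
      refine ⟨h 0, h0, ?_⟩
      rw [Lsub, Submodule.map_span]
      congr 1
      ext z
      simp only [Set.mem_image, Set.mem_range]
      constructor
      · rintro ⟨_, ⟨i, rfl⟩, rfl⟩
        refine ⟨0, ?_⟩
        have hi : (i : ℕ) = 0 := by omega
        rw [st11mu_apply, hi, hf0, one_mul]
      · rintro ⟨i, rfl⟩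
        refine ⟨f 0, ⟨0, rfl⟩, ?_⟩
        have hi : i = 0 := Fin.fin_one_eq_zero i
        rw [st11mu_apply, hf0, one_mul, hi]
    · intro x y hx hy
      obtain ⟨a, haG, b, hbG, hxab⟩ := T4 x
      obtain ⟨a', ha'G, b', hb'G, hyab⟩ := T4 y
      have hb'0 : b' ≠ 0 := by
        rintro rfl
        apply hy
        apply hG0
        rw [hyab, mul_zero, add_zero]
        exact ha'G
      have htG : b'⁻¹ * b ∈ G := G.mul_mem (hG _ hb'G) hbG
      refine ⟨b'⁻¹ * b, ?_, ?_⟩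
      · intro z hz
        rw [st11Lset0 G f hf0] at hz ⊢
        exact G.mul_mem hz htG
      · rw [← st11memIff, st11Lset0 G f hf0]
        have hbb : b' * (b'⁻¹ * b) = b := by
          rw [← mul_assoc, mul_inv_cancel₀ hb'0, one_mul]
        have hkey : x - y * (b'⁻¹ * b) = a - a' * (b'⁻¹ * b) := by
          rw [hxab, hyab, add_mul, mul_assoc, hbb]
          abel
        rw [hkey]
        exact G.sub_mem haG (G.mul_mem ha'G htG)
  | succ n ih =>
    obtain ⟨An, KEYn⟩ := ih
    obtain ⟨v, hv0, hvmap⟩ := An (fun i : Fin (n + 1) => f ((i : ℕ) + 1)) (st11indepShift G f T5 n)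
    have hYle : Submodule.span ↥G (Set.range fun i : Fin (n + 1) => f ((i : ℕ) + 1)) ≤
        Lsub G f (n + 1) := by
      apply Submodule.span_le.mpr
      rintro x ⟨i, rfl⟩
      exact Submodule.subset_span ⟨⟨(i : ℕ) + 1, by omega⟩, rfl⟩
    have hvD : ∀ x ∈ Lset G f n, x * v ∈ Lset G f (n + 1) := by
      intro x hx
      rw [st11memIff] at hx ⊢
      apply hYle
      rw [← hvmap]
      exact ⟨x, hx, rfl⟩
    have hvS : v ∉ Sset G f n := by
      intro hS
      have hf1 : f (n + 1) ∈ Submodule.span ↥G (Set.range fun i : Fin (n + 1) => f ((i : ℕ) + 1)) :=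
        Submodule.subset_span ⟨⟨n, by omega⟩, rfl⟩
      rw [← hvmap] at hf1
      obtain ⟨x, hx, hxv⟩ := hf1
      rw [st11mu_apply] at hxv
      have hmem := hS x ((st11memIff G f n x).mpr hx)
      rw [hxv] at hmem
      exact st11notmem G f T5 n ((st11memIff G f n _).mp hmem)
    have STAR : ∀ e : F, e ∉ Lsub G f n → ∃ w : F, w ≠ 0 ∧
        (∀ x ∈ Lset G f n, x * w ∈ Lset G f (n + 1)) ∧ e * w ∈ Lsub G f (n + 1) := by
      intro e he
      by_cases h1 : e ∈ Lsub G f (n + 1)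
      · exact ⟨1, one_ne_zero, fun x hx => by rw [mul_one]; exact st11LsetMono G f n x hx,
          by rwa [mul_one]⟩
      by_cases h2 : e * v ∈ Lsub G f (n + 1)
      · exact ⟨v, hv0, hvD, h2⟩
      · have hev : e * v ∉ Lsub G f n := fun hh => h2 (st11mono G f n hh)
        obtain ⟨t, htS, ht⟩ := KEYn (e * v) e hev he
        refine ⟨v - t, ?_, ?_, ?_⟩
        · intro h0
          rw [sub_eq_zero] at h0
          exact hvS (h0 ▸ htS)
        · intro x hx
          rw [mul_sub, st11memIff]
          exact Submodule.sub_mem _ ((st11memIff G f (n + 1) _).mp (hvD x hx))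
            ((st11memIff G f (n + 1) _).mp (st11LsetMono G f n _ (htS x hx)))
        · rw [mul_sub]
          exact st11mono G f n ht
    constructor
    · -- A (n+1)
      intro h hind
      have hsnoc : LinearIndependent ↥G (Fin.snoc (Fin.init h) (h (Fin.last (n + 1)))) := by
        rw [Fin.snoc_init_self]; exact hind
      rw [linearIndependent_fin_snoc] at hsnoc
      obtain ⟨hinit, hlast⟩ := hsnoc
      obtain ⟨v0, hv00, hv0map⟩ := An (Fin.init h) hinit
      have helast : (h (Fin.last (n + 1)) * v0⁻¹) * v0 = h (Fin.last (n + 1)) := by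
        rw [mul_assoc, inv_mul_cancel₀ hv00, mul_one]
      have he : h (Fin.last (n + 1)) * v0⁻¹ ∉ Lsub G f n := by
        intro hmem
        apply hlast
        rw [← helast, ← hv0map]
        exact ⟨_, hmem, rfl⟩
      obtain ⟨w, hw0, hwD, hwe⟩ := STAR _ he
      have ha0 : w⁻¹ * v0 ≠ 0 := mul_ne_zero (inv_ne_zero hw0) hv00
      refine ⟨w⁻¹ * v0, ha0, ?_⟩
      have hle : Submodule.span ↥G (Set.range h) ≤ (Lsub G f (n + 1)).map (st11mu G (w⁻¹ * v0)) := by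
        rw [Submodule.span_le]
        rintro _ ⟨i, rfl⟩
        induction i using Fin.lastCases with
        | last =>
          refine ⟨h (Fin.last (n + 1)) * v0⁻¹ * w, hwe, ?_⟩
          rw [st11mu_apply, mul_assoc, ← mul_assoc w, mul_inv_cancel₀ hw0, one_mul, helast]
        | cast j =>
          have hj : h (Fin.castSucc j) ∈ (Lsub G f n).map (st11mu G v0) := by
            rw [hv0map]; exact Submodule.subset_span ⟨j, rfl⟩
          obtain ⟨x, hx, hxv⟩ := hj
          rw [st11mu_apply] at hxv
          refine ⟨x * w,
            (st11memIff G f (n + 1) _).mp (hwD x ((st11memIff G f n x).mpr hx)), ?_⟩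
          rw [st11mu_apply, mul_assoc, ← mul_assoc w, mul_inv_cancel₀ hw0, one_mul, hxv]
      haveI hfd1 := st11fd G f hG (n + 1)
      haveI hfd2 : Module.Finite ↥G ((Lsub G f (n + 1)).map (st11mu G (w⁻¹ * v0))) :=
        Module.Finite.map _ _
      have hr1 : finrank ↥G ((Lsub G f (n + 1)).map (st11mu G (w⁻¹ * v0))) = n + 2 := by
        rw [st11mapRank G _ _ ha0]
        exact st11finrank G f T5 hG (n + 1)
      have hr2 : finrank ↥G (Submodule.span ↥G (Set.range h)) = n + 2 := by
        letI := st11dr G hG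
        simpa using finrank_span_eq_card hind
      exact (st11eqOf G hG _ _ hfd2 hle (by rw [hr1, hr2])).symm
    · -- KEY (n+1)
      intro x y hx hy
      obtain ⟨b, hbD, hb⟩ := T6 (n + 1) (by omega)
      have hxn : x ∉ Lsub G f n := fun hh => hx (st11mono G f n hh)
      have hyn : y ∉ Lsub G f n := fun hh => hy (st11mono G f n hh)
      obtain ⟨t', ht'S, ht'⟩ := KEYn x y hxn hyn
      obtain ⟨s, hsS, τ, hτS, hst⟩ := hb t' (st11SD G f n t' ht'S)
      obtain ⟨w, hw0, hwD, hwy⟩ := STAR y hyn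
      obtain ⟨s₁, hs₁S, τ₁, hτ₁S, hw⟩ := hb w ((st11Dmem G f n w).mpr hwD)
      by_cases hτ₁0 : τ₁ = 0
      · exfalso
        have hws : w = s₁ := by rw [hw, hτ₁0, mul_zero, add_zero]
        have hinv : w⁻¹ ∈ Sset G f (n + 1) := st11Sinv G f hG (n + 1) w (hws ▸ hs₁S) hw0
        apply hy
        have hyy : y = (y * w) * w⁻¹ := by rw [mul_assoc, mul_inv_cancel₀ hw0, mul_one]
        rw [hyy, ← st11memIff]
        exact hinv (y * w) ((st11memIff G f (n + 1) _).mpr hwy)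
      · have huS : τ₁⁻¹ * τ ∈ Sset G f (n + 1) :=
          st11Smul G f (n + 1) _ _ (st11Sinv G f hG (n + 1) τ₁ hτ₁S hτ₁0) hτS
        refine ⟨t' - w * (τ₁⁻¹ * τ), ?_, ?_⟩
        · have hts : t' - w * (τ₁⁻¹ * τ) = s - s₁ * (τ₁⁻¹ * τ) := by
            rw [hst, hw]
            have hbt : b * τ₁ * (τ₁⁻¹ * τ) = b * τ := by
              rw [mul_assoc, ← mul_assoc τ₁, mul_inv_cancel₀ hτ₁0, one_mul]
            rw [add_mul, hbt]
            abel
          rw [hts]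
          exact st11Ssub G f (n + 1) _ _ hsS (st11Smul G f (n + 1) _ _ hs₁S huS)
        · have hyw : (y * w) * (τ₁⁻¹ * τ) ∈ Lsub G f (n + 1) :=
            (st11memIff G f (n + 1) _).mp (huS (y * w) ((st11memIff G f (n + 1) _).mpr hwy))
          have hx' : x - y * t' ∈ Lsub G f (n + 1) := st11mono G f n ht'
          have hkey : x - y * (t' - w * (τ₁⁻¹ * τ)) = (x - y * t') + (y * w) * (τ₁⁻¹ * τ) := by
            rw [mul_sub, ← mul_assoc]
            abel
          rw [hkey]
          exact Submodule.add_mem _ hx' hyw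

end St11Main

/-- In a model of the theory `T`, every left `G`-subspace `H` of `F` of dimension `k + 1`
(i.e. the span of a left `G`-independent family of `k + 1` elements) has the form
`L_k · a` for some `a ∈ F`. -/
theorem stmt11 {F : Type*} [DivisionRing F]
    (G : Subring F) (hG : ∀ x ∈ G, x⁻¹ ∈ G)
    (f : ℕ → F) (hf0 : f 0 = 1)
    (T4 : ∀ x : F, ∃ a ∈ G, ∃ b ∈ G, x = a + f 1 * b)
    (T5 : ∀ c : ℕ → F, (∀ i, c i ∈ G) →
      ∀ m : ℕ, ∑ i ∈ Finset.range m, c i * f i = 0 → ∀ i < m, c i = 0)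
    (T6 : ∀ k : ℕ, 1 ≤ k → ∃ b ∈ Dset G f k,
      ∀ x ∈ Dset G f k, ∃ s ∈ Sset G f k, ∃ t ∈ Sset G f k, x = s + b * t) :
    ∀ (k : ℕ) (H : Set F),
      (∃ h : Fin (k + 1) → F,
        (∀ c : Fin (k + 1) → F, (∀ i, c i ∈ G) → ∑ i, c i * h i = 0 → ∀ i, c i = 0) ∧
        H = GSpan G h) →
      ∃ a : F, (fun x => x * a) '' Lset G f k = H := by
  intro k H hH
  obtain ⟨h, hraw, rfl⟩ := hH
  have hind : LinearIndependent ↥G h := by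
    rw [Fintype.linearIndependent_iff]
    intro c hc
    have hz := hraw (fun i => ↑(c i)) (fun i => (c i).2)
      (by rw [← hc]; exact Finset.sum_congr rfl fun i _ => rfl)
    intro i
    exact Subtype.ext (hz i)
  obtain ⟨a, ha0, hmap⟩ := (st11A G hG f hf0 T4 T5 T6 k).1 h hind
  refine ⟨a, ?_⟩
  rw [st11Lset]
  have himg : (fun x => x * a) '' ↑(Lsub G f k) = ↑((Lsub G f k).map (st11mu G a)) := by
    rw [Submodule.map_coe]; rfl
  rw [himg, hmap]
  exact (st11span G h).symm
end

section
/- Let F be a division ring, G a division subring of F, and (f_i)_{i∈ℕ} a sequence in F with f_0 = 1 satisfying axioms (T4), (T5), (T6). Then the extension G ⊆ F is right regular: for any two left G-subspaces H₁, H₂ of F of equal finite dimension there exists a ∈ F with H₁·a = H₂. -/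
open Submodule Module

namespace Stmt12Aux

variable {F : Type*} [DivisionRing F] {K : Subfield F} {f : ℕ → F}

variable (K f) in
/-- span of `f 0, …, f k` over `K`. -/
def LS (k : ℕ) : Submodule ↥K F := Submodule.span ↥K (Set.range fun i : Fin (k+1) => f i)

lemma ksmul_def (g : ↥K) (x : F) : g • x = (g : F) * x := rfl

variable (K) in
/-- right multiplication as a `K`-linear map. -/
def mulr (a : F) : F →ₗ[↥K] F where
  toFun x := x * a
  map_add' x y := add_mul x y a
  map_smul' g x := by simp only [ksmul_def, RingHom.id_apply, mul_assoc]

@[simp] lemma mulr_apply (a x : F) : mulr K a x = x * a := rfl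

variable (K) in
/-- right multiplication by a nonzero element as a linear equivalence. -/
def mulrEquiv (a : F) (ha : a ≠ 0) : F ≃ₗ[↥K] F :=
  LinearEquiv.ofLinear (mulr K a) (mulr K a⁻¹)
    (by ext x; simp [mul_assoc, inv_mul_cancel₀ ha])
    (by ext x; simp [mul_assoc, mul_inv_cancel₀ ha])

@[simp] lemma mulrEquiv_coe (a : F) (ha : a ≠ 0) :
    (mulrEquiv K a ha : F →ₗ[↥K] F) = mulr K a := rfl

lemma f_mem_LS {i k : ℕ} (h : i ≤ k) : f i ∈ LS K f k :=
  subset_span ⟨⟨i, Nat.lt_succ_of_le h⟩, rfl⟩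

lemma LS_mono {k l : ℕ} (h : k ≤ l) : LS K f k ≤ LS K f l := by
  rw [LS, span_le]
  rintro x ⟨i, rfl⟩
  exact f_mem_LS (le_trans (Nat.lt_succ_iff.mp i.isLt) h)

lemma span_mul_mem {M : Submodule ↥K F} {s : Set F} {e : F}
    (h : ∀ y ∈ s, y * e ∈ M) : ∀ x ∈ span ↥K s, x * e ∈ M := by
  intro x hx
  induction hx using Submodule.span_induction with
  | mem y hy => exact h y hy
  | zero => simpa using M.zero_mem
  | add a b _ _ ha hb => simpa [add_mul] using M.add_mem ha hb
  | smul g a _ ha => simpa [ksmul_def, mul_assoc] using M.smul_mem g ha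

lemma LS_mul_mem {k : ℕ} {M : Submodule ↥K F} {e : F}
    (h : ∀ i ≤ k, f i * e ∈ M) : ∀ x ∈ LS K f k, x * e ∈ M :=
  span_mul_mem (by rintro y ⟨i, rfl⟩; exact h i (Nat.lt_succ_iff.mp i.isLt))

instance fd_LS (k : ℕ) : FiniteDimensional ↥K (LS K f k) :=
  FiniteDimensional.span_of_finite _ (Set.finite_range _)


section T5
variable (T5 : ∀ c : ℕ → F, (∀ i, c i ∈ K) →
      ∀ m : ℕ, ∑ i ∈ Finset.range m, c i * f i = 0 → ∀ i < m, c i = 0)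
include T5

lemma linInd (n : ℕ) : LinearIndependent ↥K (fun i : Fin n => f i) := by
  rw [Fintype.linearIndependent_iff]
  intro g hg i
  classical
  set c : ℕ → F := fun i => if h : i < n then (g ⟨i, h⟩ : F) else 0 with hc
  have hcG : ∀ i, c i ∈ K := by
    intro i; simp only [hc]; split
    · simp
    · exact K.zero_mem
  have hsum : ∑ i ∈ Finset.range n, c i * f i = 0 := by
    rw [← Fin.sum_univ_eq_sum_range, ← hg]
    apply Finset.sum_congr rfl
    intro i _
    simp [hc, i.isLt, ksmul_def]
  have := T5 c hcG n hsum i i.isLt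
  ext
  simpa [hc, i.isLt] using this

lemma finrank_LS (k : ℕ) : finrank ↥K (LS K f k) = k + 1 := by
  have := finrank_span_eq_card (linInd T5 (k+1)); rw [Fintype.card_fin] at this; exact this

lemma f_not_mem (k : ℕ) : f (k+1) ∉ LS K f k := by
  intro hmem
  have hle : LS K f (k+1) ≤ LS K f k := by
    rw [LS, span_le]
    rintro x ⟨i, rfl⟩
    rcases Nat.lt_succ_iff_lt_or_eq.mp i.isLt with h | h
    · exact f_mem_LS (Nat.lt_succ_iff.mp h)
    · simpa [h] using hmem
  have := Submodule.finrank_mono hle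
  rw [finrank_LS T5, finrank_LS T5] at this
  omega
end T5

/-- if `s ≠ 0` stabilizes `L_k`, so does `s⁻¹`. -/
lemma stab_inv {k : ℕ} {s : F} (hs : s ≠ 0)
    (h : ∀ x ∈ LS K f k, x * s ∈ LS K f k) :
    ∀ x ∈ LS K f k, x * s⁻¹ ∈ LS K f k := by
  have hmap : Submodule.map ((mulrEquiv K s hs : F →ₗ[↥K] F)) (LS K f k) = LS K f k := by
    apply Submodule.eq_of_le_of_finrank_le
    · rintro x ⟨y, hy, rfl⟩
      exact h y hy
    · rw [LinearEquiv.finrank_map_eq]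
  intro x hx
  rw [← hmap] at hx
  rcases hx with ⟨y, hy, hyx⟩
  have : x * s⁻¹ = y := by
    rw [← hyx]; simp [mulrEquiv, mul_assoc, mul_inv_cancel₀ hs]
  rwa [this]


variable (K f) in
/-- the condition `a ∈ D_{k+1}`, i.e. `L_k · a ⊆ L_{k+1}`. -/
abbrev Dcond (k : ℕ) (c : F) : Prop := ∀ x ∈ LS K f k, x * c ∈ LS K f (k+1)

variable (K f) in
/-- the condition `a ∈ S_k`, i.e. `L_k · a ⊆ L_k`. -/
abbrev Scond (k : ℕ) (s : F) : Prop := ∀ x ∈ LS K f k, x * s ∈ LS K f k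

lemma K_mem_LS0 (hf0 : f 0 = 1) {x : F} (hx : x ∈ K) : x ∈ LS K f 0 := by
  have h1 : f 0 ∈ LS K f 0 := f_mem_LS (le_refl 0)
  have := (LS K f 0).smul_mem (⟨x, hx⟩ : ↥K) h1
  simpa [ksmul_def, hf0] using this

section main
variable (hf0 : f 0 = 1)
  (T4 : ∀ x : F, ∃ a ∈ K, ∃ b ∈ K, x = a + f 1 * b)
  (T5 : ∀ c : ℕ → F, (∀ i, c i ∈ K) →
      ∀ m : ℕ, ∑ i ∈ Finset.range m, c i * f i = 0 → ∀ i < m, c i = 0)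
  (T6 : ∀ j : ℕ, ∃ b, Dcond K f j b ∧ ∀ d, Dcond K f j d →
      ∃ s, Scond K f (j+1) s ∧ ∃ t, Scond K f (j+1) t ∧ d = s + b * t)

include hf0 T4 T5 T6 in
lemma lemA : ∀ j : ℕ, ∀ a : F, ∃ c : F, c ≠ 0 ∧ Dcond K f j c ∧ a * c ∈ LS K f (j+1) := by
  intro j
  induction j with
  | zero =>
    intro a
    obtain ⟨α, hα, β, hβ, rfl⟩ := T4 a
    by_cases hβ0 : β = 0
    · refine ⟨1, one_ne_zero, ?_, ?_⟩
      · intro x hx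
        simpa using LS_mono (Nat.zero_le 1) hx
      · subst hβ0
        simpa using LS_mono (Nat.zero_le 1) (K_mem_LS0 hf0 hα)
    · refine ⟨β⁻¹, inv_ne_zero hβ0, ?_, ?_⟩
      · intro x hx
        refine LS_mul_mem (fun i hi => ?_) x hx
        interval_cases i
        have : f 0 * β⁻¹ ∈ LS K f 0 := by
          rw [hf0, one_mul]
          exact K_mem_LS0 hf0 (K.inv_mem hβ)
        exact LS_mono (Nat.zero_le 1) this
      · have : (α + f 1 * β) * β⁻¹ = α * β⁻¹ + f 1 := by
          rw [add_mul, mul_assoc, mul_inv_cancel₀ hβ0, mul_one]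
        rw [this]
        exact (LS K f 1).add_mem
          (LS_mono (Nat.zero_le 1) (K_mem_LS0 hf0 (K.mul_mem hα (K.inv_mem hβ))))
          (f_mem_LS le_rfl)
  | succ j IH =>
    intro a
    by_cases ha : a ∈ LS K f (j+2)
    · exact ⟨1, one_ne_zero, fun x hx => by simpa using LS_mono (by omega) hx, by simpa using ha⟩
    obtain ⟨b, hbD, hdec⟩ := T6 j
    obtain ⟨c, hc0, hcD, hcL⟩ := IH a
    obtain ⟨s, hsS, t, htS, hcdec⟩ := hdec c hcD
    obtain ⟨c₁, hc₁0, hc₁D, hc₁L⟩ := IH (f (j+2))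
    obtain ⟨s₁, hs₁S, t₁, ht₁S, hc₁dec⟩ := hdec c₁ hc₁D
    -- t ≠ 0
    have ht0 : t ≠ 0 := by
      rintro rfl
      rw [mul_zero, add_zero] at hcdec
      subst hcdec
      have h2 := stab_inv hc0 hsS _ hcL
      rw [mul_assoc, mul_inv_cancel₀ hc0, mul_one] at h2
      exact ha (LS_mono (by omega) h2)
    have ht₁0 : t₁ ≠ 0 := by
      rintro rfl
      rw [mul_zero, add_zero] at hc₁dec
      subst hc₁dec
      have h2 := stab_inv hc₁0 hs₁S _ hc₁L
      rw [mul_assoc, mul_inv_cancel₀ hc₁0, mul_one] at h2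
      exact f_not_mem T5 (j+1) h2
    have htinv : ∀ x ∈ LS K f (j+1), x * t⁻¹ ∈ LS K f (j+1) := stab_inv ht0 htS
    have ht₁inv : ∀ x ∈ LS K f (j+1), x * t₁⁻¹ ∈ LS K f (j+1) := stab_inv ht₁0 ht₁S
    -- the auxiliary space M = L_{j+1} + K·(f_{j+1}·b)
    set w : Fin (j+3) → F := Fin.snoc (fun i : Fin (j+2) => f i) (f (j+1) * b) with hw
    set M : Submodule ↥K F := span ↥K (Set.range w) with hM
    have hfM : ∀ i ≤ j+1, f i ∈ M := by
      intro i hi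
      apply subset_span
      refine ⟨Fin.castSucc ⟨i, by omega⟩, ?_⟩
      simp only [hw, Fin.snoc_castSucc]
    have hfbM : f (j+1) * b ∈ M := by
      apply subset_span
      exact ⟨Fin.last _, by simp [hw]⟩
    have hLSM : LS K f (j+1) ≤ M := by
      rw [LS, span_le]
      rintro x ⟨i, rfl⟩
      exact hfM i.val (Nat.lt_succ_iff.mp i.isLt)
    -- the key computation: for u = s' + b * t' with t' ≠ 0,
    -- f (j+1) * (u * t'⁻¹) ∈ M whenever s' stabilizes L_{j+1}
    have key : ∀ (s' t' : F), t' ≠ 0 → Scond K f (j+1) s' → Scond K f (j+1) t' →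
        f (j+1) * ((s' + b * t') * t'⁻¹) ∈ M := by
      intro s' t' ht'0 hs'S ht'S
      have : (s' + b * t') * t'⁻¹ = s' * t'⁻¹ + b := by
        rw [add_mul, mul_assoc, mul_inv_cancel₀ ht'0, mul_one]
      rw [this, mul_add, ← mul_assoc]
      refine M.add_mem (hLSM ?_) hfbM
      exact stab_inv ht'0 ht'S _ (hs'S _ (f_mem_LS le_rfl))
    -- e := c₁ * t₁⁻¹ maps L_{j+2} into M
    have he0 : c₁ * t₁⁻¹ ≠ 0 := mul_ne_zero hc₁0 (inv_ne_zero ht₁0)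
    have hmape : ∀ x ∈ LS K f (j+2), x * (c₁ * t₁⁻¹) ∈ M := by
      refine LS_mul_mem (fun i hi => ?_)
      rcases Nat.lt_or_ge i (j+1) with h | h
      · rw [← mul_assoc]
        exact hLSM (ht₁inv _ (hc₁D _ (f_mem_LS (by omega))))
      rcases Nat.eq_or_lt_of_le h with h' | h'
      · subst h'
        rw [hc₁dec]
        exact key s₁ t₁ ht₁0 hs₁S ht₁S
      · have : i = j + 2 := by omega
        subst this
        rw [← mul_assoc]
        exact hLSM (ht₁inv _ hc₁L)
    -- by dimension count, the image of L_{j+2} is exactly M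
    have heq : Submodule.map ((mulrEquiv K (c₁ * t₁⁻¹) he0 : F →ₗ[↥K] F)) (LS K f (j+2)) = M := by
      haveI : FiniteDimensional ↥K M := FiniteDimensional.span_of_finite _ (Set.finite_range _)
      apply Submodule.eq_of_le_of_finrank_le
      · rintro x ⟨y, hy, rfl⟩
        exact hmape y hy
      · rw [LinearEquiv.finrank_map_eq, finrank_LS T5]
        have := finrank_range_le_card (R := ↥K) w
        simpa [Set.finrank] using this
    -- hence multiplying M by t₁ * c₁⁻¹ lands in L_{j+2}
    have hMback : ∀ y ∈ M, y * (t₁ * c₁⁻¹) ∈ LS K f (j+2) := by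
      intro y hy
      rw [← heq] at hy
      rcases hy with ⟨z, hz, hzy⟩
      have : y * (t₁ * c₁⁻¹) = z := by
        rw [← hzy]
        simp only [mulrEquiv_coe, mulr_apply]
        rw [mul_assoc, mul_assoc, ← mul_assoc t₁⁻¹, inv_mul_cancel₀ ht₁0, one_mul,
          mul_inv_cancel₀ hc₁0, mul_one]
      rwa [this]
    -- the final element
    refine ⟨(c * t⁻¹) * (t₁ * c₁⁻¹),
      mul_ne_zero (mul_ne_zero hc0 (inv_ne_zero ht0))
        (mul_ne_zero ht₁0 (inv_ne_zero hc₁0)), ?_, ?_⟩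
    · intro x hx
      rw [← mul_assoc]
      refine hMback _ ?_
      revert x hx
      refine LS_mul_mem (fun i hi => ?_)
      rcases Nat.lt_or_ge i (j+1) with h | h
      · rw [← mul_assoc]
        exact hLSM (htinv _ (hcD _ (f_mem_LS (by omega))))
      · have : i = j + 1 := by omega
        subst this
        rw [hcdec]
        exact key s t ht0 hsS htS
    · rw [← mul_assoc]
      refine hMback _ ?_
      rw [← mul_assoc]
      exact hLSM (htinv _ hcL)


include hf0 T4 T5 T6 in
lemma span_to_L : ∀ m : ℕ, ∀ h : Fin (m+1) → F, LinearIndependent ↥K h →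
    ∃ c : F, c ≠ 0 ∧
      Submodule.map (mulr K c) (span ↥K (Set.range h)) = LS K f m := by
  intro m
  induction m with
  | zero =>
    intro h hind
    have h0 : h 0 ≠ 0 := hind.ne_zero 0
    refine ⟨(h 0)⁻¹, inv_ne_zero h0, ?_⟩
    rw [Submodule.map_span, ← Set.range_comp]
    have : ((mulr K (h 0)⁻¹) ∘ h : Fin 1 → F) = fun i : Fin 1 => f i.val := by
      funext i
      have hi : i = 0 := Subsingleton.elim _ _
      subst hi
      show h 0 * (h 0)⁻¹ = f 0
      rw [mul_inv_cancel₀ h0, hf0]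
    rw [this, LS]
  | succ m IH =>
    intro h hind
    have h0 : h 0 ≠ 0 := hind.ne_zero 0
    set h' : Fin (m+1) → F := fun i => h i.succ * (h 0)⁻¹ with hh'
    have hind' : LinearIndependent ↥K h' := by
      have h1 : LinearIndependent ↥K (h ∘ Fin.succ) :=
        hind.comp Fin.succ (Fin.succ_injective _)
      exact h1.map' (mulrEquiv K (h 0)⁻¹ (inv_ne_zero h0)).toLinearMap
        (LinearEquiv.ker _)
    obtain ⟨c', hc'0, hc'map⟩ := IH h' hind'
    obtain ⟨C, hC0, hCD, hCL⟩ := lemA hf0 T4 T5 T6 m c'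
    have hc0 : ((h 0)⁻¹ * c') * C ≠ 0 :=
      mul_ne_zero (mul_ne_zero (inv_ne_zero h0) hc'0) hC0
    refine ⟨((h 0)⁻¹ * c') * C, hc0, ?_⟩
    have hle : Submodule.map (mulr K (((h 0)⁻¹ * c') * C)) (span ↥K (Set.range h))
        ≤ LS K f (m+1) := by
      rintro x ⟨y, hy, rfl⟩
      simp only [mulr_apply]
      revert y hy
      refine span_mul_mem ?_
      rintro y ⟨i, rfl⟩
      induction i using Fin.cases with
      | zero =>
        rw [← mul_assoc, ← mul_assoc, mul_inv_cancel₀ h0, one_mul]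
        exact hCL
      | succ i =>
        have hmem : h' i * c' ∈ LS K f m := by
          rw [← hc'map]
          exact ⟨h' i, subset_span ⟨i, rfl⟩, rfl⟩
        have : h i.succ * ((h 0)⁻¹ * c' * C) = (h' i * c') * C := by
          rw [hh']; ring_nf; rw [mul_assoc, mul_assoc, mul_assoc]
        rw [this]
        exact hCD _ hmem
    have : Submodule.map ((mulrEquiv K _ hc0 : F →ₗ[↥K] F)) (span ↥K (Set.range h))
        = LS K f (m+1) := by
      apply Submodule.eq_of_le_of_finrank_le
      · rw [mulrEquiv_coe]; exact hle
      · rw [finrank_LS T5, LinearEquiv.finrank_map_eq, finrank_span_eq_card hind,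
          Fintype.card_fin]
    rw [← this, mulrEquiv_coe]

end main
end Stmt12Aux



/-- In a model of the theory `T`, the extension `G ⊆ F` is right regular: for any two
left `G`-subspaces `H₁, H₂` of `F` of equal finite dimension (given by left
`G`-independent spanning families of the same size `m`) there is `a ∈ F` with
`H₁ · a = H₂`. -/
theorem stmt12 {F : Type*} [DivisionRing F]
    (G : Subring F) (hG : ∀ x ∈ G, x⁻¹ ∈ G)
    (f : ℕ → F) (hf0 : f 0 = 1)
    (T4 : ∀ x : F, ∃ a ∈ G, ∃ b ∈ G, x = a + f 1 * b)
    (T5 : ∀ c : ℕ → F, (∀ i, c i ∈ G) →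
      ∀ m : ℕ, ∑ i ∈ Finset.range m, c i * f i = 0 → ∀ i < m, c i = 0)
    (T6 : ∀ k : ℕ, 1 ≤ k → ∃ b ∈ Dset G f k,
      ∀ x ∈ Dset G f k, ∃ s ∈ Sset G f k, ∃ t ∈ Sset G f k, x = s + b * t) :
    ∀ (m : ℕ) (h₁ h₂ : Fin m → F),
      (∀ c : Fin m → F, (∀ i, c i ∈ G) → ∑ i, c i * h₁ i = 0 → ∀ i, c i = 0) →
      (∀ c : Fin m → F, (∀ i, c i ∈ G) → ∑ i, c i * h₂ i = 0 → ∀ i, c i = 0) →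
      ∃ a : F, (fun x => x * a) '' GSpan G h₁ = GSpan G h₂ := by
  classical
  intro m h₁ h₂ hind₁ hind₂
  set K : Subfield F := { G with inv_mem' := fun x hx => hG x hx } with hK
  have hKG : ∀ x : F, x ∈ K ↔ x ∈ G := fun x => Iff.rfl
  -- membership conversions
  have hLmem : ∀ (k : ℕ) (x : F), x ∈ Lset G f k ↔ x ∈ Stmt12Aux.LS K f k := by
    intro k x
    constructor
    · rintro ⟨c, hc, rfl⟩
      refine Submodule.sum_mem _ fun i hi => ?_
      have : c i * f i = (⟨c i, (hKG _).2 (hc i)⟩ : ↥K) • f i := rfl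
      rw [this]
      exact Submodule.smul_mem _ _
        (Stmt12Aux.f_mem_LS (Finset.mem_range_succ_iff.mp hi))
    · intro hx
      rw [Stmt12Aux.LS, mem_span_range_iff_exists_fun] at hx
      obtain ⟨g, hg⟩ := hx
      refine ⟨fun i => if hi : i < k+1 then (g ⟨i, hi⟩ : F) else 0, ?_, ?_⟩
      · intro i
        dsimp only
        split
        · exact ((g _).2 : _ ∈ G)
        · exact G.zero_mem
      · rw [← hg, ← Fin.sum_univ_eq_sum_range]
        apply Finset.sum_congr rfl
        intro i _
        simp only [i.isLt, dif_pos, Fin.eta]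
        rfl
  have hGSpan : ∀ (n : ℕ) (h : Fin n → F),
      GSpan G h = ↑(Submodule.span ↥K (Set.range h)) := by
    intro n h
    ext x
    constructor
    · rintro ⟨c, hc, rfl⟩
      rw [SetLike.mem_coe]
      refine Submodule.sum_mem _ fun i _ => ?_
      have : c i * h i = (⟨c i, (hKG _).2 (hc i)⟩ : ↥K) • h i := rfl
      rw [this]
      exact Submodule.smul_mem _ _ (Submodule.subset_span ⟨i, rfl⟩)
    · intro hx
      rw [SetLike.mem_coe, mem_span_range_iff_exists_fun] at hx
      obtain ⟨g, hg⟩ := hx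
      exact ⟨fun i => (g i : F), fun i => (g i).2, by rw [← hg]; rfl⟩
  have hind : ∀ (n : ℕ) (h : Fin n → F),
      (∀ c : Fin n → F, (∀ i, c i ∈ G) → ∑ i, c i * h i = 0 → ∀ i, c i = 0) →
      LinearIndependent ↥K h := by
    intro n h hh
    rw [Fintype.linearIndependent_iff]
    intro g hg i
    exact Subtype.ext (hh (fun i => (g i : F)) (fun i => (g i).2) (by rw [← hg]; rfl) i)
  have T4' : ∀ x : F, ∃ a ∈ K, ∃ b ∈ K, x = a + f 1 * b := T4
  have T5' : ∀ c : ℕ → F, (∀ i, c i ∈ K) →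
      ∀ m : ℕ, ∑ i ∈ Finset.range m, c i * f i = 0 → ∀ i < m, c i = 0 := T5
  have hSmem : ∀ (k : ℕ) (s : F), s ∈ Sset G f k ↔ Stmt12Aux.Scond K f k s := by
    intro k s
    constructor
    · intro hs x hx
      exact (hLmem _ _).1 (hs x ((hLmem _ _).2 hx))
    · intro hs x hx
      exact (hLmem _ _).2 (hs x ((hLmem _ _).1 hx))
  have hDmem : ∀ (j : ℕ) (d : F), d ∈ Dset G f (j+1) ↔ Stmt12Aux.Dcond K f j d := by
    intro j d
    show (∀ x ∈ Lset G f j, x * d ∈ Lset G f (j+1)) ↔ _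
    constructor
    · intro hd x hx
      exact (hLmem _ _).1 (hd x ((hLmem _ _).2 hx))
    · intro hd x hx
      exact (hLmem _ _).2 (hd x ((hLmem _ _).1 hx))
  have T6' : ∀ j : ℕ, ∃ b, Stmt12Aux.Dcond K f j b ∧
      ∀ d, Stmt12Aux.Dcond K f j d → ∃ s, Stmt12Aux.Scond K f (j+1) s ∧
        ∃ t, Stmt12Aux.Scond K f (j+1) t ∧ d = s + b * t := by
    intro j
    obtain ⟨b, hb, hx⟩ := T6 (j+1) (by omega)
    refine ⟨b, (hDmem j b).1 hb, fun d hd => ?_⟩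
    obtain ⟨s, hs, t, ht, he⟩ := hx d ((hDmem j d).2 hd)
    exact ⟨s, (hSmem _ s).1 hs, t, (hSmem _ t).1 ht, he⟩
  rcases m with _ | m'
  · refine ⟨1, ?_⟩
    have hsp : ∀ h : Fin 0 → F, GSpan G h = {0} := by
      intro h
      ext x
      constructor
      · rintro ⟨c, hc, rfl⟩
        simp
      · rintro rfl
        exact ⟨fun i => 0, fun i => G.zero_mem, by simp⟩
    rw [hsp h₁, hsp h₂]
    ext x
    simp
  · obtain ⟨c₁, hc₁0, hmap₁⟩ :=
      Stmt12Aux.span_to_L hf0 T4' T5' T6' m' h₁ (hind _ h₁ hind₁)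
    obtain ⟨c₂, hc₂0, hmap₂⟩ :=
      Stmt12Aux.span_to_L hf0 T4' T5' T6' m' h₂ (hind _ h₂ hind₂)
    refine ⟨c₁ * c₂⁻¹, ?_⟩
    rw [hGSpan _ h₁, hGSpan _ h₂]
    have himg : (fun x => x * (c₁ * c₂⁻¹)) '' ↑(Submodule.span ↥K (Set.range h₁))
        = ↑(Submodule.map (Stmt12Aux.mulr K (c₁ * c₂⁻¹)) (Submodule.span ↥K (Set.range h₁))) := by
      rw [Submodule.map_coe]
      rfl
    rw [himg]
    suffices hs : Submodule.map (Stmt12Aux.mulr K (c₁ * c₂⁻¹)) (Submodule.span ↥K (Set.range h₁))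
        = Submodule.span ↥K (Set.range h₂) by rw [hs]
    have hcomp : ∀ (a b : F) (p : Submodule ↥K F),
        Submodule.map (Stmt12Aux.mulr K b) (Submodule.map (Stmt12Aux.mulr K a) p)
          = Submodule.map (Stmt12Aux.mulr K (a * b)) p := by
      intro a b p
      rw [← Submodule.map_comp]
      congr 1
      ext x
      simp [mul_assoc]
    calc Submodule.map (Stmt12Aux.mulr K (c₁ * c₂⁻¹)) (Submodule.span ↥K (Set.range h₁))
        = Submodule.map (Stmt12Aux.mulr K c₂⁻¹)
            (Submodule.map (Stmt12Aux.mulr K c₁) (Submodule.span ↥K (Set.range h₁))) :=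
          (hcomp _ _ _).symm
      _ = Submodule.map (Stmt12Aux.mulr K c₂⁻¹)
            (Submodule.map (Stmt12Aux.mulr K c₂) (Submodule.span ↥K (Set.range h₂))) := by
          rw [hmap₁, hmap₂]
      _ = Submodule.map (Stmt12Aux.mulr K (c₂ * c₂⁻¹)) (Submodule.span ↥K (Set.range h₂)) :=
          hcomp _ _ _
      _ = Submodule.span ↥K (Set.range h₂) := by
          rw [mul_inv_cancel₀ hc₂0]
          have h1 : Stmt12Aux.mulr K (1:F) = LinearMap.id := by
            ext x
            simp
          rw [h1, Submodule.map_id]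
end

section
/- Let F and G be division rings, n a positive integer, φ : F → Mₙ(G) a ring embedding, and a, b positive integers with a + b = n + 1. If f, f′ ∈ F are such that φ(f) and φ(f′) have the same upper right a×b block (entries in rows 1,…,a and columns a,…,n), then f = f′. In particular, the element f in the definition of a-tightness is necessarily unique. -/
/-- Auxiliary linear map sending `v : Fin a → G` to the vector whose `j`-th entry is
`∑ i, v i * M i j`, restricted to the first `a - 1` columns. -/
def stmt14Aux {G : Type*} [DivisionRing G] {n a : ℕ} (han : a ≤ n) (ha1n : a - 1 ≤ n)
    (M : Matrix (Fin n) (Fin n) G) : (Fin a → G) →ₗ[G] (Fin (a - 1) → G) where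
  toFun v j := ∑ i : Fin a, v i * M (Fin.castLE han i) (Fin.castLE ha1n j)
  map_add' v w := by
    funext j
    simp [add_mul, Finset.sum_add_distrib]
  map_smul' c v := by
    funext j
    simp [Finset.mul_sum, mul_assoc]

lemma stmt14Aux_apply {G : Type*} [DivisionRing G] {n a : ℕ} (han : a ≤ n) (ha1n : a - 1 ≤ n)
    (M : Matrix (Fin n) (Fin n) G) (v : Fin a → G) (j : Fin (a - 1)) :
    stmt14Aux han ha1n M v j = ∑ i : Fin a, v i * M (Fin.castLE han i) (Fin.castLE ha1n j) :=
  rfl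

lemma stmt14_vecMul_eq_zero {G ι : Type*} [Ring G] [Fintype ι] [DecidableEq ι]
    {M : Matrix ι ι G} (hMunit : IsUnit M) {w : ι → G}
    (hw : Matrix.vecMul w M = 0) : w = 0 := by
  obtain ⟨N, hN⟩ := hMunit.exists_right_inv
  calc w = Matrix.vecMul w 1 := by rw [Matrix.vecMul_one]
    _ = Matrix.vecMul w (M * N) := by rw [hN]
    _ = Matrix.vecMul (Matrix.vecMul w M) N := by rw [Matrix.vecMul_vecMul]
    _ = 0 := by rw [hw, Matrix.zero_vecMul]

lemma stmt14_sum_split {G : Type*} [AddCommMonoid G] {n a : ℕ} (han : a ≤ n)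
    (g : Fin n → G) : ∑ i : Fin n, g i =
      ∑ i : Fin a, g (Fin.castLE han i) + ∑ i : Fin (n - a), g ⟨a + i, by omega⟩ := by
  have hcast : a + (n - a) = n := by omega
  rw [← Equiv.sum_comp (finSumFinEquiv.trans (finCongr hcast)) g, Fintype.sum_sum_type]
  congr 1 <;> refine Finset.sum_congr rfl fun i _ => ?_ <;> congr 1 <;>
    apply Fin.ext <;> simp

/-- If two elements of `F` have images under a ring embedding `φ : F → Mₙ(G)` with the
same upper-right `a × b` block (`a + b = n + 1`), then they are equal; in particular the
element witnessing `a`-tightness is unique. -/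
theorem stmt14 {F G : Type*} [DivisionRing F] [DivisionRing G] (n : ℕ) (hn : 1 ≤ n)
    (φ : F →+* Matrix (Fin n) (Fin n) G) (hinj : Function.Injective φ)
    (a b : ℕ) (ha : 1 ≤ a) (hb : 1 ≤ b) (hab : a + b = n + 1)
    (f f' : F)
    (h : ∀ i j : Fin n, (i : ℕ) < a → a ≤ (j : ℕ) + 1 → φ f i j = φ f' i j) :
    f = f' := by
  by_contra hne
  have hd0 : f - f' ≠ 0 := sub_ne_zero.mpr hne
  obtain ⟨M, hM⟩ : ∃ M, M = φ (f - f') := ⟨_, rfl⟩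
  have hMunit : IsUnit M := by
    rw [hM]; exact (isUnit_iff_ne_zero.mpr hd0).map φ
  have hblock : ∀ i j : Fin n, (i : ℕ) < a → a ≤ (j : ℕ) + 1 → M i j = 0 := by
    intro i j hi hj
    rw [hM, map_sub, Matrix.sub_apply, h i j hi hj, sub_self]
  clear hM
  have han : a ≤ n := by omega
  have ha1n : a - 1 ≤ n := by omega
  have hTinj : Function.Injective (stmt14Aux han ha1n M) := by
    rw [injective_iff_map_eq_zero]
    intro v hv
    obtain ⟨w, hwdef⟩ : ∃ w : Fin n → G,
        w = fun i : Fin n => if hi : (i : ℕ) < a then v ⟨(i : ℕ), hi⟩ else 0 := ⟨_, rfl⟩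
    have hwlt : ∀ (i : Fin n) (hi : (i : ℕ) < a), w i = v ⟨(i : ℕ), hi⟩ := by
      intro i hi; rw [hwdef]; simp [hi]
    have hwge : ∀ (i : Fin n), ¬ (i : ℕ) < a → w i = 0 := by
      intro i hi; rw [hwdef]; simp [hi]
    have hw : Matrix.vecMul w M = 0 := by
      funext j
      show ∑ i : Fin n, w i * M i j = 0
      by_cases hj : a ≤ (j : ℕ) + 1
      · apply Finset.sum_eq_zero
        intro i _
        by_cases hi : (i : ℕ) < a
        · rw [hblock i j hi hj, mul_zero]
        · rw [hwge i hi, zero_mul]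
      · have hj' : (j : ℕ) < a - 1 := by omega
        rw [stmt14_sum_split han]
        have h2 : ∑ i : Fin (n - a), w ⟨a + i, by omega⟩ * M ⟨a + i, by omega⟩ j = 0 := by
          apply Finset.sum_eq_zero
          intro i _
          have hna : ¬ ((a + (i : ℕ)) < a) := by omega
          rw [hwge _ hna, zero_mul]
        rw [h2, add_zero]
        have h1 : ∑ i : Fin a, w (Fin.castLE han i) * M (Fin.castLE han i) j =
            stmt14Aux han ha1n M v ⟨(j : ℕ), hj'⟩ := by
          rw [stmt14Aux_apply]
          refine Finset.sum_congr rfl fun i _ => ?_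
          have hi : ((Fin.castLE han i : Fin n) : ℕ) < a := i.isLt
          have hcast : (Fin.castLE ha1n (⟨(j : ℕ), hj'⟩ : Fin (a-1))) = j := by
            apply Fin.ext; simp
          rw [hcast, hwlt _ hi]
          rfl
        rw [h1, hv]
        rfl
    have hw0 : w = 0 := stmt14_vecMul_eq_zero hMunit hw
    funext k
    have hk : ((Fin.castLE han k : Fin n) : ℕ) < a := k.isLt
    have hwk := hwlt (Fin.castLE han k) hk
    rw [hw0] at hwk
    have hkk : (⟨((Fin.castLE han k : Fin n) : ℕ), hk⟩ : Fin a) = k := by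
      apply Fin.ext; simp
    rw [hkk] at hwk
    exact hwk.symm
  have hle := LinearMap.finrank_le_finrank_of_injective hTinj
  rw [Module.finrank_pi, Module.finrank_pi, Fintype.card_fin, Fintype.card_fin] at hle
  omega
end

section
/- Let F be a division ring, G a division subring of F, and L a finite-dimensional left G-subspace of F containing 1. Then S = {a ∈ F : L·a ⊆ L} is a subring of F which is closed under inverses of its nonzero elements; that is, S is a division subring of F. -/
/-- If `L` is a finite-dimensional left `G`-subspace of `F` containing `1`, then
`S = {a ∈ F : L·a ⊆ L}` is a subring of `F` closed under inverses of its nonzero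
elements, i.e. a division subring of `F`. -/
theorem stmt15 {F : Type*} [DivisionRing F]
    (G : Subring F) (hG : ∀ x ∈ G, x⁻¹ ∈ G)
    (L : Set F) (hL1 : (1 : F) ∈ L)
    (hLfin : ∃ (m : ℕ) (h : Fin m → F), L = GSpan G h) :
    ∃ S : Subring F, (S : Set F) = {a : F | ∀ x ∈ L, x * a ∈ L} ∧
      ∀ a ∈ S, a ≠ 0 → a⁻¹ ∈ S := by
  obtain ⟨m, h, hLdef⟩ := hLfin
  set K : Subfield F := { G with inv_mem' := hG } with hK
  set V : Submodule K F := Submodule.span K (Set.range h) with hV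
  have hLV : L = (V : Set F) := by
    rw [hLdef]
    unfold GSpan
    ext x
    simp only [Set.mem_setOf_eq, SetLike.mem_coe, hV, Submodule.mem_span_range_iff_exists_fun]
    constructor
    · rintro ⟨c, hc, rfl⟩
      exact ⟨fun i => ⟨c i, hc i⟩, rfl⟩
    · rintro ⟨c, rfl⟩
      exact ⟨fun i => (c i : F), fun i => (c i).2, rfl⟩
  have hLV' : ∀ z : F, z ∈ L ↔ z ∈ V := fun z => by rw [hLV]; rfl
  have hFD : FiniteDimensional K V := FiniteDimensional.span_of_finite K (Set.finite_range h)
  refine ⟨{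
    carrier := {a : F | ∀ x ∈ L, x * a ∈ L}
    one_mem' := fun {x} hx => by simpa using hx
    mul_mem' := fun {a b} ha hb x hx => by rw [← mul_assoc]; exact hb _ (ha _ hx)
    zero_mem' := fun x hx => by rw [mul_zero]; exact hLV' _ |>.mpr V.zero_mem
    add_mem' := fun {a b} ha hb x hx => by
      rw [mul_add]
      exact (hLV' _).mpr (V.add_mem ((hLV' _).mp (ha x hx)) ((hLV' _).mp (hb x hx)))
    neg_mem' := fun {a} ha x hx => by
      rw [mul_neg]
      exact (hLV' _).mpr (V.neg_mem ((hLV' _).mp (ha x hx))) }, rfl, ?_⟩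
  intro a ha ha0
  intro y hy
  -- right multiplication by a as a linear map on V
  have hmem : ∀ x : V, (x : F) * a ∈ V := fun x => (hLV' _).mp (ha (x : F) ((hLV' _).mpr x.2))
  let f : V →ₗ[K] V :=
    { toFun := fun x => ⟨(x : F) * a, hmem x⟩
      map_add' := fun x y => by ext; simp [add_mul]
      map_smul' := fun c x => by ext; exact mul_assoc _ _ _ }
  have hinj : Function.Injective f := by
    intro x y hxy
    have : (x : F) * a = (y : F) * a := congrArg Subtype.val hxy
    ext
    exact mul_right_cancel₀ ha0 this
  have hsurj := (LinearMap.injective_iff_surjective).mp hinj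
  obtain ⟨x, hx⟩ := hsurj ⟨y, (hLV' _).mp hy⟩
  have hxy : (x : F) * a = y := congrArg Subtype.val hx
  have : y * a⁻¹ = (x : F) := by
    rw [← hxy, mul_assoc, mul_inv_cancel₀ ha0, mul_one]
  rw [this]
  exact (hLV' _).mpr x.2
end

section
/- Let n ≥ 2 be an integer, F a division ring, G a division subring of F, and f_0 = 1, f_1, …, f_{n−1} a left G-basis of F. Suppose moreover that {1, f_1} is a right G-basis of F, i.e., every x ∈ F can be written uniquely as x = a + f_1·b with a, b ∈ G. Let φ : F → Mₙ(G) be the left regular representation with respect to the left basis. Then φ is 2-tight: for every 2×(n−1) matrix g over G there exists f ∈ F such that the upper right 2×(n−1) block of φ(f) (entries in rows 1, 2 and columns 2,…,n) equals g. -/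
/-- If `f_0 = 1, …, f_{n-1}` is a left `G`-basis of `F` and moreover `{1, f_1}` is a
right `G`-basis of `F`, then the left regular representation `φ : F → Mₙ(G)` is
`2`-tight. -/
theorem stmt17 {F : Type*} [DivisionRing F] (n : ℕ) (hn : 2 ≤ n)
    (G : Subring F) (hG : ∀ x ∈ G, x⁻¹ ∈ G)
    (f : ℕ → F) (hf0 : f 0 = 1)
    (hspan : ∀ x : F, ∃ c : ℕ → F, (∀ i, c i ∈ G) ∧ x = ∑ i ∈ Finset.range n, c i * f i)
    (hindep : ∀ c : ℕ → F, (∀ i, c i ∈ G) →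
      ∑ i ∈ Finset.range n, c i * f i = 0 → ∀ i < n, c i = 0)
    -- `{1, f_1}` is a right `G`-basis of `F`
    (hright : ∀ x : F, ∃ a ∈ G, ∃ b ∈ G, (x = a + f 1 * b ∧
      ∀ a' b' : F, a' ∈ G → b' ∈ G → x = a' + f 1 * b' → a' = a ∧ b' = b))
    (φ : F → Matrix (Fin n) (Fin n) G)
    (hφ : ∀ (x : F) (i : Fin n), f (i : ℕ) * x = ∑ j : Fin n, (φ x i j : F) * f (j : ℕ)) :
    ATight φ 2 := by
  intro g
  have h0n : 0 < n := by omega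
  have h1n : 1 < n := by omega
  set i0 : Fin n := ⟨0, h0n⟩ with hi0
  set i1 : Fin n := ⟨1, h1n⟩ with hi1
  set P : Fin n → ℕ → F := fun i j => if hj : j < n then (g i ⟨j, hj⟩ : F) else 0 with hP
  set u : F := ∑ j ∈ Finset.range n, (if j = 0 then 0 else P i0 j * f j) with hu
  set v : F := ∑ j ∈ Finset.range n, (if j = 0 then 0 else P i1 j * f j) with hv
  obtain ⟨a, ha, b, hb, hab, -⟩ := hright (v - f 1 * u)
  set x : F := b + u with hx
  refine ⟨x, ?_⟩
  set c : ℕ → F := fun j => if j = 0 then b else P i0 j with hc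
  set d : ℕ → F := fun j => if j = 0 then -a else P i1 j with hd
  have key : ∀ w : ℕ → F, ∑ j ∈ Finset.range n, w j
      = w 0 + ∑ j ∈ Finset.range n, (if j = 0 then 0 else w j) := by
    intro w
    rw [← Finset.add_sum_erase _ w (Finset.mem_range.2 h0n)]
    congr 1
    rw [← Finset.sum_erase (Finset.range n) (f := fun j => if j = 0 then 0 else w j)
      (show (if 0 = 0 then (0:F) else w 0) = 0 from if_pos rfl)]
    exact Finset.sum_congr rfl fun j hj => by
      simp [Finset.ne_of_mem_erase hj]
  have hxc : x = ∑ j ∈ Finset.range n, c j * f j := by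
    rw [key (fun j => c j * f j)]
    simp only [hc, if_pos rfl, hf0, mul_one, hx, hu]
    congr 1
    exact Finset.sum_congr rfl fun j _ => by split_ifs with h <;> simp [h]
  have hfb : f 1 * b = v - f 1 * u - a := by rw [hab]; abel
  have hfx : f 1 * x = v - a := by rw [hx, mul_add, hfb]; abel
  have hxd : f 1 * x = ∑ j ∈ Finset.range n, d j * f j := by
    rw [hfx, key (fun j => d j * f j)]
    simp only [hd, if_pos rfl, hf0, mul_one, hv]
    rw [show (∑ j ∈ Finset.range n, if j = 0 then 0
        else (if j = 0 then -a else P i1 j) * f j)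
        = ∑ j ∈ Finset.range n, (if j = 0 then 0 else P i1 j * f j) from
      Finset.sum_congr rfl fun j _ => by split_ifs with h <;> simp [h]]
    abel
  have hcG : ∀ j, c j ∈ G := by
    intro j
    simp only [hc, hP]
    split_ifs
    exacts [hb, SetLike.coe_mem _, G.zero_mem]
  have hdG : ∀ j, d j ∈ G := by
    intro j
    simp only [hd, hP]
    split_ifs
    exacts [G.neg_mem ha, SetLike.coe_mem _, G.zero_mem]
  have huniq : ∀ c' d' : ℕ → F, (∀ i, c' i ∈ G) → (∀ i, d' i ∈ G) →
      (∑ i ∈ Finset.range n, c' i * f i = ∑ i ∈ Finset.range n, d' i * f i) →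
      ∀ i < n, c' i = d' i := by
    intro c' d' hc' hd' h i hi
    have := hindep (fun i => c' i - d' i) (fun i => G.sub_mem (hc' i) (hd' i))
      (by simp [sub_mul, Finset.sum_sub_distrib, h]) i hi
    exact sub_eq_zero.mp this
  have hrow : ∀ (i : Fin n) (e : ℕ → F), (∀ j, e j ∈ G) →
      f (i : ℕ) * x = ∑ j ∈ Finset.range n, e j * f j →
      ∀ j : Fin n, e (j : ℕ) = (φ x i j : F) := by
    intro i e he hsum j
    have hconv : f (i : ℕ) * x = ∑ jj ∈ Finset.range n,
        (fun jj => if hj : jj < n then (φ x i ⟨jj, hj⟩ : F) else 0) jj * f jj := by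
      rw [hφ x i, ← Fin.sum_univ_eq_sum_range]
      exact Finset.sum_congr rfl fun k _ => by simp
    have := huniq e _ he
      (fun jj => by by_cases hjj : jj < n <;> simp [hjj, Subring.zero_mem])
      (hsum.symm.trans hconv) j j.isLt
    simpa [j.isLt] using this
  intro i j hi hj
  have hj0 : (j : ℕ) ≠ 0 := by omega
  have hival : (i : ℕ) = 0 ∨ (i : ℕ) = 1 := by omega
  rcases hival with h | h
  · have hieq : i = i0 := Fin.ext (by simp [h, hi0])
    have h1 : f ((i0 : ℕ)) * x = ∑ jj ∈ Finset.range n, c jj * f jj := by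
      rw [show ((i0 : Fin n) : ℕ) = 0 from rfl, hf0, one_mul]; exact hxc
    have h2 := hrow i0 c hcG h1 j
    rw [hieq]
    refine Subtype.ext ?_
    rw [← h2]
    simp [hc, hj0, hP, j.isLt]
  · have hieq : i = i1 := Fin.ext (by simp [h, hi1])
    have h1 : f ((i1 : ℕ)) * x = ∑ jj ∈ Finset.range n, d jj * f jj := by
      rw [show ((i1 : Fin n) : ℕ) = 1 from rfl]; exact hxd
    have h2 := hrow i1 d hdG h1 j
    rw [hieq]
    refine Subtype.ext ?_
    rw [← h2]
    simp [hd, hj0, hP, j.isLt]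
end
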